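/- arXiv:1306.2710 — 6 statements merged into one kernel-verified Lean document; each statement's English description precedes it below -/
import Mathlib

section
/- In the setting where, for each n≥1, S_n*(p) is built from n tips 0,...,n-1 with i.i.d. node depths (A_i)_{1≤i≤n-1} of continuous CDF F on [0,T] and i.i.d. Bernoulli(p) marks (R_i)_{0≤i≤n-1} (S_n*(p) being the sum over consecutive sampled tips j<j' of max{A_{j+1},...,A_{j'}}), one has lim_{n→∞} (1/n)·E(S_n*(p)) = p·∫₀^T (1-F(t))/(1-(1-p)F(t)) dt. -/
open MeasureTheory ProbabilityTheory Filter Set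

/-- The maximum of `A i` over `j < i ≤ j'` (junk value `0` if the range is empty). -/
noncomputable def blockMax (A : ℕ → ℝ) (j j' : ℕ) : ℝ :=
  if h : j < j' then (Finset.Ioc j j').sup' (by simpa [Finset.nonempty_Ioc] using h) A else 0

/-- The surviving phylogenetic diversity minus the stem age: tips are `0, ..., n-1`,
tip `i` is sampled when `R i = true`, and we sum, over each pair `j < j'` of consecutive
sampled tips, the maximum of the node depths `A (j+1), ..., A j'`. -/
noncomputable def survPD (A : ℕ → ℝ) (R : ℕ → Bool) (n : ℕ) : ℝ :=
  ∑ j ∈ Finset.range n, ∑ j' ∈ Finset.range n,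
    if j < j' ∧ R j = true ∧ R j' = true ∧ (∀ i ∈ Finset.Ioo j j', R i = false)
    then blockMax A j j' else 0

set_option linter.unusedSectionVars false

lemma blockMax_eq (A : ℕ → ℝ) {j j' : ℕ} (h : j < j') :
    blockMax A j j' = (Finset.Ioc j j').sup'
      (by simpa [Finset.nonempty_Ioc] using h) A := dif_pos h

section Aux
variable {Ω : Type*} [MeasurableSpace Ω]

lemma aux_blockMax_meas (A : ℕ → Ω → ℝ) (hAmeas : ∀ i, Measurable (A i)) (j j' : ℕ) :
    Measurable (fun ω => blockMax (fun i => A i ω) j j') := by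
  by_cases h : j < j'
  · have hne : (Finset.Ioc j j').Nonempty := by simpa [Finset.nonempty_Ioc] using h
    have : (fun ω => blockMax (fun i => A i ω) j j')
        = (Finset.Ioc j j').sup' hne A := by
      funext ω
      rw [blockMax_eq _ h, Finset.sup'_apply]
    rw [this]
    exact Finset.measurable_sup' hne fun i _ => hAmeas i
  · simp only [blockMax, dif_neg h]
    exact measurable_const

lemma aux_blockMax_path_meas (j j' : ℕ) :
    Measurable (fun v : ℕ → ℝ => blockMax v j j') :=
  aux_blockMax_meas (fun i (v : ℕ → ℝ) => v i) (fun i => measurable_pi_apply i) j j'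

end Aux
open MeasureTheory ProbabilityTheory Filter Set

section Aux
variable {Ω : Type*} [MeasurableSpace Ω] (μ : Measure Ω) [IsProbabilityMeasure μ]
  (T : ℝ) (hT : 0 < T) (F : ℝ → ℝ)
  (A : ℕ → Ω → ℝ) (hAmeas : ∀ i, Measurable (A i))
  (hF0 : F 0 = 0) (hFT : F T = 1)
  (hAcdf : ∀ i, ∀ t ∈ Set.Icc 0 T, (μ {ω | A i ω ≤ t}).toReal = F t)

include hAmeas hAcdf hF0 hT in
lemma aux_A_pos (i : ℕ) : ∀ᵐ ω ∂μ, 0 < A i ω := by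
  have hm : μ {ω | A i ω ≤ 0} = 0 := by
    have h0 := hAcdf i 0 ⟨le_refl 0, hT.le⟩
    rw [hF0] at h0
    have := (ENNReal.toReal_eq_zero_iff _).mp h0
    rcases this with h | h
    · exact h
    · exact absurd h (measure_ne_top μ _)
  have : {ω | ¬ 0 < A i ω} = {ω | A i ω ≤ 0} := by ext ω; simp [not_lt]
  rw [ae_iff, this]; exact hm

include hAmeas hAcdf hFT hT in
lemma aux_A_le (i : ℕ) : ∀ᵐ ω ∂μ, A i ω ≤ T := by
  have h1 := hAcdf i T ⟨hT.le, le_refl T⟩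
  rw [hFT] at h1
  have hm : μ {ω | A i ω ≤ T} = 1 := by
    have := (ENNReal.toReal_eq_one_iff _).mp h1
    exact this
  have hms : MeasurableSet {ω | A i ω ≤ T} := measurableSet_le (hAmeas i) measurable_const
  have : μ {ω | A i ω ≤ T}ᶜ = 0 := by
    rw [measure_compl hms (measure_ne_top μ _), hm, measure_univ, tsub_self]
  rw [Set.compl_setOf] at this
  rw [ae_iff]
  exact this
end Aux

section Aux2
variable {Ω : Type*} [MeasurableSpace Ω] (μ : Measure Ω) [IsProbabilityMeasure μ]
  (T : ℝ) (hT : 0 < T) (F : ℝ → ℝ)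
  (A : ℕ → Ω → ℝ) (hAmeas : ∀ i, Measurable (A i))
  (hAiid : iIndepFun A μ)
  (hAcdf : ∀ i, ∀ t ∈ Set.Icc 0 T, (μ {ω | A i ω ≤ t}).toReal = F t)

include hAiid hAcdf in
lemma aux_blockMax_cdf {j j' : ℕ} (h : j < j') {t : ℝ} (ht : t ∈ Set.Icc 0 T) :
    (μ {ω | blockMax (fun i => A i ω) j j' ≤ t}).toReal = F t ^ (j' - j) := by
  have hne : (Finset.Ioc j j').Nonempty := by simpa [Finset.nonempty_Ioc] using h
  have hset : {ω | blockMax (fun i => A i ω) j j' ≤ t}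
      = ⋂ i ∈ (Finset.Ioc j j' : Finset ℕ), A i ⁻¹' Set.Iic t := by
    ext ω
    simp only [Set.mem_setOf_eq, blockMax_eq _ h, Finset.sup'_le_iff, Set.mem_iInter,
      Set.mem_preimage, Set.mem_Iic]
  rw [hset, hAiid.measure_inter_preimage_eq_mul (Finset.Ioc j j')
    (sets := fun _ => Set.Iic t) (fun i _ => measurableSet_Iic), ENNReal.toReal_prod]
  have : ∀ i ∈ Finset.Ioc j j', (μ (A i ⁻¹' Set.Iic t)).toReal = F t :=
    fun i _ => hAcdf i t ht
  rw [Finset.prod_congr rfl this, Finset.prod_const, Nat.card_Ioc]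

end Aux2

section Aux3
variable {Ω : Type*} [MeasurableSpace Ω] (μ : Measure Ω) [IsProbabilityMeasure μ]
  (T : ℝ) (hT : 0 < T) (F : ℝ → ℝ) (hFcont : Continuous F)
  (hF0 : F 0 = 0) (hFT : F T = 1)
  (A : ℕ → Ω → ℝ) (hAmeas : ∀ i, Measurable (A i))
  (hAiid : iIndepFun A μ)
  (hAcdf : ∀ i, ∀ t ∈ Set.Icc 0 T, (μ {ω | A i ω ≤ t}).toReal = F t)

include hT hF0 hFT hAmeas hAcdf in
lemma aux_blockMax_bounds {j j' : ℕ} (h : j < j') :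
    ∀ᵐ ω ∂μ, 0 ≤ blockMax (fun i => A i ω) j j' ∧ blockMax (fun i => A i ω) j j' ≤ T := by
  have hball : ∀ᵐ ω ∂μ, ∀ i ∈ Finset.Ioc j j', 0 < A i ω ∧ A i ω ≤ T := by
    rw [Finset.eventually_all]
    intro i _
    exact (aux_A_pos μ T hT F A hAmeas hF0 hAcdf i).and
      (aux_A_le μ T hT F A hAmeas hFT hAcdf i)
  filter_upwards [hball] with ω hω
  have hj' : j' ∈ Finset.Ioc j j' := Finset.mem_Ioc.mpr ⟨h, le_refl _⟩
  rw [blockMax_eq _ h]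
  constructor
  · exact le_trans (hω j' hj').1.le (Finset.le_sup' (fun i => A i ω) hj')
  · exact Finset.sup'_le _ _ fun i hi => (hω i hi).2

include hT hF0 hFT hAmeas hAcdf in
lemma aux_blockMax_integrable {j j' : ℕ} (h : j < j') :
    Integrable (fun ω => blockMax (fun i => A i ω) j j') μ := by
  refine Integrable.mono' (integrable_const T)
    (aux_blockMax_meas A hAmeas j j').aestronglyMeasurable ?_
  filter_upwards [aux_blockMax_bounds μ T hT F hF0 hFT A hAmeas hAcdf h] with ω hω
  rw [Real.norm_eq_abs, abs_le]
  exact ⟨le_trans (by linarith) hω.1, hω.2⟩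

include hT hFcont hF0 hFT hAmeas hAiid hAcdf in
lemma aux_blockMax_integral {j j' : ℕ} (h : j < j') :
    ∫ ω, blockMax (fun i => A i ω) j j' ∂μ
      = ∫ t in Set.Ioc (0:ℝ) T, (1 - F t ^ (j' - j)) := by
  set X := fun ω => blockMax (fun i => A i ω) j j' with hX
  set φ := fun t : ℝ => (μ {a | t < X a}).toReal with hφ
  have hXmeas : Measurable X := aux_blockMax_meas A hAmeas j j'
  have hXnn : 0 ≤ᵐ[μ] X := by
    filter_upwards [aux_blockMax_bounds μ T hT F hF0 hFT A hAmeas hAcdf h] with ω hω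
    exact hω.1
  have hint : Integrable X μ := aux_blockMax_integrable μ T hT F hF0 hFT A hAmeas hAcdf h
  rw [hint.integral_eq_integral_meas_lt hXnn]
  show ∫ t in Set.Ioi (0:ℝ), φ t = _
  have hφ_eq : Set.EqOn φ (fun t => 1 - F t ^ (j' - j)) (Set.Ioc 0 T) := by
    intro t ht
    have hcompl : {a | t < X a} = {a | X a ≤ t}ᶜ := by
      ext a; simp [not_le]
    have hms : MeasurableSet {a | X a ≤ t} := measurableSet_le hXmeas measurable_const
    simp only [hφ, hcompl, measure_compl hms (measure_ne_top μ _), measure_univ]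
    rw [ENNReal.toReal_sub_of_le prob_le_one ENNReal.one_ne_top, ENNReal.toReal_one]
    rw [aux_blockMax_cdf μ T F A hAiid hAcdf h ⟨ht.1.le, ht.2⟩]
  have hφ_zero : Set.EqOn φ 0 (Set.Ioi T) := by
    intro t ht
    have hnull : μ {a | ¬ X a ≤ T} = 0 := by
      rw [← ae_iff]
      filter_upwards [aux_blockMax_bounds μ T hT F hF0 hFT A hAmeas hAcdf h] with ω hω
      exact hω.2
    have hsub : {a | t < X a} ⊆ {a | ¬ X a ≤ T} := by
      intro a ha
      simp only [Set.mem_setOf_eq, not_le] at ha ⊢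
      exact lt_of_le_of_lt (le_of_lt ht) ha
    have : μ {a | t < X a} = 0 := measure_mono_null hsub hnull
    simp [hφ, this]
  have hi1 : IntegrableOn φ (Set.Ioc 0 T) volume := by
    have hc : IntegrableOn (fun t => 1 - F t ^ (j' - j)) (Set.Ioc 0 T) volume :=
      (continuous_const.sub (hFcont.pow _)).integrableOn_Ioc
    exact hc.congr_fun hφ_eq.symm measurableSet_Ioc
  have hi2 : IntegrableOn φ (Set.Ioi T) volume :=
    (integrableOn_zero).congr_fun hφ_zero.symm measurableSet_Ioi
  rw [← Set.Ioc_union_Ioi_eq_Ioi hT.le,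
    setIntegral_union (Set.Ioc_disjoint_Ioi le_rfl) measurableSet_Ioi hi1 hi2,
    setIntegral_congr_fun measurableSet_Ioc hφ_eq, setIntegral_congr_fun measurableSet_Ioi hφ_zero]
  simp

end Aux3

section Aux4
variable {Ω : Type*} [MeasurableSpace Ω] (μ : Measure Ω) [IsProbabilityMeasure μ]
  (p : ℝ)
  (R : ℕ → Ω → Bool) (hRmeas : ∀ i, Measurable (R i))
  (hRiid : iIndepFun R μ)
  (hRber : ∀ i, (μ {ω | R i ω = true}).toReal = p)

include hRmeas hRiid hRber in
lemma aux_R_event_prob {j j' : ℕ} (h : j < j') :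
    (μ {ω | R j ω = true ∧ R j' ω = true ∧ ∀ i ∈ Finset.Ioo j j', R i ω = false}).toReal
      = p ^ 2 * (1 - p) ^ (j' - j - 1) := by
  classical
  set B : ℕ → Set Bool := fun i => if i = j ∨ i = j' then {true} else {false} with hB
  have hset : {ω | R j ω = true ∧ R j' ω = true ∧ ∀ i ∈ Finset.Ioo j j', R i ω = false}
      = ⋂ i ∈ (Finset.Icc j j' : Finset ℕ), R i ⁻¹' B i := by
    ext ω
    simp only [Set.mem_setOf_eq, Set.mem_iInter, Set.mem_preimage, Finset.mem_Icc]
    constructor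
    · rintro ⟨h1, h2, h3⟩ i hi
      by_cases hij : i = j ∨ i = j'
      · rcases hij with rfl | rfl <;> simp [hB, h1, h2, h.ne, h.ne']
      · push_neg at hij
        have hio : i ∈ Finset.Ioo j j' := Finset.mem_Ioo.mpr (by omega)
        simp [hB, hij.1, hij.2, h3 i hio]
    · intro H
      have hj := H j ⟨le_refl j, h.le⟩
      have hj' := H j' ⟨h.le, le_refl j'⟩
      simp only [hB, if_pos (Or.inl rfl), if_pos (Or.inr rfl),
        Set.mem_singleton_iff] at hj hj'
      refine ⟨hj, hj', fun i hi => ?_⟩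
      rw [Finset.mem_Ioo] at hi
      have hii := H i ⟨hi.1.le, hi.2.le⟩
      have hne : ¬ (i = j ∨ i = j') := by omega
      simpa [hB, hne] using hii
  have hmul := hRiid.measure_inter_preimage_eq_mul (Finset.Icc j j')
    (sets := B) (fun i _ => MeasurableSet.of_discrete)
  rw [hset, hmul, ← Finset.Ioc_insert_left h.le, ← Finset.Ioo_insert_right h]
  have hj_not : j ∉ insert j' (Finset.Ioo j j') := by
    simp [h.ne, Finset.mem_Ioo]
  have hj'_not : j' ∉ Finset.Ioo j j' := by simp
  rw [Finset.prod_insert hj_not, Finset.prod_insert hj'_not, ENNReal.toReal_mul,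
    ENNReal.toReal_mul, ENNReal.toReal_prod]
  have hptrue : ∀ i, (i = j ∨ i = j') → (μ (R i ⁻¹' B i)).toReal = p := by
    intro i hij
    have : R i ⁻¹' B i = {ω | R i ω = true} := by
      ext ω; simp [hB, if_pos hij]
    rw [this, hRber i]
  have hpfalse : ∀ i ∈ Finset.Ioo j j', (μ (R i ⁻¹' B i)).toReal = 1 - p := by
    intro i hi
    rw [Finset.mem_Ioo] at hi
    have hne : ¬ (i = j ∨ i = j') := by omega
    have hcompl : R i ⁻¹' B i = {ω | R i ω = true}ᶜ := by
      ext ω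
      simp [hB, hne, Bool.not_eq_true]
    have hms : MeasurableSet {ω | R i ω = true} := by
      have : {ω | R i ω = true} = R i ⁻¹' {true} := by ext ω; simp
      rw [this]; exact (hRmeas i) MeasurableSet.of_discrete
    rw [hcompl, measure_compl hms (measure_ne_top μ _), measure_univ,
      ENNReal.toReal_sub_of_le prob_le_one ENNReal.one_ne_top,
      ENNReal.toReal_one, hRber i]
  rw [hptrue j (Or.inl rfl), hptrue j' (Or.inr rfl),
    Finset.prod_congr rfl hpfalse, Finset.prod_const, Nat.card_Ioo]
  ring

include hRmeas in
lemma aux_R_event_meas (j j' : ℕ) :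
    MeasurableSet {ω | R j ω = true ∧ R j' ω = true ∧ ∀ i ∈ Finset.Ioo j j', R i ω = false} := by
  have : {ω | R j ω = true ∧ R j' ω = true ∧ ∀ i ∈ Finset.Ioo j j', R i ω = false}
      = (R j ⁻¹' {true}) ∩ ((R j' ⁻¹' {true})
          ∩ ⋂ i ∈ (Finset.Ioo j j' : Finset ℕ), R i ⁻¹' {false}) := by
    ext ω; simp
  rw [this]
  refine ((hRmeas j) MeasurableSet.of_discrete).inter
    (((hRmeas j') MeasurableSet.of_discrete).inter ?_)
  exact MeasurableSet.biInter (Finset.Ioo j j').countable_toSet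
    fun i _ => (hRmeas i) MeasurableSet.of_discrete

end Aux4

section Aux5
variable {Ω : Type*} [MeasurableSpace Ω] (μ : Measure Ω) [IsProbabilityMeasure μ]
  (p : ℝ) (T : ℝ) (hT : 0 < T) (F : ℝ → ℝ)
  (hF0 : F 0 = 0) (hFT : F T = 1)
  (A : ℕ → Ω → ℝ) (hAmeas : ∀ i, Measurable (A i))
  (hAcdf : ∀ i, ∀ t ∈ Set.Icc 0 T, (μ {ω | A i ω ≤ t}).toReal = F t)
  (R : ℕ → Ω → Bool) (hRmeas : ∀ i, Measurable (R i))
  (hRiid : iIndepFun R μ)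
  (hRber : ∀ i, (μ {ω | R i ω = true}).toReal = p)
  (hindep : IndepFun (fun ω i => A i ω) (fun ω i => R i ω) μ)

include hT hF0 hFT hAmeas hAcdf hRmeas hRiid hRber hindep in
lemma aux_term_integral {j j' : ℕ} (h : j < j') :
    ∫ ω, (if R j ω = true ∧ R j' ω = true ∧ (∀ i ∈ Finset.Ioo j j', R i ω = false)
        then blockMax (fun i => A i ω) j j' else 0) ∂μ
      = (p ^ 2 * (1 - p) ^ (j' - j - 1)) * ∫ ω, blockMax (fun i => A i ω) j j' ∂μ := by
  classical
  set S' : Set (ℕ → Bool) :=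
    {w | w j = true ∧ w j' = true ∧ ∀ i ∈ Finset.Ioo j j', w i = false} with hS'
  have hS'meas : MeasurableSet S' :=
    aux_R_event_meas (fun i (w : ℕ → Bool) => w i) (fun i => measurable_pi_apply i) j j'
  set g : (ℕ → Bool) → ℝ := S'.indicator (fun _ => 1) with hg
  have hgmeas : Measurable g := (measurable_const).indicator hS'meas
  set φ : (ℕ → ℝ) → ℝ := fun v => blockMax v j j' with hφ
  have hφmeas : Measurable φ := aux_blockMax_path_meas j j'
  have hIF : IndepFun (fun ω => φ (fun i => A i ω)) (fun ω => g (fun i => R i ω)) μ :=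
    hindep.comp hφmeas hgmeas
  have heq : (fun ω => if R j ω = true ∧ R j' ω = true ∧
        (∀ i ∈ Finset.Ioo j j', R i ω = false)
        then blockMax (fun i => A i ω) j j' else 0)
      = fun ω => φ (fun i => A i ω) * g (fun i => R i ω) := by
    funext ω
    by_cases hc : R j ω = true ∧ R j' ω = true ∧ ∀ i ∈ Finset.Ioo j j', R i ω = false
    · have hmem : (fun i => R i ω) ∈ S' := hc
      rw [if_pos hc]
      simp [hg, Set.indicator_of_mem hmem, hφ]
    · have hmem : (fun i => R i ω) ∉ S' := hc
      rw [if_neg hc]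
      simp [hg, Set.indicator_of_notMem hmem]
  have hXint : Integrable (fun ω => φ (fun i => A i ω)) μ :=
    aux_blockMax_integrable μ T hT F hF0 hFT A hAmeas hAcdf h
  have hgRind : (fun ω => g (fun i => R i ω))
      = Set.indicator ((fun ω (i : ℕ) => R i ω) ⁻¹' S') (fun _ => (1:ℝ)) := by
    funext ω
    by_cases hmem : (fun i => R i ω) ∈ S' <;>
      simp [hg, Set.indicator_apply, hmem, Set.mem_preimage]
  have hRp : Measurable (fun ω (i : ℕ) => R i ω) :=
    measurable_pi_lambda _ hRmeas
  have hpre : MeasurableSet ((fun ω (i : ℕ) => R i ω) ⁻¹' S') := hRp hS'meas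
  have hgint : Integrable (fun ω => g (fun i => R i ω)) μ := by
    rw [hgRind]
    exact (integrable_const (1:ℝ)).indicator hpre
  rw [heq]
  have hmul := hIF.integral_mul_eq_mul_integral hXint.aestronglyMeasurable hgint.aestronglyMeasurable
  rw [show ((fun ω => φ fun i => A i ω) * fun ω => g fun i => R i ω)
      = fun ω => (φ fun i => A i ω) * g fun i => R i ω from rfl] at hmul
  rw [hmul]
  have hval : ∫ ω, g (fun i => R i ω) ∂μ = p ^ 2 * (1 - p) ^ (j' - j - 1) := by
    rw [hgRind, integral_indicator_const (1:ℝ) hpre, smul_eq_mul, mul_one]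
    have hsame : (fun ω (i : ℕ) => R i ω) ⁻¹' S'
        = {ω | R j ω = true ∧ R j' ω = true ∧ ∀ i ∈ Finset.Ioo j j', R i ω = false} := rfl
    rw [hsame]
    exact aux_R_event_prob μ p R hRmeas hRiid hRber h
  rw [hval]
  ring

end Aux5

section Aux6
variable {Ω : Type*} [MeasurableSpace Ω] (μ : Measure Ω) [IsProbabilityMeasure μ]
  (p : ℝ) (T : ℝ) (hT : 0 < T) (F : ℝ → ℝ) (hFcont : Continuous F)
  (hF0 : F 0 = 0) (hFT : F T = 1)
  (A : ℕ → Ω → ℝ) (hAmeas : ∀ i, Measurable (A i))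
  (hAiid : iIndepFun A μ)
  (hAcdf : ∀ i, ∀ t ∈ Set.Icc 0 T, (μ {ω | A i ω ≤ t}).toReal = F t)
  (R : ℕ → Ω → Bool) (hRmeas : ∀ i, Measurable (R i))
  (hRiid : iIndepFun R μ)
  (hRber : ∀ i, (μ {ω | R i ω = true}).toReal = p)
  (hindep : IndepFun (fun ω i => A i ω) (fun ω i => R i ω) μ)

include hT hF0 hFT hAmeas hAcdf hRmeas in
lemma aux_term_integrable (j j' : ℕ) :
    Integrable (fun ω => if j < j' ∧ R j ω = true ∧ R j' ω = true ∧
      (∀ i ∈ Finset.Ioo j j', R i ω = false)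
      then blockMax (fun i => A i ω) j j' else 0) μ := by
  by_cases hjj' : j < j'
  · have heq : (fun ω => if j < j' ∧ R j ω = true ∧ R j' ω = true ∧
        (∀ i ∈ Finset.Ioo j j', R i ω = false)
        then blockMax (fun i => A i ω) j j' else 0)
        = Set.indicator {ω | R j ω = true ∧ R j' ω = true ∧
            ∀ i ∈ Finset.Ioo j j', R i ω = false}
          (fun ω => blockMax (fun i => A i ω) j j') := by
      funext ω
      by_cases hc : R j ω = true ∧ R j' ω = true ∧ ∀ i ∈ Finset.Ioo j j', R i ω = false
      · have hmem : ω ∈ {ω | R j ω = true ∧ R j' ω = true ∧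
            ∀ i ∈ Finset.Ioo j j', R i ω = false} := hc
        rw [if_pos ⟨hjj', hc⟩, Set.indicator_of_mem hmem]
      · have hmem : ω ∉ {ω | R j ω = true ∧ R j' ω = true ∧
            ∀ i ∈ Finset.Ioo j j', R i ω = false} := hc
        rw [if_neg (fun hh => hc hh.2), Set.indicator_of_notMem hmem]
    rw [heq]
    refine Integrable.mono' (integrable_const T) ?_ ?_
    · exact ((aux_blockMax_meas A hAmeas j j').indicator
        (aux_R_event_meas R hRmeas j j')).aestronglyMeasurable
    · filter_upwards [aux_blockMax_bounds μ T hT F hF0 hFT A hAmeas hAcdf hjj'] with ω hω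
      rw [Real.norm_eq_abs, Set.indicator_apply]
      split
      · rw [abs_le]; exact ⟨le_trans (by linarith) hω.1, hω.2⟩
      · rw [abs_zero]; exact hT.le
  · simp only [hjj', false_and, if_false]
    exact integrable_zero _ _ _

include hT hFcont hF0 hFT hAmeas hAiid hAcdf hRmeas hRiid hRber hindep in
lemma aux_survPD_integral (n : ℕ) :
    ∫ ω, survPD (fun i => A i ω) (fun i => R i ω) n ∂μ
      = ∑ j ∈ Finset.range n, ∑ j' ∈ Finset.range n,
          (if j < j' then p ^ 2 * (1 - p) ^ (j' - j - 1)
            * ∫ t in Set.Ioc (0:ℝ) T, (1 - F t ^ (j' - j)) else 0) := by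
  unfold survPD
  rw [integral_finset_sum _ (fun j _ => integrable_finset_sum _
    (fun j' _ => aux_term_integrable μ T hT F hF0 hFT A hAmeas hAcdf R hRmeas j j'))]
  refine Finset.sum_congr rfl fun j _ => ?_
  rw [integral_finset_sum _
    (fun j' _ => aux_term_integrable μ T hT F hF0 hFT A hAmeas hAcdf R hRmeas j j')]
  refine Finset.sum_congr rfl fun j' _ => ?_
  by_cases hjj' : j < j'
  · rw [if_pos hjj']
    have heq : (fun ω => if j < j' ∧ R j ω = true ∧ R j' ω = true ∧
        (∀ i ∈ Finset.Ioo j j', R i ω = false)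
        then blockMax (fun i => A i ω) j j' else 0)
        = (fun ω => if R j ω = true ∧ R j' ω = true ∧
            (∀ i ∈ Finset.Ioo j j', R i ω = false)
          then blockMax (fun i => A i ω) j j' else 0) := by
      funext ω
      by_cases hc : R j ω = true ∧ R j' ω = true ∧ ∀ i ∈ Finset.Ioo j j', R i ω = false
      · rw [if_pos ⟨hjj', hc⟩, if_pos hc]
      · rw [if_neg (fun hh => hc hh.2), if_neg hc]
    rw [heq,
      aux_term_integral μ p T hT F hF0 hFT A hAmeas hAcdf R hRmeas hRiid hRber hindep hjj',
      aux_blockMax_integral μ T hT F hFcont hF0 hFT A hAmeas hAiid hAcdf hjj']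
  · rw [if_neg hjj']
    have heq : (fun ω => if j < j' ∧ R j ω = true ∧ R j' ω = true ∧
        (∀ i ∈ Finset.Ioo j j', R i ω = false)
        then blockMax (fun i => A i ω) j j' else 0) = (fun _ => (0:ℝ)) := by
      funext ω
      rw [if_neg (fun hh => hjj' hh.1)]
    rw [heq, integral_zero]

end Aux6

section Aux7
variable (p : ℝ) (hp0 : 0 < p) (hp1 : p ≤ 1)

include hp0 hp1 in
lemma aux_hasSum_pt {x : ℝ} (hx0 : 0 ≤ x) (hx1 : x ≤ 1) :
    HasSum (fun i : ℕ => (1 - p) ^ i * (1 - x ^ (i + 1)))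
      (1 / p - x / (1 - (1 - p) * x)) := by
  have hq0 : (0:ℝ) ≤ 1 - p := by linarith
  have hq1 : 1 - p < 1 := by linarith
  have h1 : HasSum (fun i : ℕ => (1 - p) ^ i) (1 - (1 - p))⁻¹ :=
    hasSum_geometric_of_lt_one hq0 hq1
  have hqx0 : (0:ℝ) ≤ (1 - p) * x := mul_nonneg hq0 hx0
  have hqx1 : (1 - p) * x < 1 := lt_of_le_of_lt
    (by nlinarith : (1 - p) * x ≤ 1 - p) hq1
  have h2 : HasSum (fun i : ℕ => ((1 - p) * x) ^ i) (1 - (1 - p) * x)⁻¹ :=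
    hasSum_geometric_of_lt_one hqx0 hqx1
  have h3 := h1.sub (h2.mul_left x)
  have heq : (fun i : ℕ => (1 - p) ^ i - x * ((1 - p) * x) ^ i)
      = fun i : ℕ => (1 - p) ^ i * (1 - x ^ (i + 1)) := by
    funext i
    rw [mul_pow, pow_succ]
    ring
  rw [heq] at h3
  rw [show (1 / p - x / (1 - (1 - p) * x)) = (1 - (1 - p))⁻¹ - x * (1 - (1 - p) * x)⁻¹ by
    rw [sub_sub_cancel, one_div, div_eq_mul_inv]]
  exact h3

variable (T : ℝ) (hT : 0 < T) (F : ℝ → ℝ) (hFcont : Continuous F) (hFmono : Monotone F)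
  (hF0 : F 0 = 0) (hFT : F T = 1)

include hFmono hF0 hFT in
lemma aux_F_mem {t : ℝ} (ht : t ∈ Set.Icc 0 T) : 0 ≤ F t ∧ F t ≤ 1 :=
  ⟨hF0 ▸ hFmono ht.1, hFT ▸ hFmono ht.2⟩

include hp0 hp1 hT hFcont hFmono hF0 hFT in
lemma aux_hasSum_integrals :
    HasSum (fun i : ℕ => ∫ t in Set.Ioc (0:ℝ) T, ((1 - p) ^ i * (1 - F t ^ (i + 1))))
      (∫ t in Set.Ioc (0:ℝ) T, (1 / p - F t / (1 - (1 - p) * F t))) := by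
  have hq0 : (0:ℝ) ≤ 1 - p := by linarith
  have hq1 : 1 - p < 1 := by linarith
  set g : ℕ → ℝ → ℝ := fun i t => (1 - p) ^ i * (1 - F t ^ (i + 1)) with hg
  have hgcont : ∀ i, Continuous (g i) :=
    fun i => continuous_const.mul (continuous_const.sub (hFcont.pow _))
  have hgint : ∀ i, IntegrableOn (g i) (Set.Ioc (0:ℝ) T) volume :=
    fun i => (hgcont i).integrableOn_Ioc
  have hgbd : ∀ i, ∀ t ∈ Set.Icc (0:ℝ) T, 0 ≤ g i t ∧ g i t ≤ (1 - p) ^ i := by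
    intro i t ht
    obtain ⟨hx0, hx1⟩ := aux_F_mem T F hFmono hF0 hFT ht
    have hp0' : 0 ≤ (1 - p) ^ i := pow_nonneg hq0 i
    have hx0' : 0 ≤ F t ^ (i + 1) := pow_nonneg hx0 _
    have hx1' : F t ^ (i + 1) ≤ 1 := pow_le_one₀ hx0 hx1
    simp only [hg]
    constructor
    · exact mul_nonneg hp0' (by linarith)
    · nlinarith
  set I : ℕ → ℝ := fun i => ∫ t in Set.Ioc (0:ℝ) T, g i t with hI
  have hInn : ∀ i, 0 ≤ I i := fun i => setIntegral_nonneg measurableSet_Ioc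
    (fun t ht => (hgbd i t ⟨ht.1.le, ht.2⟩).1)
  have hIle : ∀ i, I i ≤ (1 - p) ^ i * T := by
    intro i
    have : I i ≤ ∫ _ in Set.Ioc (0:ℝ) T, (1 - p) ^ i :=
      setIntegral_mono_on (hgint i)
        (integrableOn_const measure_Ioc_lt_top.ne) measurableSet_Ioc
        (fun t ht => (hgbd i t ⟨ht.1.le, ht.2⟩).2)
    calc I i ≤ ∫ _ in Set.Ioc (0:ℝ) T, (1 - p) ^ i := this
      _ = (1 - p) ^ i * T := by
        simp [Real.volume_Ioc, hT.le, ENNReal.toReal_ofReal, smul_eq_mul, mul_comm]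
  have hsummable : Summable I := by
    refine Summable.of_nonneg_of_le hInn hIle ?_
    exact (summable_geometric_of_lt_one hq0 hq1).mul_right T
  rw [(hasSum_iff_tendsto_nat_of_nonneg hInn _)]
  have hpow : ∀ n : ℕ, ∑ i ∈ Finset.range n, I i
      = ∫ t in Set.Ioc (0:ℝ) T, (∑ i ∈ Finset.range n, g i t) := by
    intro n
    rw [integral_finset_sum _ (fun i _ => hgint i)]
  simp only [hpow]
  refine tendsto_integral_of_dominated_convergence (fun _ => 1 / p)
    (fun n => (continuous_finset_sum _ fun i _ => hgcont i).aestronglyMeasurable)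
    (integrableOn_const measure_Ioc_lt_top.ne) ?_ ?_
  · intro n
    rw [ae_restrict_iff' measurableSet_Ioc]
    refine ae_of_all _ fun t ht => ?_
    have hnn : 0 ≤ ∑ i ∈ Finset.range n, g i t :=
      Finset.sum_nonneg fun i _ => (hgbd i t ⟨ht.1.le, ht.2⟩).1
    rw [Real.norm_eq_abs, abs_of_nonneg hnn]
    calc ∑ i ∈ Finset.range n, g i t ≤ ∑ i ∈ Finset.range n, (1 - p) ^ i :=
          Finset.sum_le_sum fun i _ => (hgbd i t ⟨ht.1.le, ht.2⟩).2
      _ ≤ ∑' i : ℕ, (1 - p) ^ i := Summable.sum_le_tsum _ (fun i _ => pow_nonneg hq0 i)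
          (summable_geometric_of_lt_one hq0 hq1)
      _ = (1 - (1 - p))⁻¹ := (hasSum_geometric_of_lt_one hq0 hq1).tsum_eq
      _ = 1 / p := by rw [one_div]; congr 1; ring
  · rw [ae_restrict_iff' measurableSet_Ioc]
    refine ae_of_all _ fun t ht => ?_
    obtain ⟨hx0, hx1⟩ := aux_F_mem T F hFmono hF0 hFT ⟨ht.1.le, ht.2⟩
    exact (aux_hasSum_pt p hp0 hp1 hx0 hx1).tendsto_sum_nat

end Aux7

/-- `lim_{n→∞} (1/n) E(S_n*(p)) = p ∫₀^T (1-F t)/(1-(1-p) F t) dt`. -/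
theorem expected_surviving_PD_per_tip_limit
    {Ω : Type*} [MeasurableSpace Ω] (μ : Measure Ω) [IsProbabilityMeasure μ]
    (p : ℝ) (hp : p ∈ Set.Ioc (0 : ℝ) 1)
    (T : ℝ) (hT : 0 < T)
    (F : ℝ → ℝ) (hFcont : Continuous F) (hFmono : Monotone F)
    (hF0 : F 0 = 0) (hFT : F T = 1)
    (A : ℕ → Ω → ℝ) (hAmeas : ∀ i, Measurable (A i))
    (hAiid : iIndepFun A μ)
    (hAcdf : ∀ i, ∀ t ∈ Set.Icc 0 T, (μ {ω | A i ω ≤ t}).toReal = F t)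
    (R : ℕ → Ω → Bool) (hRmeas : ∀ i, Measurable (R i))
    (hRiid : iIndepFun R μ)
    (hRber : ∀ i, (μ {ω | R i ω = true}).toReal = p)
    (hindep : IndepFun (fun ω i => A i ω) (fun ω i => R i ω) μ) :
    Tendsto
      (fun n : ℕ => (∫ ω, survPD (fun i => A i ω) (fun i => R i ω) n ∂μ) / n)
      atTop
      (nhds (p * ∫ t in (0:ℝ)..T, (1 - F t) / (1 - (1 - p) * F t))) := by
  obtain ⟨hp0, hp1⟩ := hp
  have hdsum : HasSum
      (fun i : ℕ => p ^ 2 * (1 - p) ^ i * ∫ t in Set.Ioc (0:ℝ) T, (1 - F t ^ (i + 1)))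
      (p ^ 2 * ∫ t in Set.Ioc (0:ℝ) T, (1 / p - F t / (1 - (1 - p) * F t))) := by
    have h := (aux_hasSum_integrals p hp0 hp1 T hT F hFcont hFmono hF0 hFT).mul_left (p ^ 2)
    have heq : (fun i : ℕ => p ^ 2 * ∫ t in Set.Ioc (0:ℝ) T, ((1 - p) ^ i * (1 - F t ^ (i + 1))))
        = fun i : ℕ => p ^ 2 * (1 - p) ^ i * ∫ t in Set.Ioc (0:ℝ) T, (1 - F t ^ (i + 1)) := by
      funext i
      rw [integral_const_mul]
      ring
    rw [heq] at h
    exact h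
  have hu : Tendsto
      (fun m : ℕ => ∑ i ∈ Finset.range m,
        p ^ 2 * (1 - p) ^ i * ∫ t in Set.Ioc (0:ℝ) T, (1 - F t ^ (i + 1)))
      atTop
      (nhds (p ^ 2 * ∫ t in Set.Ioc (0:ℝ) T, (1 / p - F t / (1 - (1 - p) * F t)))) :=
    hdsum.tendsto_sum_nat
  have hintEq : ∀ n : ℕ, ∫ ω, survPD (fun i => A i ω) (fun i => R i ω) n ∂μ
      = ∑ j' ∈ Finset.range n, ∑ i ∈ Finset.range j',
          p ^ 2 * (1 - p) ^ i * ∫ t in Set.Ioc (0:ℝ) T, (1 - F t ^ (i + 1)) := by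
    intro n
    rw [aux_survPD_integral μ p T hT F hFcont hF0 hFT A hAmeas hAiid hAcdf
      R hRmeas hRiid hRber hindep n, Finset.sum_comm]
    refine Finset.sum_congr rfl fun j' hj' => ?_
    rw [Finset.mem_range] at hj'
    rw [← Finset.sum_filter]
    have hfil : (Finset.range n).filter (fun j => j < j') = Finset.range j' := by
      ext a
      simp only [Finset.mem_filter, Finset.mem_range]
      omega
    rw [hfil, ← Finset.sum_range_reflect]
    refine Finset.sum_congr rfl fun i hi => ?_
    rw [Finset.mem_range] at hi
    have h1 : j' - (j' - 1 - i) - 1 = i := by omega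
    have h2 : j' - (j' - 1 - i) = i + 1 := by omega
    rw [h1, h2]
  have hfinal : p * (∫ t in (0:ℝ)..T, (1 - F t) / (1 - (1 - p) * F t))
      = p ^ 2 * ∫ t in Set.Ioc (0:ℝ) T, (1 / p - F t / (1 - (1 - p) * F t)) := by
    rw [intervalIntegral.integral_of_le hT.le, ← integral_const_mul, ← integral_const_mul]
    refine setIntegral_congr_fun measurableSet_Ioc fun t ht => ?_
    obtain ⟨hx0, hx1⟩ := aux_F_mem T F hFmono hF0 hFT ⟨ht.1.le, ht.2⟩
    have hden : (0:ℝ) < 1 - (1 - p) * F t := by nlinarith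
    have hden' : 1 - (1 - p) * F t ≠ 0 := ne_of_gt hden
    have hden'' : 1 - F t + F t * p ≠ 0 := by intro h0; apply hden'; linarith
    field_simp
    rw [eq_sub_iff_add_eq, ← add_div, div_eq_one_iff_eq (by rw [mul_comm]; exact hden')]
    ring
  rw [hfinal]
  have hfun : (fun n : ℕ => (∫ ω, survPD (fun i => A i ω) (fun i => R i ω) n ∂μ) / n)
      = fun n : ℕ => ((n : ℝ)⁻¹) * ∑ j' ∈ Finset.range n,
          (fun m : ℕ => ∑ i ∈ Finset.range m,
            p ^ 2 * (1 - p) ^ i * ∫ t in Set.Ioc (0:ℝ) T, (1 - F t ^ (i + 1))) j' := by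
    funext n
    rw [hintEq n, div_eq_inv_mul]
  rw [hfun]
  exact hu.cesaro
end

section
/- Let b>0, T>0 and define F_T(t) := t(1+bT)/(T(1+bt)) for t∈[0,T] (the node-depth CDF of a critical constant-rate birth–death process with b=d). Define π_T(p) := p·∫₀^T (1-F_T(t))/(1-(1-p)F_T(t)) dt / ∫₀^T (1-F_T(t)) dt. Then for every p∈(0,1] with p(1+bT)≠1, π_T(p) = p·R(x(p))/R(x(1)), where R(x) := ((1+x)ln(1+x) - x)/x² and x(p) := -1 + p(1+bT). -/
open MeasureTheory Filter Set

/-- `R(x) = ((1+x) ln(1+x) - x)/x²`. -/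
noncomputable def Rfun (x : ℝ) : ℝ := ((1 + x) * Real.log (1 + x) - x) / x ^ 2

/-- The node-depth CDF of a critical constant-rate birth–death process:
`F_T(t) = t(1+bT)/(T(1+bt))`. -/
noncomputable def criticalCDF (b T t : ℝ) : ℝ := t * (1 + b * T) / (T * (1 + b * t))

/-- The phylogenetic diversity ratio
`π_T(p) = p ∫₀^T (1-F_T)/(1-(1-p)F_T) dt / ∫₀^T (1-F_T) dt` for the critical CDF. -/
noncomputable def piTcrit (b T p : ℝ) : ℝ :=
  (p * ∫ t in (0:ℝ)..T, (1 - criticalCDF b T t) / (1 - (1 - p) * criticalCDF b T t))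
    / ∫ t in (0:ℝ)..T, (1 - criticalCDF b T t)

lemma key_integral (T x : ℝ) (hT : 0 < T) (hx : -1 < x) (hx0 : x ≠ 0) :
    ∫ t in (0:ℝ)..T, (T - t) / (T + x * t) = T * Rfun x := by
  have hpos : ∀ t ∈ Set.uIcc (0:ℝ) T, 0 < T + x * t := by
    intro t ht
    rw [Set.uIcc_of_le hT.le] at ht
    rcases le_or_gt 0 x with h | h
    · nlinarith [ht.1]
    · nlinarith [ht.2]
  have hderiv : ∀ t ∈ Set.uIcc (0:ℝ) T,
      HasDerivAt (fun t => -t / x + (T * (1 + x) / x ^ 2) * Real.log (T + x * t))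
        ((T - t) / (T + x * t)) t := by
    intro t ht
    have h0 := hpos t ht
    have h0' : T + x * t ≠ 0 := h0.ne'
    have h1 : HasDerivAt (fun t : ℝ => T + x * t) x t := by
      simpa using ((hasDerivAt_id t).const_mul x).const_add T
    have h2 : HasDerivAt (fun t : ℝ => Real.log (T + x * t)) (x / (T + x * t)) t := by
      simpa [div_eq_mul_inv] using h1.log h0'
    have h3 : HasDerivAt (fun t : ℝ => -t / x) (-1 / x) t := by
      simpa using ((hasDerivAt_id t).neg.div_const x)
    have h4 := h3.add (h2.const_mul (T * (1 + x) / x ^ 2))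
    refine h4.congr_deriv ?_
    field_simp
    ring
  have hcont : ContinuousOn (fun t => (T - t) / (T + x * t)) (Set.uIcc 0 T) := by
    apply ContinuousOn.div
    · fun_prop
    · fun_prop
    · intro t ht; exact (hpos t ht).ne'
  rw [intervalIntegral.integral_eq_sub_of_hasDerivAt hderiv hcont.intervalIntegrable]
  have hx1 : (0:ℝ) < 1 + x := by linarith
  have hlog : Real.log (T + x * T) = Real.log T + Real.log (1 + x) := by
    rw [show T + x * T = T * (1 + x) by ring, Real.log_mul hT.ne' hx1.ne']
  simp only [Rfun, mul_zero, add_zero, neg_zero, zero_div, hlog]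
  field_simp
  ring

/-- for the critical constant-rate birth–death process,
`π_T(p) = p R(x(p)) / R(x(1))` with `R(x) = ((1+x)ln(1+x)-x)/x²` and `x(p) = -1 + p(1+bT)`. -/
theorem piT_critical_birth_death_explicit
    (b T : ℝ) (hb : 0 < b) (hT : 0 < T)
    (p : ℝ) (hp : p ∈ Set.Ioc (0 : ℝ) 1) (hpx : p * (1 + b * T) ≠ 1) :
    piTcrit b T p = p * Rfun (-1 + p * (1 + b * T)) / Rfun (-1 + 1 * (1 + b * T)) := by
  obtain ⟨hp0, hp1⟩ := hp
  have hbT : (0:ℝ) < 1 + b * T := by nlinarith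
  set x : ℝ := -1 + p * (1 + b * T) with hxdef
  have hx : -1 < x := by
    have : 0 < p * (1 + b * T) := mul_pos hp0 hbT
    simp only [hxdef]; linarith
  have hx0 : x ≠ 0 := by
    intro h
    apply hpx
    have : p * (1 + b * T) = 1 := by linarith [hxdef ▸ h]
    exact this
  have hbT0 : (0:ℝ) < b * T := mul_pos hb hT
  have hnum : ∀ t ∈ Set.uIcc (0:ℝ) T,
      (1 - criticalCDF b T t) / (1 - (1 - p) * criticalCDF b T t)
        = (T - t) / (T + x * t) := by
    intro t ht
    rw [Set.uIcc_of_le hT.le] at ht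
    have hbt : (0:ℝ) < 1 + b * t := by nlinarith [ht.1]
    have hD : T * (1 + b * t) ≠ 0 := (mul_pos hT hbt).ne'
    have hTx : 0 < T + x * t := by
      rcases le_or_gt 0 x with h | h
      · nlinarith [ht.1]
      · nlinarith [ht.2]
    have e1 : 1 - criticalCDF b T t = (T - t) / (T * (1 + b * t)) := by
      unfold criticalCDF; rw [eq_div_iff hD, sub_mul, div_mul_cancel₀ _ hD]; ring
    have e2 : 1 - (1 - p) * criticalCDF b T t = (T + x * t) / (T * (1 + b * t)) := by
      unfold criticalCDF; rw [hxdef, eq_div_iff hD, sub_mul, mul_assoc, div_mul_cancel₀ _ hD]; ring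
    rw [e1, e2, div_div_div_comm, div_self hD, div_one]
  have hden : ∀ t ∈ Set.uIcc (0:ℝ) T,
      (1 - criticalCDF b T t) = (T - t) / (T + (b * T) * t) := by
    intro t ht
    rw [Set.uIcc_of_le hT.le] at ht
    have hbt : (0:ℝ) < 1 + b * t := by nlinarith [ht.1]
    have hD : T * (1 + b * t) ≠ 0 := (mul_pos hT hbt).ne'
    have hE : T + b * T * t ≠ 0 := by nlinarith [ht.1]
    unfold criticalCDF; rw [show T + b * T * t = T * (1 + b * t) by ring, eq_div_iff hD, sub_mul, div_mul_cancel₀ _ hD]; ring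
  unfold piTcrit
  rw [intervalIntegral.integral_congr hnum, intervalIntegral.integral_congr hden,
    key_integral T x hT hx hx0,
    key_integral T (b * T) hT (by linarith) hbT0.ne',
    show (-1 + 1 * (1 + b * T)) = b * T by ring,
    show p * (T * Rfun x) = T * (p * Rfun x) by ring,
    mul_div_mul_left _ _ hT.ne']
end

section
/- For all integers n≥1 and 1≤k≤n and every real x∈[0,1): ∫_x^1 y^{n-k}(y-x)^{k-1} dy = (1-x)^k · ((n-k)!/n!) · Σ_{j=1}^{n-k+1} x^{j-1} · (n-j)!/(n-j-k+1)!. -/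
open MeasureTheory Filter Set

private lemma factR_pos (m : ℕ) : (0:ℝ) < (Nat.factorial m : ℝ) := by
  exact_mod_cast Nat.factorial_pos m

/-- telescoping combinatorial identity -/
private lemma comb_lemma (k d : ℕ) (x : ℝ) :
    ((k:ℝ)+1) * ∑ j ∈ Finset.range (d+2),
        x^j * ((Nat.factorial (k+1+d-j) : ℝ)/(Nat.factorial (d+1-j)))
    + (1-x) * ∑ j ∈ Finset.range (d+1),
        x^j * ((Nat.factorial (k+1+d-j):ℝ)/(Nat.factorial (d-j)))
    = (Nat.factorial (k+d+2) : ℝ)/(Nat.factorial (d+1)) := by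
  set t : ℕ → ℝ := fun i => if i ≤ d then (Nat.factorial (k+1+d-i) : ℝ)/(Nat.factorial (d-i)) else 0 with ht
  have key : ∀ i ∈ Finset.range (d+1),
      ((k:ℝ)+1) * (x^(i+1) * ((Nat.factorial (k+1+d-(i+1)) : ℝ)/(Nat.factorial (d+1-(i+1)))))
        + (x^i - x^(i+1)) * t i
      = x^i * t i - x^(i+1) * t (i+1) := by
    intro i hi
    simp only [Finset.mem_range] at hi
    have hid : i ≤ d := by omega
    rcases eq_or_lt_of_le hid with heq | hlt
    · subst heq
      have h1 : k+1+i-(i+1) = k := by omega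
      have h2 : i+1-(i+1) = 0 := by omega
      have h3 : k+1+i-i = k+1 := by omega
      have h4 : i - i = 0 := by omega
      simp only [ht, h1, h2, h3, h4, if_pos (le_refl i), if_neg (by omega : ¬ i+1 ≤ i)]
      have hf : (Nat.factorial (k+1) : ℝ) = ((k:ℝ)+1) * Nat.factorial k := by
        rw [Nat.factorial_succ]; push_cast; ring
      rw [hf]; simp [Nat.factorial]; ring
    · obtain ⟨e, rfl⟩ : ∃ e, d = i + 1 + e := ⟨d - i - 1, by omega⟩
      have h1 : k+1+(i+1+e)-(i+1) = k+1+e := by omega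
      have h2 : i+1+e+1-(i+1) = e+1 := by omega
      have h3 : k+1+(i+1+e)-i = k+e+2 := by omega
      have h4 : i+1+e-i = e+1 := by omega
      have h5 : i+1+e-(i+1) = e := by omega
      simp only [ht, h1, h2, h3, h4, h5, if_pos (by omega : i ≤ i+1+e),
        if_pos (by omega : i+1 ≤ i+1+e)]
      have hf1 : (Nat.factorial (k+e+2) : ℝ) = ((k:ℝ)+(e:ℝ)+2) * Nat.factorial (k+1+e) := by
        have h : k+e+2 = (k+1+e)+1 := by omega
        rw [h, Nat.factorial_succ]; push_cast; ring
      have hf2 : (Nat.factorial (e+1) : ℝ) = ((e:ℝ)+1) * Nat.factorial e := by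
        rw [Nat.factorial_succ]; push_cast; ring
      rw [hf1, hf2]
      have he : (Nat.factorial e : ℝ) ≠ 0 := (factR_pos e).ne'
      have he1 : (e:ℝ)+1 ≠ 0 := by positivity
      field_simp
      ring
  rw [Finset.sum_range_succ' (fun j => x^j * ((Nat.factorial (k+1+d-j) : ℝ)/(Nat.factorial (d+1-j)))) (d+1)]
  rw [mul_add, Finset.mul_sum, Finset.mul_sum, add_right_comm, ← Finset.sum_add_distrib]
  have hsum : ∀ i ∈ Finset.range (d+1),
      ((k:ℝ)+1) * (x^(i+1) * ((Nat.factorial (k+1+d-(i+1)) : ℝ)/(Nat.factorial (d+1-(i+1)))))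
        + (1-x) * (x^i * ((Nat.factorial (k+1+d-i):ℝ)/(Nat.factorial (d-i))))
      = (fun i => x^i * t i) i - (fun i => x^i * t i) (i+1) := by
    intro i hi
    have hkey := key i hi
    simp only [Finset.mem_range] at hi
    have hti : t i = (Nat.factorial (k+1+d-i) : ℝ)/(Nat.factorial (d-i)) := by
      simp [ht, if_pos (by omega : i ≤ d)]
    simp only
    rw [hti] at hkey ⊢
    linear_combination hkey
  rw [Finset.sum_congr rfl hsum, Finset.sum_range_sub' (fun i => x^i * t i) (d+1)]
  have ht0 : t 0 = (Nat.factorial (k+1+d) : ℝ)/(Nat.factorial d) := by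
    simp [ht]
  have htd : t (d+1) = 0 := by simp [ht]
  simp only [ht0, htd, pow_zero, one_mul, mul_zero, sub_zero, Nat.sub_zero]
  have hf1 : (Nat.factorial (k+d+2) : ℝ) = ((k:ℝ)+(d:ℝ)+2) * Nat.factorial (k+1+d) := by
    have h : k+d+2 = (k+1+d)+1 := by omega
    rw [h, Nat.factorial_succ]; push_cast; ring
  have hf2 : (Nat.factorial (d+1) : ℝ) = ((d:ℝ)+1) * Nat.factorial d := by
    rw [Nat.factorial_succ]; push_cast; ring
  rw [hf1, hf2]
  have hd : (Nat.factorial d : ℝ) ≠ 0 := (factR_pos d).ne'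
  have hd1 : (d:ℝ)+1 ≠ 0 := by positivity
  field_simp
  ring

private lemma aux_integral (d : ℕ) : ∀ (c : ℕ) (x : ℝ), 0 ≤ x → x < 1 →
    ∫ y in x..(1:ℝ), y^d * (y - x)^c
      = (1-x)^(c+1) * ((Nat.factorial d : ℝ)/(Nat.factorial (c+1+d)))
        * ∑ j ∈ Finset.range (d+1), x^j * ((Nat.factorial (c+d-j):ℝ)/(Nat.factorial (d-j))) := by
  induction d with
  | zero =>
    intro c x hx0 hx1
    have hc1 : ((c:ℝ)+1) ≠ 0 := by positivity
    have hcf : (Nat.factorial c : ℝ) ≠ 0 := (factR_pos c).ne'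
    simp only [pow_zero, one_mul, zero_add, Finset.range_one, Finset.sum_singleton,
      Nat.sub_zero, Nat.add_zero, Nat.factorial_zero, Nat.factorial_succ, Nat.sub_self]
    rw [intervalIntegral.integral_comp_sub_right (fun y => y^c) x, integral_pow]
    push_cast
    rw [sub_self]
    rw [zero_pow (by omega : c + 1 ≠ 0)]
    field_simp
    ring
  | succ d ih =>
    intro c x hx0 hx1
    have hc1 : ((c:ℝ)+1) ≠ 0 := by positivity
    -- integration by parts
    have hu : ∀ y ∈ Set.uIcc x (1:ℝ), HasDerivAt (fun y : ℝ => y^(d+1)) (((d:ℝ)+1)*y^d) y := by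
      intro y _
      have h := hasDerivAt_pow (d+1) y
      simpa using h
    have hv : ∀ y ∈ Set.uIcc x (1:ℝ),
        HasDerivAt (fun y : ℝ => (y-x)^(c+1)/((c:ℝ)+1)) ((y-x)^c) y := by
      intro y _
      have h := (((hasDerivAt_id y).sub_const x).pow (c+1)).div_const ((c:ℝ)+1)
      refine h.congr_deriv ?_
      rw [Nat.add_sub_cancel]; push_cast; field_simp; rfl
    have hu' : IntervalIntegrable (fun y : ℝ => ((d:ℝ)+1)*y^d) volume x 1 :=
      (Continuous.intervalIntegrable (by continuity) x 1)
    have hv' : IntervalIntegrable (fun y : ℝ => (y-x)^c) volume x 1 :=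
      (Continuous.intervalIntegrable (by continuity) x 1)
    have hibp := intervalIntegral.integral_mul_deriv_eq_deriv_mul hu hv hu' hv'
    have hpull : ∫ y in x..(1:ℝ), (((d:ℝ)+1)*y^d) * ((y-x)^(c+1)/((c:ℝ)+1))
        = (((d:ℝ)+1)/((c:ℝ)+1)) * ∫ y in x..(1:ℝ), y^d * (y-x)^(c+1) := by
      rw [← intervalIntegral.integral_const_mul]
      apply intervalIntegral.integral_congr
      intro y _
      ring
    rw [hpull, ih (c+1) x hx0 hx1] at hibp
    rw [hibp]
    -- now pure algebra
    have hcomb := comb_lemma c d x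
    set T' : ℝ := ∑ j ∈ Finset.range (d+1), x^j * ((Nat.factorial (c+1+d-j):ℝ)/(Nat.factorial (d-j))) with hT'
    have hTsum : ∑ j ∈ Finset.range (d+1+1), x^j * ((Nat.factorial (c+(d+1)-j):ℝ)/(Nat.factorial (d+1-j)))
        = ∑ j ∈ Finset.range (d+2), x^j * ((Nat.factorial (c+1+d-j):ℝ)/(Nat.factorial (d+1-j))) := by
      apply Finset.sum_congr rfl
      intro j _
      rw [show c+(d+1)-j = c+1+d-j from by omega]
    rw [hTsum]
    set T : ℝ := ∑ j ∈ Finset.range (d+2), x^j * ((Nat.factorial (c+1+d-j):ℝ)/(Nat.factorial (d+1-j))) with hT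
    set N1 : ℝ := (Nat.factorial d : ℝ) with hN1
    set N2 : ℝ := (Nat.factorial (c+d+2) : ℝ) with hN2
    have hN1' : N1 ≠ 0 := (factR_pos d).ne'
    have hN2' : N2 ≠ 0 := (factR_pos (c+d+2)).ne'
    have he1 : (Nat.factorial (c+1+1+d) : ℝ) = N2 := by rw [show c+1+1+d = c+d+2 from by omega]
    have he2 : (Nat.factorial (c+1+(d+1)) : ℝ) = N2 := by rw [show c+1+(d+1) = c+d+2 from by omega]
    have he3 : (Nat.factorial (d+1) : ℝ) = ((d:ℝ)+1) * N1 := by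
      rw [Nat.factorial_succ]; push_cast; ring
    rw [he1, he2, he3]
    have hcomb2 : (((c:ℝ)+1)*T + (1-x)*T') * (((d:ℝ)+1)*N1) = N2 := by
      rw [hcomb, he3]
      field_simp
    have key : N2 - ((d:ℝ)+1)*(1-x)*N1*T' = ((c:ℝ)+1)*(((d:ℝ)+1)*N1)*T := by
      linear_combination -hcomb2
    have hd1 : ((d:ℝ)+1) ≠ 0 := by positivity
    calc 1^(d+1) * ((1-x)^(c+1)/((c:ℝ)+1)) - x^(d+1) * ((x-x)^(c+1)/((c:ℝ)+1))
          - ((d:ℝ)+1)/((c:ℝ)+1) * ((1-x)^(c+1+1) * (N1/N2) * T')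
        = (1-x)^(c+1) * (N2 - ((d:ℝ)+1)*(1-x)*N1*T') / (((c:ℝ)+1)*N2) := by
          rw [sub_self, zero_pow (by omega : c + 1 ≠ 0)]
          field_simp
          ring
      _ = (1-x)^(c+1) * (((c:ℝ)+1)*(((d:ℝ)+1)*N1)*T) / (((c:ℝ)+1)*N2) := by rw [key]
      _ = (1-x)^(c+1) * ((((d:ℝ)+1)*N1)/N2) * T := by
          field_simp

private lemma sum_Icc_one (m : ℕ) (f : ℕ → ℝ) :
    ∑ j ∈ Finset.Icc 1 m, f j = ∑ i ∈ Finset.range m, f (i+1) := by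
  induction m with
  | zero => simp
  | succ m ih => rw [Finset.sum_Icc_succ_top (by omega), ih, Finset.sum_range_succ]

/-- for integers `1 ≤ k ≤ n` and `x ∈ [0,1)`,
`∫_x^1 y^{n-k}(y-x)^{k-1} dy
  = (1-x)^k ((n-k)!/n!) Σ_{j=1}^{n-k+1} x^{j-1} (n-j)!/(n-j-k+1)!`. -/
theorem beta_type_integral_identity
    (n k : ℕ) (hn : 1 ≤ n) (hk1 : 1 ≤ k) (hkn : k ≤ n)
    (x : ℝ) (hx0 : 0 ≤ x) (hx1 : x < 1) :
    ∫ y in x..(1:ℝ), y ^ (n - k) * (y - x) ^ (k - 1)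
      = (1 - x) ^ k * ((Nat.factorial (n - k) : ℝ) / (Nat.factorial n : ℝ))
        * ∑ j ∈ Finset.Icc 1 (n - k + 1),
            x ^ (j - 1) * ((Nat.factorial (n - j) : ℝ) / (Nat.factorial (n - j - k + 1) : ℝ)) := by
  obtain ⟨c, rfl⟩ : ∃ c, k = c+1 := ⟨k-1, by omega⟩
  obtain ⟨d, rfl⟩ : ∃ d, n = c+1+d := ⟨n-(c+1), by omega⟩
  rw [show (c+1+d)-(c+1) = d from by omega, show (c+1)-1 = c from by omega]
  rw [aux_integral d c x hx0 hx1, sum_Icc_one]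
  have hsum : ∀ i ∈ Finset.range (d+1),
      x ^ (i+1-1) * ((Nat.factorial (c+1+d-(i+1)) : ℝ) / (Nat.factorial (c+1+d-(i+1)-(c+1)+1) : ℝ))
      = x ^ i * ((Nat.factorial (c+d-i):ℝ)/(Nat.factorial (d-i))) := by
    intro i hi
    simp only [Finset.mem_range] at hi
    rw [show i+1-1 = i from by omega, show c+1+d-(i+1) = c+d-i from by omega]
    rcases eq_or_lt_of_le (by omega : i ≤ d) with heq | hlt
    · subst heq
      rw [show c+i-i-(c+1)+1 = 1 from by omega, show i-i = 0 from by omega,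
        Nat.factorial_one, Nat.factorial_zero]
    · rw [show c+d-i-(c+1)+1 = d-i from by omega]
  rw [Finset.sum_congr rfl hsum]
end

section
/- Fix integers n≥2 and 2≤k≤n, T>0, and a continuous cumulative distribution function F on [0,T] with F(0)=0, F(T)=1. Let (A_i)_{2≤i≤n} be i.i.d. with CDF F, and let S be a uniformly random k-element subset of {1,...,n}, independent of (A_i). Let i_1<i_2 be the two smallest elements of S and define the coalescence time C_1 := max{A_{i_1+1}, A_{i_1+2}, ..., A_{i_2}}. Then for every t∈[0,T], P(C_1 < t) = k·((n-k)!/n!)·Σ_{j=1}^{n-k+1} ((n-j)!/(n-j-k+1)!)·F(t)^j. -/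
open MeasureTheory ProbabilityTheory Filter Set

/-- The smallest element of a finite set of naturals (junk value `0` if empty). -/
noncomputable def minOf (s : Finset ℕ) : ℕ := if h : s.Nonempty then s.min' h else 0

/-- The second smallest element of a finite set of naturals (junk value if `card < 2`). -/
noncomputable def secondMinOf (s : Finset ℕ) : ℕ := minOf (s.erase (minOf s))

lemma minOf_mem {s : Finset ℕ} (hs : s.Nonempty) : minOf s ∈ s := by
  rw [minOf, dif_pos hs]; exact s.min'_mem hs

lemma minOf_le {s : Finset ℕ} {x : ℕ} (hx : x ∈ s) : minOf s ≤ x := by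
  rw [minOf, dif_pos ⟨x, hx⟩]; exact s.min'_le x hx

lemma erase_min_nonempty {s : Finset ℕ} (hs : 2 ≤ s.card) : (s.erase (minOf s)).Nonempty := by
  rw [← Finset.card_pos, Finset.card_erase_of_mem (minOf_mem (by
    rw [← Finset.card_pos]; omega))]; omega

lemma secondMinOf_mem {s : Finset ℕ} (hs : 2 ≤ s.card) : secondMinOf s ∈ s.erase (minOf s) :=
  minOf_mem (erase_min_nonempty hs)

lemma minOf_lt_secondMinOf {s : Finset ℕ} (hs : 2 ≤ s.card) : minOf s < secondMinOf s := by
  have h := secondMinOf_mem hs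
  have h1 := Finset.ne_of_mem_erase h
  have h2 := minOf_le (Finset.mem_of_mem_erase h)
  omega

lemma secondMinOf_le {s : Finset ℕ} {x : ℕ} (hx : x ∈ s) (hne : x ≠ minOf s) :
    secondMinOf s ≤ x :=
  minOf_le (Finset.mem_erase.2 ⟨hne, hx⟩)

lemma blockMax_lt_iff {A : ℕ → ℝ} {a b : ℕ} (h : a < b) {t : ℝ} :
    blockMax A a b < t ↔ ∀ i ∈ Finset.Ioc a b, A i < t := by
  rw [blockMax, dif_pos h, Finset.sup'_lt_iff]

lemma gap_mem {n k : ℕ} (hk2 : 2 ≤ k) {s : Finset ℕ}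
    (hsub : s ⊆ Finset.Icc 1 n) (hcard : s.card = k) :
    secondMinOf s - minOf s ∈ Finset.Icc 1 (n - k + 1) := by
  have hs2 : 2 ≤ s.card := hcard ▸ hk2
  have hab := minOf_lt_secondMinOf hs2
  have ha1 : 1 ≤ minOf s := by
    have := hsub (minOf_mem (by rw [← Finset.card_pos]; omega))
    exact (Finset.mem_Icc.1 this).1
  have hsubset : s.erase (minOf s) ⊆ Finset.Icc (secondMinOf s) n := by
    intro x hx
    rw [Finset.mem_Icc]
    exact ⟨secondMinOf_le (Finset.mem_of_mem_erase hx) (Finset.ne_of_mem_erase hx),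
      (Finset.mem_Icc.1 (hsub (Finset.mem_of_mem_erase hx))).2⟩
  have hcard2 : s.card - 1 ≤ n + 1 - secondMinOf s := by
    have := Finset.card_le_card hsubset
    rwa [Finset.card_erase_of_mem (minOf_mem (by rw [← Finset.card_pos]; omega)),
      Nat.card_Icc] at this
  have hbn : secondMinOf s ≤ n := by
    have := hsub (Finset.mem_of_mem_erase (secondMinOf_mem hs2))
    exact (Finset.mem_Icc.1 this).2
  rw [Finset.mem_Icc]
  omega

lemma card_fiber (n k j : ℕ) (hk2 : 2 ≤ k) (hkn : k ≤ n)
    (hj : j ∈ Finset.Icc 1 (n - k + 1)) :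
    (((Finset.Icc 1 n).powersetCard k).filter
      (fun s => secondMinOf s - minOf s = j)).card = (n - j).choose (k - 1) := by
  rw [Finset.mem_Icc] at hj
  have hcard_target : ((Finset.Icc (j+1) n).powersetCard (k-1)).card = (n - j).choose (k-1) := by
    rw [Finset.card_powersetCard, Nat.card_Icc]
    congr 1
    omega
  rw [← hcard_target]
  apply Finset.card_bij' (fun s _ => s.erase (minOf s)) (fun u _ => insert (minOf u - j) u)
  · intro s hs
    simp only [Finset.mem_filter, Finset.mem_powersetCard] at hs ⊢
    obtain ⟨⟨hsub, hcard⟩, hgap⟩ := hs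
    have hs2 : 2 ≤ s.card := hcard ▸ hk2
    have hne : s.Nonempty := by rw [← Finset.card_pos]; omega
    have hab := minOf_lt_secondMinOf hs2
    have ha1 : 1 ≤ minOf s := (Finset.mem_Icc.1 (hsub (minOf_mem hne))).1
    constructor
    · intro x hx
      rw [Finset.mem_Icc]
      have h1 := secondMinOf_le (Finset.mem_of_mem_erase hx) (Finset.ne_of_mem_erase hx)
      have h2 := (Finset.mem_Icc.1 (hsub (Finset.mem_of_mem_erase hx))).2
      omega
    · rw [Finset.card_erase_of_mem (minOf_mem hne), hcard]
  · intro u hu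
    rw [Finset.mem_powersetCard] at hu
    obtain ⟨husub, hucard⟩ := hu
    have hune : u.Nonempty := by rw [← Finset.card_pos]; omega
    have hmu := (Finset.mem_Icc.1 (husub (minOf_mem hune))).1
    have hmun := (Finset.mem_Icc.1 (husub (minOf_mem hune))).2
    have hnot : minOf u - j ∉ u := fun h => by have := minOf_le h; omega
    have hminins : minOf (insert (minOf u - j) u) = minOf u - j := by
      have hmem : minOf u - j ∈ insert (minOf u - j) u := Finset.mem_insert_self _ _
      have h1 := minOf_le hmem
      have h2 : minOf u - j ≤ minOf (insert (minOf u - j) u) := by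
        have hm := minOf_mem (⟨_, hmem⟩ : (insert (minOf u - j) u).Nonempty)
        rcases Finset.mem_insert.1 hm with h | h
        · omega
        · have := minOf_le h
          omega
      omega
    simp only [Finset.mem_filter, Finset.mem_powersetCard]
    refine ⟨⟨?_, ?_⟩, ?_⟩
    · intro x hx
      rcases Finset.mem_insert.1 hx with h | h
      · rw [Finset.mem_Icc]; omega
      · have := Finset.mem_Icc.1 (husub h); rw [Finset.mem_Icc]; omega
    · rw [Finset.card_insert_of_notMem hnot, hucard]; omega
    · rw [secondMinOf, hminins, Finset.erase_insert hnot]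
      omega
  · intro s hs
    simp only [Finset.mem_filter, Finset.mem_powersetCard] at hs
    obtain ⟨⟨hsub, hcard⟩, hgap⟩ := hs
    have hs2 : 2 ≤ s.card := hcard ▸ hk2
    have hne : s.Nonempty := by rw [← Finset.card_pos]; omega
    have hab := minOf_lt_secondMinOf hs2
    have h1 : minOf (s.erase (minOf s)) = secondMinOf s := rfl
    rw [h1]
    have h2 : secondMinOf s - j = minOf s := by omega
    rw [h2, Finset.insert_erase (minOf_mem hne)]
  · intro u hu
    rw [Finset.mem_powersetCard] at hu
    obtain ⟨husub, hucard⟩ := hu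
    have hune : u.Nonempty := by rw [← Finset.card_pos]; omega
    have hmu := (Finset.mem_Icc.1 (husub (minOf_mem hune))).1
    have hnot : minOf u - j ∉ u := fun h => by have := minOf_le h; omega
    have hminins : minOf (insert (minOf u - j) u) = minOf u - j := by
      have hmem : minOf u - j ∈ insert (minOf u - j) u := Finset.mem_insert_self _ _
      have h1 := minOf_le hmem
      have h2 : minOf u - j ≤ minOf (insert (minOf u - j) u) := by
        have hm := minOf_mem (⟨_, hmem⟩ : (insert (minOf u - j) u).Nonempty)
        rcases Finset.mem_insert.1 hm with h | h
        · omega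
        · have := minOf_le h; omega
      omega
    rw [hminins, Finset.erase_insert hnot]

lemma choose_ratio (n k j : ℕ) (hk2 : 2 ≤ k) (hkn : k ≤ n) (hj1 : 1 ≤ j)
    (hj : j ≤ n - k + 1) :
    (1 / (n.choose k : ℝ)) * ((n - j).choose (k - 1) : ℝ)
      = (k : ℝ) * ((Nat.factorial (n - k) : ℝ) / (Nat.factorial n : ℝ))
        * ((Nat.factorial (n - j) : ℝ) / (Nat.factorial (n - j - k + 1) : ℝ)) := by
  have hk1nj : k - 1 ≤ n - j := by omega
  have hfact_eq : Nat.factorial (n - j - k + 1) = Nat.factorial (n - j - (k - 1)) := by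
    rcases le_or_gt k (n - j) with h | h
    · congr 1; omega
    · have h1 : n - j - k + 1 = 1 := by omega
      have h2 : n - j - (k - 1) = 0 := by omega
      rw [h1, h2]; rfl
  have e1 : (n.choose k : ℝ) * (Nat.factorial k) * (Nat.factorial (n - k))
      = Nat.factorial n := by
    exact_mod_cast congrArg (Nat.cast : ℕ → ℝ) (Nat.choose_mul_factorial_mul_factorial hkn)
  have e2 : ((n - j).choose (k - 1) : ℝ) * (Nat.factorial (k - 1))
      * (Nat.factorial (n - j - (k - 1))) = Nat.factorial (n - j) := by
    exact_mod_cast congrArg (Nat.cast : ℕ → ℝ) (Nat.choose_mul_factorial_mul_factorial hk1nj)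
  have ekf : (Nat.factorial k : ℝ) = k * Nat.factorial (k - 1) := by
    have h : k = (k - 1) + 1 := by omega
    nth_rewrite 1 [h]
    rw [Nat.factorial_succ]
    push_cast
    have hc : ((k - 1 : ℕ) : ℝ) + 1 = k := by
      have : k - 1 + 1 = k := by omega
      exact_mod_cast congrArg (Nat.cast : ℕ → ℝ) this
    rw [hc]
  have h1 : (n.choose k : ℝ) ≠ 0 := by
    exact_mod_cast Nat.pos_iff_ne_zero.1 (Nat.choose_pos hkn)
  have h2 : (Nat.factorial n : ℝ) ≠ 0 := by exact_mod_cast Nat.factorial_ne_zero n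
  have h3 : (Nat.factorial (n - j - k + 1) : ℝ) ≠ 0 := by
    exact_mod_cast Nat.factorial_ne_zero _
  have h4 : (Nat.factorial (k - 1) : ℝ) ≠ 0 := by exact_mod_cast Nat.factorial_ne_zero _
  have h5 : (Nat.factorial (n - k) : ℝ) ≠ 0 := by exact_mod_cast Nat.factorial_ne_zero _
  rw [hfact_eq] at h3 ⊢
  field_simp
  rw [← e1, ← e2, ekf]
  ring

/-- for i.i.d. node depths `A_2, ..., A_n` with CDF `F` and an independent
uniform random `k`-subset `S` of `{1,...,n}`, the coalescence time
`C₁ = max{A_{i₁+1}, ..., A_{i₂}}` between the two smallest sampled tips satisfies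
`P(C₁ < t) = k ((n-k)!/n!) Σ_{j=1}^{n-k+1} ((n-j)!/(n-j-k+1)!) F(t)^j`. -/
theorem first_coalescence_time_distribution_k_of_n
    {Ω : Type*} [MeasurableSpace Ω] (μ : Measure Ω) [IsProbabilityMeasure μ]
    (n k : ℕ) (hn : 2 ≤ n) (hk2 : 2 ≤ k) (hkn : k ≤ n)
    (T : ℝ) (hT : 0 < T)
    (F : ℝ → ℝ) (hFcont : Continuous F) (hFmono : Monotone F)
    (hF0 : F 0 = 0) (hFT : F T = 1)
    (A : ℕ → Ω → ℝ) (hAmeas : ∀ i, Measurable (A i))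
    (hAiid : iIndepFun A μ)
    (hAcdf : ∀ i, ∀ t ∈ Set.Icc 0 T, (μ {ω | A i ω ≤ t}).toReal = F t)
    (S : Ω → Finset ℕ)
    (hSrange : ∀ ω, S ω ⊆ Finset.Icc 1 n ∧ (S ω).card = k)
    (hSunif : ∀ s : Finset ℕ, s ⊆ Finset.Icc 1 n → s.card = k →
      (μ {ω | S ω = s}).toReal = 1 / (n.choose k : ℝ))
    (hindep : ∀ (s : Finset ℕ) (t : Set (ℕ → ℝ)), MeasurableSet t →
      μ ({ω | S ω = s} ∩ (fun ω i => A i ω) ⁻¹' t)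
        = μ {ω | S ω = s} * μ ((fun ω i => A i ω) ⁻¹' t)) :
    ∀ t ∈ Set.Icc 0 T,
      (μ {ω | blockMax (fun i => A i ω) (minOf (S ω)) (secondMinOf (S ω)) < t}).toReal
        = (k : ℝ) * ((Nat.factorial (n - k) : ℝ) / (Nat.factorial n : ℝ))
          * ∑ j ∈ Finset.Icc 1 (n - k + 1),
              ((Nat.factorial (n - j) : ℝ) / (Nat.factorial (n - j - k + 1) : ℝ)) * F t ^ j := by
  intro t ht
  obtain ⟨ht0, htT⟩ := ht
  set x : ℝ := F t with hxdef
  have hx0 : 0 ≤ x := by rw [hxdef, ← hF0]; exact hFmono ht0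
  -- Step 1: P(A i < t) = ofReal (F t)
  have hlt : ∀ i, μ {ω | A i ω < t} = ENNReal.ofReal x := by
    intro i
    have hle : ∀ u ∈ Set.Icc (0:ℝ) T, μ {ω | A i ω ≤ u} = ENNReal.ofReal (F u) := by
      intro u hu
      rw [← hAcdf i u hu, ENNReal.ofReal_toReal (measure_ne_top μ _)]
    have hupper : μ {ω | A i ω < t} ≤ ENNReal.ofReal x := by
      rw [← hle t ⟨ht0, htT⟩]
      exact measure_mono (fun ω (h : A i ω < t) => le_of_lt h)
    rcases eq_or_lt_of_le ht0 with h0 | h0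
    · refine le_antisymm hupper ?_
      rw [hxdef, ← h0, hF0]
      simp
    · refine le_antisymm hupper ?_
      set p := (μ {ω | A i ω < t}).toReal with hpdef
      have hple : ∀ m : ℕ, F (t - t * (1 / (m + 1))) ≤ p := by
        intro m
        have hpos : 0 < t * (1 / (m + 1)) := by positivity
        have hle1 : t * (1 / (m + 1)) ≤ t := by
          rw [mul_one_div]
          apply div_le_self (le_of_lt h0)
          have : (0:ℝ) ≤ m := Nat.cast_nonneg m
          linarith
        have hu : t - t * (1 / (m + 1)) ∈ Set.Icc (0:ℝ) T := ⟨by linarith, by linarith⟩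
        have hsub : {ω | A i ω ≤ t - t * (1 / (m + 1))} ⊆ {ω | A i ω < t} := by
          intro ω hω
          simp only [mem_setOf_eq] at hω ⊢
          linarith
        calc F (t - t * (1 / (m + 1))) = (μ {ω | A i ω ≤ t - t * (1 / (m + 1))}).toReal :=
              (hAcdf i _ hu).symm
          _ ≤ p := ENNReal.toReal_mono (measure_ne_top μ _) (measure_mono hsub)
      have htendaux : Tendsto (fun m : ℕ => t - t * (1 / (m + 1))) atTop (nhds t) := by
        have h1 : Tendsto (fun m : ℕ => (1:ℝ) / (m + 1)) atTop (nhds 0) :=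
          tendsto_one_div_add_atTop_nhds_zero_nat
        have h : Tendsto (fun m : ℕ => t - t * (1 / (m + 1))) atTop (nhds (t - t * 0)) :=
          Tendsto.sub tendsto_const_nhds (Tendsto.mul tendsto_const_nhds h1)
        simpa using h
      have htend : Tendsto (fun m : ℕ => F (t - t * (1 / (m + 1)))) atTop (nhds (F t)) :=
        (hFcont.continuousAt.tendsto).comp htendaux
      have hFtp : F t ≤ p := le_of_tendsto htend (Filter.Eventually.of_forall hple)
      calc ENNReal.ofReal x ≤ ENNReal.ofReal p := ENNReal.ofReal_le_ofReal hFtp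
        _ = μ {ω | A i ω < t} := ENNReal.ofReal_toReal (measure_ne_top μ _)
  -- notation
  set 𝒮 : Finset (Finset ℕ) := (Finset.Icc 1 n).powersetCard k with h𝒮
  set Ts : Finset ℕ → Set (ℕ → ℝ) :=
    fun s => {f | ∀ i ∈ Finset.Ioc (minOf s) (secondMinOf s), f i < t} with hTs
  set Ds : Finset ℕ → Set Ω := fun s => (fun ω i => A i ω) ⁻¹' Ts s with hDs
  have hTmeas : ∀ s, MeasurableSet (Ts s) := by
    intro s
    have h : Ts s = ⋂ i ∈ Finset.Ioc (minOf s) (secondMinOf s), {f : ℕ → ℝ | f i < t} := by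
      ext f; simp [hTs]
    rw [h]
    exact MeasurableSet.biInter (Finset.Ioc _ _).countable_toSet
      (fun i _ => measurableSet_lt (measurable_pi_apply i) measurable_const)
  have hDeq : ∀ s, Ds s = ⋂ i ∈ Finset.Ioc (minOf s) (secondMinOf s), A i ⁻¹' Iio t := by
    intro s; ext ω; simp [hDs, hTs]
  have hDmeas : ∀ s, MeasurableSet (Ds s) := by
    intro s
    rw [hDeq s]
    exact MeasurableSet.biInter (Finset.Ioc _ _).countable_toSet
      (fun i _ => (hAmeas i) measurableSet_Iio)
  have hDval : ∀ s, μ (Ds s) = ENNReal.ofReal x ^ (secondMinOf s - minOf s) := by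
    intro s
    rw [hDeq s]
    rw [hAiid.measure_inter_preimage_eq_mul (Finset.Ioc (minOf s) (secondMinOf s))
      (sets := fun _ => Iio t) (fun i _ => measurableSet_Iio)]
    have hterm : ∀ i ∈ Finset.Ioc (minOf s) (secondMinOf s),
        μ (A i ⁻¹' Iio t) = ENNReal.ofReal x := by
      intro i _
      have : A i ⁻¹' Iio t = {ω | A i ω < t} := rfl
      rw [this, hlt i]
    rw [Finset.prod_congr rfl hterm, Finset.prod_const, Nat.card_Ioc]
  have hSω : ∀ ω, S ω ∈ 𝒮 := fun ω =>
    Finset.mem_powersetCard.2 ⟨(hSrange ω).1, (hSrange ω).2⟩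
  have hchoosepos : (0:ℝ) < n.choose k := by exact_mod_cast Nat.choose_pos hkn
  have hBs : ∀ s ∈ 𝒮, μ {ω | S ω = s} = ENNReal.ofReal (1 / (n.choose k : ℝ)) := by
    intro s hs
    rw [Finset.mem_powersetCard] at hs
    rw [← hSunif s hs.1 hs.2, ENNReal.ofReal_toReal (measure_ne_top μ _)]
  set E : Set Ω := {ω | blockMax (fun i => A i ω) (minOf (S ω)) (secondMinOf (S ω)) < t}
    with hE
  have hEmem : ∀ ω, ω ∈ E ↔ ω ∈ Ds (S ω) := by
    intro ω
    have hcard2 : 2 ≤ (S ω).card := (hSrange ω).2 ▸ hk2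
    rw [hE]
    simp only [mem_setOf_eq]
    rw [blockMax_lt_iff (minOf_lt_secondMinOf hcard2)]
    rfl
  have hEsub : E ⊆ ⋃ s ∈ 𝒮, ({ω | S ω = s} ∩ Ds s) := by
    intro ω hω
    refine Set.mem_biUnion (hSω ω) ⟨rfl, ?_⟩
    exact (hEmem ω).1 hω
  have hEcsub : Eᶜ ⊆ ⋃ s ∈ 𝒮, ({ω | S ω = s} ∩ (Ds s)ᶜ) := by
    intro ω hω
    refine Set.mem_biUnion (hSω ω) ⟨rfl, ?_⟩
    exact fun h => hω ((hEmem ω).2 h)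
  -- measure of the pieces
  have hpiece : ∀ s ∈ 𝒮, μ ({ω | S ω = s} ∩ Ds s)
      = ENNReal.ofReal (1 / (n.choose k : ℝ)) * μ (Ds s) := by
    intro s hs
    rw [hDs]
    rw [hindep s (Ts s) (hTmeas s), hBs s hs]
  have hpiecec : ∀ s ∈ 𝒮, μ ({ω | S ω = s} ∩ (Ds s)ᶜ)
      = ENNReal.ofReal (1 / (n.choose k : ℝ)) * μ ((Ds s)ᶜ) := by
    intro s hs
    have hcompl : (Ds s)ᶜ = (fun ω i => A i ω) ⁻¹' (Ts s)ᶜ := by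
      rw [hDs, Set.preimage_compl]
    rw [hcompl, hindep s (Ts s)ᶜ (hTmeas s).compl, hBs s hs]
  -- sum of B measures is 1
  have hcard𝒮 : 𝒮.card = n.choose k := by
    rw [h𝒮, Finset.card_powersetCard, Nat.card_Icc]
    norm_num
  have hBsum : ∑ s ∈ 𝒮, ENNReal.ofReal (1 / (n.choose k : ℝ)) = 1 := by
    rw [Finset.sum_const, hcard𝒮, nsmul_eq_mul]
    rw [← ENNReal.ofReal_natCast, ← ENNReal.ofReal_mul (Nat.cast_nonneg _)]
    rw [mul_one_div, div_self (ne_of_gt hchoosepos), ENNReal.ofReal_one]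
  -- upper bound
  have hupperE : μ E ≤ ∑ s ∈ 𝒮, ENNReal.ofReal (1 / (n.choose k : ℝ)) * μ (Ds s) := by
    calc μ E ≤ μ (⋃ s ∈ 𝒮, ({ω | S ω = s} ∩ Ds s)) := measure_mono hEsub
      _ ≤ ∑ s ∈ 𝒮, μ ({ω | S ω = s} ∩ Ds s) := measure_biUnion_finset_le 𝒮 _
      _ = ∑ s ∈ 𝒮, ENNReal.ofReal (1 / (n.choose k : ℝ)) * μ (Ds s) :=
          Finset.sum_congr rfl hpiece
  have hupperEc : μ Eᶜ ≤ ∑ s ∈ 𝒮, ENNReal.ofReal (1 / (n.choose k : ℝ)) * μ ((Ds s)ᶜ) := by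
    calc μ Eᶜ ≤ μ (⋃ s ∈ 𝒮, ({ω | S ω = s} ∩ (Ds s)ᶜ)) := measure_mono hEcsub
      _ ≤ ∑ s ∈ 𝒮, μ ({ω | S ω = s} ∩ (Ds s)ᶜ) := measure_biUnion_finset_le 𝒮 _
      _ = ∑ s ∈ 𝒮, ENNReal.ofReal (1 / (n.choose k : ℝ)) * μ ((Ds s)ᶜ) :=
          Finset.sum_congr rfl hpiecec
  have hsplit : (∑ s ∈ 𝒮, ENNReal.ofReal (1 / (n.choose k : ℝ)) * μ (Ds s))
      + (∑ s ∈ 𝒮, ENNReal.ofReal (1 / (n.choose k : ℝ)) * μ ((Ds s)ᶜ)) = 1 := by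
    rw [← Finset.sum_add_distrib]
    calc ∑ s ∈ 𝒮, (ENNReal.ofReal (1 / (n.choose k : ℝ)) * μ (Ds s)
          + ENNReal.ofReal (1 / (n.choose k : ℝ)) * μ ((Ds s)ᶜ))
        = ∑ s ∈ 𝒮, ENNReal.ofReal (1 / (n.choose k : ℝ)) * (μ (Ds s) + μ ((Ds s)ᶜ)) := by
          refine Finset.sum_congr rfl fun s _ => ?_
          rw [mul_add]
      _ = ∑ s ∈ 𝒮, ENNReal.ofReal (1 / (n.choose k : ℝ)) := by
          refine Finset.sum_congr rfl fun s _ => ?_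
          rw [measure_add_measure_compl (hDmeas s), measure_univ, mul_one]
      _ = 1 := hBsum
  have hsumDc_ne_top : (∑ s ∈ 𝒮, ENNReal.ofReal (1 / (n.choose k : ℝ)) * μ ((Ds s)ᶜ)) ≠ ⊤ := by
    refine (ENNReal.sum_lt_top.2 fun s _ => ?_).ne
    exact ENNReal.mul_lt_top ENNReal.ofReal_lt_top (measure_lt_top μ _)
  have hlowerE : (∑ s ∈ 𝒮, ENNReal.ofReal (1 / (n.choose k : ℝ)) * μ (Ds s)) ≤ μ E := by
    have hone : (1 : ENNReal) ≤ μ E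
        + ∑ s ∈ 𝒮, ENNReal.ofReal (1 / (n.choose k : ℝ)) * μ ((Ds s)ᶜ) := by
      calc (1 : ENNReal) = μ univ := (measure_univ (μ := μ)).symm
        _ = μ (E ∪ Eᶜ) := by rw [Set.union_compl_self]
        _ ≤ μ E + μ Eᶜ := measure_union_le E Eᶜ
        _ ≤ _ := add_le_add le_rfl hupperEc
    rw [← hsplit] at hone
    exact (ENNReal.add_le_add_iff_right hsumDc_ne_top).1 hone
  have hEval : μ E = ∑ s ∈ 𝒮, ENNReal.ofReal (1 / (n.choose k : ℝ)) * μ (Ds s) :=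
    le_antisymm hupperE hlowerE
  -- convert to real
  have hreal : (μ E).toReal
      = ∑ s ∈ 𝒮, (1 / (n.choose k : ℝ)) * x ^ (secondMinOf s - minOf s) := by
    rw [hEval, ENNReal.toReal_sum (fun s _ =>
      (ENNReal.mul_lt_top ENNReal.ofReal_lt_top (measure_lt_top μ _)).ne)]
    refine Finset.sum_congr rfl fun s _ => ?_
    rw [hDval s, ENNReal.toReal_mul, ENNReal.toReal_pow, ENNReal.toReal_ofReal (by positivity),
      ENNReal.toReal_ofReal hx0]
  -- regroup combinatorially
  have hgroup : ∑ s ∈ 𝒮, (1 / (n.choose k : ℝ)) * x ^ (secondMinOf s - minOf s)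
      = ∑ j ∈ Finset.Icc 1 (n - k + 1),
          ((n - j).choose (k - 1) : ℝ) * ((1 / (n.choose k : ℝ)) * x ^ j) := by
    rw [← Finset.sum_fiberwise_of_maps_to (g := fun s => secondMinOf s - minOf s)
      (t := Finset.Icc 1 (n - k + 1)) (fun s hs => by
        rw [h𝒮, Finset.mem_powersetCard] at hs
        exact gap_mem hk2 hs.1 hs.2)]
    refine Finset.sum_congr rfl fun j hj => ?_
    have hinner : ∑ s ∈ 𝒮.filter (fun s => secondMinOf s - minOf s = j),
        (1 / (n.choose k : ℝ)) * x ^ (secondMinOf s - minOf s)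
        = ∑ s ∈ 𝒮.filter (fun s => secondMinOf s - minOf s = j),
            (1 / (n.choose k : ℝ)) * x ^ j := by
      refine Finset.sum_congr rfl fun s hs => ?_
      rw [(Finset.mem_filter.1 hs).2]
    rw [hinner, Finset.sum_const, nsmul_eq_mul, h𝒮, card_fiber n k j hk2 hkn hj]
  -- conclude
  rw [hreal, hgroup, Finset.mul_sum]
  refine Finset.sum_congr rfl fun j hj => ?_
  rw [Finset.mem_Icc] at hj
  calc ((n - j).choose (k - 1) : ℝ) * (1 / (n.choose k : ℝ) * x ^ j)
      = (1 / (n.choose k : ℝ)) * ((n - j).choose (k - 1) : ℝ) * x ^ j := by ring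
    _ = (k : ℝ) * ((Nat.factorial (n - k) : ℝ) / (Nat.factorial n : ℝ))
        * ((Nat.factorial (n - j) : ℝ) / (Nat.factorial (n - j - k + 1) : ℝ)) * x ^ j := by
        rw [choose_ratio n k j hk2 hkn hj.1 hj.2]
    _ = _ := by ring
end

section
/- Fix integers n≥2 and 2≤k≤n, T>0, and a continuous cumulative distribution function F on [0,T] with F(0)=0, F(T)=1. Let (A_i)_{2≤i≤n} be i.i.d. with CDF F, let S be a uniformly random k-element subset of {1,...,n} independent of (A_i), let j_1<...<j_k enumerate S, and define S_{n,k}* := Σ_{m=1}^{k-1} max{A_{j_m+1},...,A_{j_{m+1}}}. Then E(S_{n,k}*) = k(k-1)·((n-k)!/n!)·Σ_{j=1}^{n-k+1} ((n-j)!/(n-j-k+1)!)·∫₀^T (1-F(t)^j) dt. -/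
open MeasureTheory ProbabilityTheory Filter Set

/-- The phylogenetic diversity (minus the stem age) of the tree spanned by the tips in the
finite set `s`: the sum, over each pair `j < j'` of consecutive elements of `s`, of the
maximum of the node depths `A (j+1), ..., A j'`. -/
noncomputable def survPDset (A : ℕ → ℝ) (s : Finset ℕ) : ℝ :=
  ∑ j ∈ s, ∑ j' ∈ s,
    if j < j' ∧ (∀ i ∈ Finset.Ioo j j', i ∉ s) then blockMax A j j' else 0

section Aux

variable {Ω : Type*} [MeasurableSpace Ω] (μ : Measure Ω) [IsProbabilityMeasure μ]

lemma aux_ae_bounds {T : ℝ} (hT : 0 < T) {M : Ω → ℝ} (hM : Measurable M)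
    (h0 : (μ {ω | M ω ≤ 0}).toReal = 0) (hTcdf : (μ {ω | M ω ≤ T}).toReal = 1) :
    (∀ᵐ ω ∂μ, 0 < M ω) ∧ (∀ᵐ ω ∂μ, M ω ≤ T) := by
  have m0 : MeasurableSet {ω | M ω ≤ 0} := hM measurableSet_Iic
  have mT : MeasurableSet {ω | M ω ≤ T} := hM measurableSet_Iic
  have h0' : μ {ω | M ω ≤ 0} = 0 := by
    have := measure_ne_top μ {ω | M ω ≤ 0}
    exact (ENNReal.toReal_eq_zero_iff _).mp h0 |>.resolve_right this
  have hT' : μ {ω | M ω ≤ T}ᶜ = 0 := by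
    have : μ {ω | M ω ≤ T} = 1 := by
      have := measure_ne_top μ {ω | M ω ≤ T}
      rw [← ENNReal.ofReal_toReal this, hTcdf]; simp
    rw [measure_compl mT (measure_ne_top _ _), this, measure_univ, tsub_self]
  constructor
  · filter_upwards [measure_eq_zero_iff_ae_notMem.mp h0'] with ω hω
    simpa using lt_of_not_ge hω
  · filter_upwards [measure_eq_zero_iff_ae_notMem.mp hT'] with ω hω
    simpa using hω

lemma aux_integrable {T : ℝ} (hT : 0 < T) {M : Ω → ℝ} (hM : Measurable M)
    (h0 : (μ {ω | M ω ≤ 0}).toReal = 0) (hTcdf : (μ {ω | M ω ≤ T}).toReal = 1) :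
    Integrable M μ := by
  obtain ⟨hpos, hle⟩ := aux_ae_bounds μ hT hM h0 hTcdf
  refine Integrable.mono' (integrable_const T) hM.aestronglyMeasurable ?_
  filter_upwards [hpos, hle] with ω h1 h2
  rw [Real.norm_eq_abs, abs_le]; constructor <;> linarith

lemma aux_integral_eq {T : ℝ} (hT : 0 < T) (F : ℝ → ℝ)
    {d : ℕ} (hd : 1 ≤ d) {M : Ω → ℝ} (hM : Measurable M)
    (hcdf : ∀ t ∈ Set.Icc 0 T, (μ {ω | M ω ≤ t}).toReal = F t ^ d)
    (hF0 : F 0 = 0) (hFT : F T = 1) :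
    ∫ ω, M ω ∂μ = ∫ t in (0:ℝ)..T, (1 - F t ^ d) := by
  have h0 : (μ {ω | M ω ≤ 0}).toReal = 0 := by
    rw [hcdf 0 ⟨le_refl 0, hT.le⟩, hF0, zero_pow (by omega)]
  have hTc : (μ {ω | M ω ≤ T}).toReal = 1 := by
    rw [hcdf T ⟨hT.le, le_refl T⟩, hFT, one_pow]
  obtain ⟨hpos, hle⟩ := aux_ae_bounds μ hT hM h0 hTc
  have hint := aux_integrable μ hT hM h0 hTc
  rw [hint.integral_eq_integral_meas_lt (by filter_upwards [hpos] with ω h; exact h.le)]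
  have hTnull : μ {ω | T < M ω} = 0 := by
    have hsub : {ω | T < M ω} ⊆ {ω | M ω ≤ T}ᶜ := fun ω h => by simpa using not_le.mpr h
    refine measure_mono_null hsub ?_
    have hone : μ {ω | M ω ≤ T} = 1 := by
      have := measure_ne_top μ {ω | M ω ≤ T}
      rw [← ENNReal.ofReal_toReal this, hTc]; simp
    have mT : MeasurableSet {ω | M ω ≤ T} := hM measurableSet_Iic
    rw [measure_compl mT (measure_ne_top _ _), hone, measure_univ, tsub_self]
  have key : ∀ t ∈ Set.Ioi (0:ℝ),
      ENNReal.toReal (μ {a | t < M a}) = Set.indicator (Set.Ioc 0 T) (fun t => 1 - F t ^ d) t := by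
    intro t ht
    simp only [Set.mem_Ioi] at ht
    by_cases htT : t ≤ T
    · rw [Set.indicator_of_mem (by exact ⟨ht, htT⟩)]
      have hset : {a | t < M a} = {a | M a ≤ t}ᶜ := by ext a; simp
      have mt' : MeasurableSet {a | M a ≤ t} := hM measurableSet_Iic
      rw [hset, measure_compl mt' (measure_ne_top _ _), measure_univ]
      rw [ENNReal.toReal_sub_of_le (by exact prob_le_one) (by simp), ENNReal.toReal_one,
        hcdf t ⟨ht.le, htT⟩]
    · rw [Set.indicator_of_notMem (by simp [htT])]
      have : {a | t < M a} ⊆ {ω | T < M ω} := fun a h => lt_of_le_of_lt (not_le.mp htT).le h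
      have := measure_mono_null this hTnull
      simp [this]
  simp only [measureReal_def]
  rw [setIntegral_congr_fun measurableSet_Ioi key, setIntegral_indicator measurableSet_Ioc]
  rw [Set.inter_eq_right.mpr Set.Ioc_subset_Ioi_self, intervalIntegral.integral_of_le hT.le]

lemma blockMax_of_lt (A : ℕ → ℝ) {a b : ℕ} (h : a < b) :
    blockMax A a b = (Finset.Ioc a b).sup' (by simpa [Finset.nonempty_Ioc] using h) A := by
  rw [blockMax, dif_pos h]

lemma measurable_blockMax_comp {A : ℕ → Ω → ℝ} (hAmeas : ∀ i, Measurable (A i))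
    (a b : ℕ) : Measurable (fun ω => blockMax (fun i => A i ω) a b) := by
  by_cases h : a < b
  · have hne : (Finset.Ioc a b).Nonempty := by simpa [Finset.nonempty_Ioc] using h
    have : (fun ω => blockMax (fun i => A i ω) a b)
        = (Finset.Ioc a b).sup' hne A := by
      ext ω
      rw [blockMax_of_lt _ h, Finset.sup'_apply]
    rw [this]
    exact Finset.measurable_sup' hne (fun i _ => hAmeas i)
  · simp only [blockMax, dif_neg h]; exact measurable_const

lemma measurable_blockMax (a b : ℕ) : Measurable (fun A : ℕ → ℝ => blockMax A a b) :=
  measurable_blockMax_comp (A := fun i (A : ℕ → ℝ) => A i) (fun i => measurable_pi_apply i) a b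

lemma blockMax_cdf {A : ℕ → Ω → ℝ}
    (hAiid : iIndepFun A μ)
    {T : ℝ} {F : ℝ → ℝ}
    (hAcdf : ∀ i, ∀ t ∈ Set.Icc 0 T, (μ {ω | A i ω ≤ t}).toReal = F t)
    {a b : ℕ} (h : a < b) :
    ∀ t ∈ Set.Icc 0 T,
      (μ {ω | blockMax (fun i => A i ω) a b ≤ t}).toReal = F t ^ (b - a) := by
  intro t ht
  have hset : {ω | blockMax (fun i => A i ω) a b ≤ t}
      = ⋂ i ∈ (Finset.Ioc a b : Finset ℕ), A i ⁻¹' (Set.Iic t) := by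
    ext ω
    simp only [Set.mem_setOf_eq, blockMax_of_lt _ h, Finset.sup'_le_iff, Set.mem_iInter,
      Set.mem_preimage, Set.mem_Iic]
  rw [hset]
  rw [iIndepFun_iff_measure_inter_preimage_eq_mul.mp hAiid (Finset.Ioc a b)
    (sets := fun _ => Set.Iic t) (fun i _ => measurableSet_Iic)]
  rw [ENNReal.toReal_prod]
  have : ∀ i ∈ Finset.Ioc a b, (μ (A i ⁻¹' Set.Iic t)).toReal = F t := fun i _ => hAcdf i t ht
  rw [Finset.prod_congr rfl this, Finset.prod_const, Nat.card_Ioc]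

lemma setIntegral_indep {X : Ω → ℕ → ℝ} (hX : Measurable X) {G : Set Ω}
    (hG : MeasurableSet G) {c : ENNReal}
    (h : ∀ t : Set (ℕ → ℝ), MeasurableSet t → μ (G ∩ X ⁻¹' t) = c * μ (X ⁻¹' t))
    {φ : (ℕ → ℝ) → ℝ} (hφ : Measurable φ) :
    ∫ ω in G, φ (X ω) ∂μ = c.toReal * ∫ ω, φ (X ω) ∂μ := by
  have hmap : (μ.restrict G).map X = c • μ.map X := by
    refine Measure.ext fun t ht => ?_
    rw [Measure.map_apply hX ht, Measure.restrict_apply (hX ht), Set.inter_comm,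
      h t ht, Measure.smul_apply, smul_eq_mul, Measure.map_apply hX ht]
  calc ∫ ω in G, φ (X ω) ∂μ = ∫ a, φ a ∂((μ.restrict G).map X) := by
        rw [integral_map hX.aemeasurable hφ.aestronglyMeasurable]
    _ = ∫ a, φ a ∂(c • μ.map X) := by rw [hmap]
    _ = c.toReal * ∫ a, φ a ∂(μ.map X) := by rw [integral_smul_measure]; rfl
    _ = c.toReal * ∫ ω, φ (X ω) ∂μ := by
        rw [integral_map hX.aemeasurable hφ.aestronglyMeasurable]

lemma exists_measurable_hull_ae_eq {ι : Type*} [DecidableEq ι] (P : Finset ι) (E : ι → Set Ω)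
    (hdisj : ∀ i ∈ P, ∀ j ∈ P, i ≠ j → E i ∩ E j = ∅)
    (hcover : ∀ ω, ∃ i ∈ P, ω ∈ E i)
    (hsum : ∑ i ∈ P, μ (E i) = 1) :
    ∀ i ∈ P, ∃ H : Set Ω, MeasurableSet H ∧ E i ⊆ H ∧ μ H = μ (E i) ∧ E i =ᵐ[μ] H := by
  have hH : ∀ i, ∃ H : Set Ω, E i ⊆ H ∧ MeasurableSet H ∧ μ H = μ (E i) :=
    fun i => exists_measurable_superset μ (E i)
  choose H hHsub hHmeas hHeq using hH
  intro i hi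
  refine ⟨H i, hHmeas i, hHsub i, hHeq i, ?_⟩
  have hKsub : (E i)ᶜ ⊆ ⋃ j ∈ (P.erase i), H j := by
    intro ω hω
    obtain ⟨j, hj, hωj⟩ := hcover ω
    have hji : j ≠ i := by rintro rfl; exact hω hωj
    exact Set.mem_biUnion (Finset.mem_erase.mpr ⟨hji, hj⟩) (hHsub j hωj)
  set K := ⋃ j ∈ (P.erase i), H j with hK
  have hKmeas : MeasurableSet K := Finset.measurableSet_biUnion _ (fun j _ => hHmeas j)
  have hunion : H i ∪ K = Set.univ := by
    apply Set.eq_univ_of_univ_subset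
    intro ω _
    by_cases hω : ω ∈ E i
    · exact Or.inl (hHsub i hω)
    · exact Or.inr (hKsub hω)
  have hKle : μ K ≤ ∑ j ∈ P.erase i, μ (E j) := by
    refine le_trans (measure_biUnion_finset_le _ _) ?_
    exact Finset.sum_le_sum (fun j _ => le_of_eq (hHeq j))
  have hadd : μ (H i) + μ K ≤ 1 := by
    calc μ (H i) + μ K ≤ μ (E i) + ∑ j ∈ P.erase i, μ (E j) :=
          add_le_add (le_of_eq (hHeq i)) hKle
      _ = ∑ j ∈ P, μ (E j) := Finset.add_sum_erase P (fun j => μ (E j)) hi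
      _ = 1 := hsum
  have hinter : μ (H i ∩ K) = 0 := by
    have h1 : μ (H i ∪ K) + μ (H i ∩ K) = μ (H i) + μ K :=
      measure_union_add_inter _ hKmeas
    rw [hunion, measure_univ] at h1
    have h2 : 1 + μ (H i ∩ K) ≤ 1 + 0 := by
      rw [h1, add_zero]; exact hadd
    have := ENNReal.add_le_add_iff_left (by simp : (1:ENNReal) ≠ ⊤) |>.mp h2
    exact le_antisymm this zero_le
  have hdiffnull : μ (H i \ E i) = 0 := by
    refine measure_mono_null ?_ hinter
    intro ω hω
    exact ⟨hω.1, hKsub hω.2⟩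
  refine MeasureTheory.ae_eq_set.mpr ⟨?_, hdiffnull⟩
  rw [Set.diff_eq_empty.mpr (hHsub i), measure_empty]

end Aux

section Comb

lemma count_consec (n k a b : ℕ) (hk2 : 2 ≤ k) (ha : a ∈ Finset.Icc 1 n)
    (hb : b ∈ Finset.Icc 1 n) (hab : a < b) :
    (((Finset.Icc 1 n).powersetCard k).filter
      (fun s => a ∈ s ∧ b ∈ s ∧ ∀ i ∈ Finset.Ioo a b, i ∉ s)).card
      = Nat.choose (n - (b - a) - 1) (k - 2) := by
  simp only [Finset.mem_Icc] at ha hb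
  have hcard : ((Finset.Icc 1 n) \ (Finset.Icc a b)).card = n - (b - a) - 1 := by
    rw [Finset.card_sdiff_of_subset (by intro x hx; simp only [Finset.mem_Icc] at *; omega)]
    rw [Nat.card_Icc, Nat.card_Icc]
    omega
  rw [← hcard, ← Finset.card_powersetCard]
  apply Finset.card_bij' (fun s _ => s \ {a, b}) (fun t _ => insert a (insert b t))
  · intro s hs
    simp only [Finset.mem_filter, Finset.mem_powersetCard] at hs
    obtain ⟨⟨hsub, hcardk⟩, hax, hbx, hgap⟩ := hs
    ext x
    simp only [Finset.mem_insert, Finset.mem_sdiff, Finset.mem_singleton]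
    constructor
    · rintro (rfl | rfl | ⟨h1, h2⟩) <;> assumption
    · intro hx
      by_cases hxa : x = a
      · exact Or.inl hxa
      by_cases hxb : x = b
      · exact Or.inr (Or.inl hxb)
      · exact Or.inr (Or.inr ⟨hx, by tauto⟩)
  · intro t ht
    rw [Finset.mem_powersetCard] at ht
    obtain ⟨hsub, hcardt⟩ := ht
    have hat : a ∉ t := by
      intro h; have := hsub h; simp only [Finset.mem_sdiff, Finset.mem_Icc] at this; omega
    have hbt : b ∉ t := by
      intro h; have := hsub h; simp only [Finset.mem_sdiff, Finset.mem_Icc] at this; omega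
    ext x
    simp only [Finset.mem_sdiff, Finset.mem_insert, Finset.mem_singleton]
    constructor
    · rintro ⟨rfl | rfl | hx, h2⟩ <;> tauto
    · intro hx
      refine ⟨Or.inr (Or.inr hx), ?_⟩
      push_neg
      constructor <;> rintro rfl <;> tauto
  · intro s hs
    simp only [Finset.mem_filter, Finset.mem_powersetCard] at hs
    obtain ⟨⟨hsub, hcardk⟩, hax, hbx, hgap⟩ := hs
    rw [Finset.mem_powersetCard]
    constructor
    · intro x hx
      simp only [Finset.mem_sdiff, Finset.mem_insert, Finset.mem_singleton] at hx
      obtain ⟨hxs, hxab⟩ := hx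
      push_neg at hxab
      simp only [Finset.mem_sdiff, Finset.mem_Icc]
      have h1 := hsub hxs
      simp only [Finset.mem_Icc] at h1
      refine ⟨h1, ?_⟩
      intro hxIcc
      exact hgap x (by simp only [Finset.mem_Ioo]; omega) hxs
    · rw [Finset.card_sdiff_of_subset (by intro x hx; simp only [Finset.mem_insert, Finset.mem_singleton] at hx; rcases hx with rfl | rfl; exact hax; exact hbx)]
      rw [Finset.card_pair (by omega), hcardk]
  · intro t ht
    rw [Finset.mem_powersetCard] at ht
    obtain ⟨hsub, hcardt⟩ := ht
    have hat : a ∉ t := by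
      intro h; have := hsub h; simp only [Finset.mem_sdiff, Finset.mem_Icc] at this; omega
    have hbt : b ∉ t := by
      intro h; have := hsub h; simp only [Finset.mem_sdiff, Finset.mem_Icc] at this; omega
    simp only [Finset.mem_filter, Finset.mem_powersetCard]
    refine ⟨⟨?_, ?_⟩, ?_, ?_, ?_⟩
    · intro x hx
      simp only [Finset.mem_insert] at hx
      rcases hx with rfl | rfl | hx
      · simp only [Finset.mem_Icc]; omega
      · simp only [Finset.mem_Icc]; omega
      · exact (Finset.mem_sdiff.mp (hsub hx)).1
    · rw [Finset.card_insert_of_notMem (by simp only [Finset.mem_insert]; push_neg; exact ⟨by omega, hat⟩),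
        Finset.card_insert_of_notMem hbt, hcardt]
      omega
    · simp
    · simp
    · intro i hi
      simp only [Finset.mem_Ioo] at hi
      simp only [Finset.mem_insert]
      push_neg
      refine ⟨by omega, by omega, ?_⟩
      intro h; have := hsub h; simp only [Finset.mem_sdiff, Finset.mem_Icc] at this; omega

lemma gap_reindex (n : ℕ) (h : ℕ → ℝ) :
    ∑ a ∈ Finset.Icc 1 n, ∑ b ∈ Finset.Icc 1 n, (if a < b then h (b - a) else 0)
      = ∑ d ∈ Finset.Icc 1 n, ((n - d : ℕ) : ℝ) * h d := by
  have step1 : ∀ a ∈ Finset.Icc 1 n,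
      ∑ b ∈ Finset.Icc 1 n, (if a < b then h (b - a) else 0)
        = ∑ d ∈ Finset.Icc 1 (n - a), h d := by
    intro a ha
    simp only [Finset.mem_Icc] at ha
    rw [← Finset.sum_filter]
    have hf : (Finset.Icc 1 n).filter (fun b => a < b) = Finset.Icc (a+1) n := by
      ext x; simp only [Finset.mem_filter, Finset.mem_Icc]; omega
    rw [hf]
    refine Finset.sum_nbij' (fun b => b - a) (fun d => a + d) ?_ ?_ ?_ ?_ ?_
    · intro b hb; simp only [Finset.mem_Icc] at *; omega
    · intro d hd; simp only [Finset.mem_Icc] at *; omega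
    · intro b hb; simp only [Finset.mem_Icc] at hb; show a + (b - a) = b; omega
    · intro d hd; simp only [Finset.mem_Icc] at hd; show a + d - a = d; omega
    · intro b hb; rfl
  rw [Finset.sum_congr rfl step1]
  rw [Finset.sum_comm' (t' := Finset.Icc 1 n) (s' := fun d => Finset.Icc 1 (n - d))
    (by intro x y; simp only [Finset.mem_Icc]; omega)]
  refine Finset.sum_congr rfl fun d hd => ?_
  rw [Finset.sum_const, Nat.card_Icc, nsmul_eq_mul]
  norm_num

lemma arith_coeff (n k d : ℕ) (hk2 : 2 ≤ k) (hkn : k ≤ n) (hd : 1 ≤ d) (hdn : d ≤ n - k + 1) :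
    ((n - d : ℕ) : ℝ) * (Nat.choose (n - d - 1) (k - 2) : ℝ) / (Nat.choose n k : ℝ)
      = (k : ℝ) * ((k : ℝ) - 1) * ((Nat.factorial (n - k) : ℝ) / (Nat.factorial n : ℝ))
        * ((Nat.factorial (n - d) : ℝ) / (Nat.factorial (n - d - k + 1) : ℝ)) := by
  have h1 : k - 2 ≤ n - d - 1 := by omega
  have h2 : Nat.choose (n - d - 1) (k - 2) * Nat.factorial (k - 2) * Nat.factorial (n - d - 1 - (k - 2)) = Nat.factorial (n - d - 1) :=
    Nat.choose_mul_factorial_mul_factorial h1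
  have h3 : Nat.choose n k * Nat.factorial k * Nat.factorial (n - k) = Nat.factorial n :=
    Nat.choose_mul_factorial_mul_factorial hkn
  have h4 : (n - d) * Nat.factorial (n - d - 1) = Nat.factorial (n - d) := by
    obtain ⟨m, hm⟩ : ∃ m, n - d = m + 1 := ⟨n - d - 1, by omega⟩
    simp [hm, Nat.factorial_succ]
  have h5 : Nat.factorial k = k * (k - 1) * Nat.factorial (k - 2) := by
    obtain ⟨m, rfl⟩ : ∃ m, k = m + 2 := ⟨k - 2, by omega⟩
    show (m + 2).factorial = (m + 2) * (m + 1) * m.factorial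
    rw [Nat.factorial_succ, Nat.factorial_succ]
    ring
  have h6 : Nat.factorial (n - d - k + 1) = Nat.factorial (n - d - 1 - (k - 2)) := by
    rcases (show n - d - k + 1 = n - d - 1 - (k - 2) ∨
        (n - d - k + 1 = 1 ∧ n - d - 1 - (k - 2) = 0) by omega) with h | ⟨h1', h2'⟩
    · rw [h]
    · rw [h1', h2']; rfl
  have hc : (Nat.choose n k : ℝ) ≠ 0 := Nat.cast_ne_zero.mpr (Nat.choose_pos hkn).ne'
  have hfn : (Nat.factorial n : ℝ) ≠ 0 := Nat.cast_ne_zero.mpr (Nat.factorial_pos n).ne'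
  have hfm2 : (Nat.factorial (n - d - 1 - (k - 2)) : ℝ) ≠ 0 := Nat.cast_ne_zero.mpr (Nat.factorial_pos _).ne'
  have H2 := congrArg (Nat.cast : ℕ → ℝ) h2
  have H3 := congrArg (Nat.cast : ℕ → ℝ) h3
  have H4 := congrArg (Nat.cast : ℕ → ℝ) h4
  have H5 := congrArg (Nat.cast : ℕ → ℝ) h5
  push_cast at H2 H3 H4 H5
  have hcast : ((k - 1 : ℕ) : ℝ) = (k : ℝ) - 1 := by
    rw [Nat.cast_sub (by omega)]; norm_num
  rw [hcast] at H5
  rw [h6]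
  have key : ((n - d : ℕ) : ℝ) * (Nat.choose (n - d - 1) (k - 2) : ℝ)
      * ((Nat.factorial n : ℝ) * (Nat.factorial (n - d - 1 - (k - 2)) : ℝ))
      = ((k : ℝ) * ((k : ℝ) - 1) * (Nat.factorial (n - k) : ℝ) * (Nat.factorial (n - d) : ℝ))
        * (Nat.choose n k : ℝ) := by
    linear_combination (-((n - d : ℕ) : ℝ) * (Nat.choose (n - d - 1) (k - 2) : ℝ)
        * (Nat.factorial (n - d - 1 - (k - 2)) : ℝ)) * H3
      + (((n - d : ℕ) : ℝ) * (Nat.choose (n - d - 1) (k - 2) : ℝ)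
        * (Nat.factorial (n - d - 1 - (k - 2)) : ℝ) * (Nat.choose n k : ℝ)
        * (Nat.factorial (n - k) : ℝ)) * H5
      + ((k : ℝ) * ((k : ℝ) - 1) * (Nat.choose n k : ℝ) * (Nat.factorial (n - k) : ℝ)
        * ((n - d : ℕ) : ℝ)) * H2
      + ((k : ℝ) * ((k : ℝ) - 1) * (Nat.choose n k : ℝ) * (Nat.factorial (n - k) : ℝ)) * H4
  have hr : (k : ℝ) * ((k : ℝ) - 1) * ((Nat.factorial (n - k) : ℝ) / (Nat.factorial n : ℝ))
        * ((Nat.factorial (n - d) : ℝ) / (Nat.factorial (n - d - 1 - (k - 2)) : ℝ))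
      = ((k : ℝ) * ((k : ℝ) - 1) * (Nat.factorial (n - k) : ℝ) * (Nat.factorial (n - d) : ℝ))
        / ((Nat.factorial n : ℝ) * (Nat.factorial (n - d - 1 - (k - 2)) : ℝ)) := by
    ring
  rw [hr, div_eq_div_iff hc (by positivity)]
  linear_combination key

end Comb

/-- expected PD (minus the stem age) of the tree spanned by a uniform random
`k`-subset of the `n` tips:
`E(S_{n,k}*) = k(k-1)((n-k)!/n!) Σ_{j=1}^{n-k+1} ((n-j)!/(n-j-k+1)!) ∫₀^T (1-F(t)^j) dt`. -/
theorem expected_PD_k_of_n_sampling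
    {Ω : Type*} [MeasurableSpace Ω] (μ : Measure Ω) [IsProbabilityMeasure μ]
    (n k : ℕ) (hn : 2 ≤ n) (hk2 : 2 ≤ k) (hkn : k ≤ n)
    (T : ℝ) (hT : 0 < T)
    (F : ℝ → ℝ) (hFcont : Continuous F) (hFmono : Monotone F)
    (hF0 : F 0 = 0) (hFT : F T = 1)
    (A : ℕ → Ω → ℝ) (hAmeas : ∀ i, Measurable (A i))
    (hAiid : iIndepFun A μ)
    (hAcdf : ∀ i, ∀ t ∈ Set.Icc 0 T, (μ {ω | A i ω ≤ t}).toReal = F t)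
    (S : Ω → Finset ℕ)
    (hSrange : ∀ ω, S ω ⊆ Finset.Icc 1 n ∧ (S ω).card = k)
    (hSunif : ∀ s : Finset ℕ, s ⊆ Finset.Icc 1 n → s.card = k →
      (μ {ω | S ω = s}).toReal = 1 / (n.choose k : ℝ))
    (hindep : ∀ (s : Finset ℕ) (t : Set (ℕ → ℝ)), MeasurableSet t →
      μ ({ω | S ω = s} ∩ (fun ω i => A i ω) ⁻¹' t)
        = μ {ω | S ω = s} * μ ((fun ω i => A i ω) ⁻¹' t)) :
    ∫ ω, survPDset (fun i => A i ω) (S ω) ∂μ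
      = (k : ℝ) * ((k : ℝ) - 1) * ((Nat.factorial (n - k) : ℝ) / (Nat.factorial n : ℝ))
        * ∑ j ∈ Finset.Icc 1 (n - k + 1),
            ((Nat.factorial (n - j) : ℝ) / (Nat.factorial (n - j - k + 1) : ℝ))
              * ∫ t in (0:ℝ)..T, (1 - F t ^ j) := by
  set G : ℕ → ℝ := fun d => ∫ t in (0:ℝ)..T, (1 - F t ^ d) with hGdef
  have hXmeas : Measurable (fun ω i => A i ω : Ω → ℕ → ℝ) := measurable_pi_lambda _ hAmeas
  set P : Finset (Finset ℕ) := (Finset.Icc 1 n).powersetCard k with hPdef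
  have hcardIcc : (Finset.Icc 1 n).card = n := by rw [Nat.card_Icc]; omega
  have hcardP : P.card = n.choose k := by rw [hPdef, Finset.card_powersetCard, hcardIcc]
  have hCpos : 0 < n.choose k := Nat.choose_pos hkn
  have hCne : ((n.choose k : ℕ) : ℝ) ≠ 0 := Nat.cast_ne_zero.mpr hCpos.ne'
  set E : Finset ℕ → Set Ω := fun s => {ω | S ω = s} with hEdef
  have hmemP : ∀ s ∈ P, s ⊆ Finset.Icc 1 n ∧ s.card = k :=
    fun s hs => Finset.mem_powersetCard.mp hs
  have hμE : ∀ s ∈ P, μ (E s) = ENNReal.ofReal (1 / (n.choose k : ℝ)) := by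
    intro s hs
    obtain ⟨h1, h2⟩ := hmemP s hs
    rw [← hSunif s h1 h2, ENNReal.ofReal_toReal (measure_ne_top _ _)]
  have hμEtoReal : ∀ s ∈ P, (μ (E s)).toReal = 1 / (n.choose k : ℝ) := by
    intro s hs
    obtain ⟨h1, h2⟩ := hmemP s hs
    exact hSunif s h1 h2
  have hsum : ∑ s ∈ P, μ (E s) = 1 := by
    rw [Finset.sum_congr rfl hμE, Finset.sum_const, hcardP, nsmul_eq_mul,
      ← ENNReal.ofReal_natCast, ← ENNReal.ofReal_mul (by positivity),
      mul_one_div, div_self hCne, ENNReal.ofReal_one]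
  have hcover : ∀ ω, ∃ s ∈ P, ω ∈ E s := fun ω =>
    ⟨S ω, Finset.mem_powersetCard.mpr ⟨(hSrange ω).1, (hSrange ω).2⟩, rfl⟩
  have hdisj : ∀ s ∈ P, ∀ t ∈ P, s ≠ t → E s ∩ E t = ∅ := by
    intro s _ t _ hst
    ext ω
    simp only [hEdef, Set.mem_inter_iff, Set.mem_setOf_eq, Set.mem_empty_iff_false, iff_false]
    rintro ⟨rfl, h2⟩
    exact hst h2
  obtain hull := exists_measurable_hull_ae_eq μ P E hdisj hcover hsum
  choose H Hmeas Hsub Hμ Hae using hull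
  -- per-block integral facts
  have hblock : ∀ a b : ℕ, a < b →
      Integrable (fun ω => blockMax (fun i => A i ω) a b) μ ∧
      ∫ ω, blockMax (fun i => A i ω) a b ∂μ = G (b - a) := by
    intro a b hab
    have hcdf := blockMax_cdf μ hAiid hAcdf hab
    have hM := measurable_blockMax_comp hAmeas a b
    have h0 : (μ {ω | blockMax (fun i => A i ω) a b ≤ 0}).toReal = 0 := by
      rw [hcdf 0 ⟨le_refl 0, hT.le⟩, hF0, zero_pow (by omega)]
    have hTc : (μ {ω | blockMax (fun i => A i ω) a b ≤ T}).toReal = 1 := by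
      rw [hcdf T ⟨hT.le, le_refl T⟩, hFT, one_pow]
    exact ⟨aux_integrable μ hT hM h0 hTc,
      aux_integral_eq μ hT F (by omega) hM hcdf hF0 hFT⟩
  -- integrability and value of the per-subset integral
  have hgint : ∀ s : Finset ℕ, Integrable (fun ω => survPDset (fun i => A i ω) s) μ := by
    intro s
    unfold survPDset
    refine integrable_finset_sum s fun a _ => integrable_finset_sum s fun b _ => ?_
    by_cases hc : a < b ∧ (∀ i ∈ Finset.Ioo a b, i ∉ s)
    · simp only [if_pos hc]
      exact (hblock a b hc.1).1
    · simp only [if_neg hc]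
      exact integrable_const 0
  have hgval : ∀ s : Finset ℕ, ∫ ω, survPDset (fun i => A i ω) s ∂μ
      = ∑ a ∈ s, ∑ b ∈ s,
          (if a < b ∧ (∀ i ∈ Finset.Ioo a b, i ∉ s) then G (b - a) else 0) := by
    intro s
    unfold survPDset
    rw [integral_finset_sum s (fun a _ => integrable_finset_sum s fun b _ => by
      by_cases hc : a < b ∧ (∀ i ∈ Finset.Ioo a b, i ∉ s)
      · simp only [if_pos hc]; exact (hblock a b hc.1).1
      · simp only [if_neg hc]; exact integrable_const 0)]
    refine Finset.sum_congr rfl fun a _ => ?_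
    rw [integral_finset_sum s (fun b _ => by
      by_cases hc : a < b ∧ (∀ i ∈ Finset.Ioo a b, i ∉ s)
      · simp only [if_pos hc]; exact (hblock a b hc.1).1
      · simp only [if_neg hc]; exact integrable_const 0)]
    refine Finset.sum_congr rfl fun b _ => ?_
    by_cases hc : a < b ∧ (∀ i ∈ Finset.Ioo a b, i ∉ s)
    · simp only [if_pos hc]
      exact (hblock a b hc.1).2
    · simp only [if_neg hc]
      exact integral_zero _ _
  -- measurability of the per-subset statistic as a function of the sample path
  have hφmeas : ∀ s : Finset ℕ, Measurable (fun a : ℕ → ℝ => survPDset a s) := by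
    intro s
    unfold survPDset
    refine Finset.measurable_sum s fun a _ => Finset.measurable_sum s fun b _ => ?_
    by_cases hc : a < b ∧ (∀ i ∈ Finset.Ioo a b, i ∉ s)
    · simp only [if_pos hc]
      exact measurable_blockMax a b
    · simp only [if_neg hc]
      exact measurable_const
  -- decomposition over the value of S
  have hfun : ∀ ω, survPDset (fun i => A i ω) (S ω)
      = ∑ s ∈ P, Set.indicator (E s) (fun ω' => survPDset (fun i => A i ω') s) ω := by
    intro ω
    have hmem : S ω ∈ P := Finset.mem_powersetCard.mpr ⟨(hSrange ω).1, (hSrange ω).2⟩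
    rw [Finset.sum_eq_single_of_mem (S ω) hmem]
    · rw [Set.indicator_of_mem (by exact rfl)]
    · intro s _ hne
      have hω : ω ∉ E s := fun h => hne (Eq.symm h)
      rw [Set.indicator_of_notMem hω]
  have hindint : ∀ s ∈ P, Integrable
      (fun ω => Set.indicator (E s) (fun ω' => survPDset (fun i => A i ω') s) ω) μ := by
    intro s hs
    refine Integrable.congr (((hgint s).indicator (Hmeas s hs))) ?_
    exact (indicator_ae_eq_of_ae_eq_set (Hae s hs)).symm
  have hHinter : ∀ s, ∀ hs : s ∈ P, ∀ B : Set Ω, μ (H s hs ∩ B) = μ (E s ∩ B) := by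
    intro s hs B
    have hnull : μ (H s hs \ E s) = 0 := (MeasureTheory.ae_eq_set.mp (Hae s hs)).2
    apply le_antisymm
    · calc μ (H s hs ∩ B) ≤ μ ((E s ∩ B) ∪ (H s hs \ E s)) := by
            refine measure_mono ?_
            intro x hx
            by_cases hxE : x ∈ E s
            · exact Or.inl ⟨hxE, hx.2⟩
            · exact Or.inr ⟨hx.1, hxE⟩
        _ ≤ μ (E s ∩ B) + μ (H s hs \ E s) := measure_union_le _ _
        _ = μ (E s ∩ B) := by rw [hnull, add_zero]
    · exact measure_mono (Set.inter_subset_inter_left _ (Hsub s hs))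
  have hint2 : ∀ s, ∀ hs : s ∈ P,
      ∫ ω, Set.indicator (E s) (fun ω' => survPDset (fun i => A i ω') s) ω ∂μ
        = (1 / (n.choose k : ℝ)) * ∫ ω, survPDset (fun i => A i ω) s ∂μ := by
    intro s hs
    rw [integral_congr_ae (indicator_ae_eq_of_ae_eq_set (Hae s hs)),
      integral_indicator (Hmeas s hs)]
    have happ := setIntegral_indep μ hXmeas (Hmeas s hs) (c := μ (E s))
      (fun t ht => (hHinter s hs _).trans (hindep s t ht)) (hφmeas s)
    rw [hμEtoReal s hs] at happ
    exact happ
  have hval2 : ∀ s ∈ P, ∫ ω, survPDset (fun i => A i ω) s ∂μ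
      = ∑ a ∈ Finset.Icc 1 n, ∑ b ∈ Finset.Icc 1 n,
          (if a ∈ s ∧ b ∈ s ∧ a < b ∧ (∀ i ∈ Finset.Ioo a b, i ∉ s)
            then G (b - a) else 0) := by
    intro s hs
    obtain ⟨hsub, _⟩ := hmemP s hs
    rw [hgval s]
    have e1 : ∀ a ∈ s,
        (∑ b ∈ s, if a < b ∧ (∀ i ∈ Finset.Ioo a b, i ∉ s) then G (b - a) else 0)
          = ∑ b ∈ Finset.Icc 1 n,
              (if a ∈ s ∧ b ∈ s ∧ a < b ∧ (∀ i ∈ Finset.Ioo a b, i ∉ s)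
                then G (b - a) else 0) := by
      intro a ha
      calc (∑ b ∈ s, if a < b ∧ (∀ i ∈ Finset.Ioo a b, i ∉ s) then G (b - a) else 0)
          = ∑ b ∈ s, (if a ∈ s ∧ b ∈ s ∧ a < b ∧ (∀ i ∈ Finset.Ioo a b, i ∉ s)
              then G (b - a) else 0) :=
            Finset.sum_congr rfl (fun b hb =>
              if_congr ⟨fun h => ⟨ha, hb, h.1, h.2⟩, fun h => ⟨h.2.2.1, h.2.2.2⟩⟩ rfl rfl)
        _ = ∑ b ∈ Finset.Icc 1 n,
              (if a ∈ s ∧ b ∈ s ∧ a < b ∧ (∀ i ∈ Finset.Ioo a b, i ∉ s)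
                then G (b - a) else 0) :=
            Finset.sum_subset hsub (fun b _ hb => if_neg (fun hcon => hb hcon.2.1))
    rw [Finset.sum_congr rfl e1]
    exact Finset.sum_subset hsub
      (fun a _ ha => Finset.sum_eq_zero fun b _ => if_neg (by tauto))
  have hcount : ∀ a ∈ Finset.Icc 1 n, ∀ b ∈ Finset.Icc 1 n,
      (∑ s ∈ P, if a ∈ s ∧ b ∈ s ∧ a < b ∧ (∀ i ∈ Finset.Ioo a b, i ∉ s)
          then G (b - a) else 0)
        = if a < b then (Nat.choose (n - (b - a) - 1) (k - 2) : ℝ) * G (b - a) else 0 := by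
    intro a ha b hb
    by_cases hab : a < b
    · rw [if_pos hab]
      rw [Finset.sum_congr rfl
        (fun s _ => if_congr (show (a ∈ s ∧ b ∈ s ∧ a < b ∧ (∀ i ∈ Finset.Ioo a b, i ∉ s))
            ↔ (a ∈ s ∧ b ∈ s ∧ (∀ i ∈ Finset.Ioo a b, i ∉ s)) by tauto) rfl rfl)]
      rw [← Finset.sum_filter, Finset.sum_const, hPdef, count_consec n k a b hk2 ha hb hab,
        nsmul_eq_mul]
    · rw [if_neg hab]
      exact Finset.sum_eq_zero fun s _ => if_neg (by tauto)
  -- put everything together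
  have hmain : ∫ ω, survPDset (fun i => A i ω) (S ω) ∂μ
      = (1 / (n.choose k : ℝ)) * ∑ a ∈ Finset.Icc 1 n, ∑ b ∈ Finset.Icc 1 n,
          (if a < b then (Nat.choose (n - (b - a) - 1) (k - 2) : ℝ) * G (b - a) else 0) := by
    calc ∫ ω, survPDset (fun i => A i ω) (S ω) ∂μ
        = ∫ ω, ∑ s ∈ P, Set.indicator (E s) (fun ω' => survPDset (fun i => A i ω') s) ω ∂μ :=
          integral_congr_ae (Filter.Eventually.of_forall hfun)
      _ = ∑ s ∈ P, ∫ ω, Set.indicator (E s) (fun ω' => survPDset (fun i => A i ω') s) ω ∂μ :=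
          integral_finset_sum P hindint
      _ = ∑ s ∈ P, (1 / (n.choose k : ℝ)) * ∫ ω, survPDset (fun i => A i ω) s ∂μ :=
          Finset.sum_congr rfl fun s hs => hint2 s hs
      _ = (1 / (n.choose k : ℝ)) * ∑ s ∈ P, ∫ ω, survPDset (fun i => A i ω) s ∂μ :=
          (Finset.mul_sum _ _ _).symm
      _ = (1 / (n.choose k : ℝ)) * ∑ s ∈ P, ∑ a ∈ Finset.Icc 1 n, ∑ b ∈ Finset.Icc 1 n,
            (if a ∈ s ∧ b ∈ s ∧ a < b ∧ (∀ i ∈ Finset.Ioo a b, i ∉ s)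
              then G (b - a) else 0) := by
          rw [Finset.sum_congr rfl hval2]
      _ = (1 / (n.choose k : ℝ)) * ∑ a ∈ Finset.Icc 1 n, ∑ b ∈ Finset.Icc 1 n, ∑ s ∈ P,
            (if a ∈ s ∧ b ∈ s ∧ a < b ∧ (∀ i ∈ Finset.Ioo a b, i ∉ s)
              then G (b - a) else 0) := by
          rw [Finset.sum_comm]
          exact congrArg _ (Finset.sum_congr rfl fun a _ => Finset.sum_comm)
      _ = (1 / (n.choose k : ℝ)) * ∑ a ∈ Finset.Icc 1 n, ∑ b ∈ Finset.Icc 1 n,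
            (if a < b then (Nat.choose (n - (b - a) - 1) (k - 2) : ℝ) * G (b - a) else 0) := by
          refine congrArg _ (Finset.sum_congr rfl fun a ha => Finset.sum_congr rfl fun b hb => ?_)
          exact hcount a ha b hb
  rw [hmain]
  have hgr := gap_reindex n (fun d => (Nat.choose (n - d - 1) (k - 2) : ℝ) * G d)
  rw [hgr]
  have hss : Finset.Icc 1 (n - k + 1) ⊆ Finset.Icc 1 n := by
    intro x hx; simp only [Finset.mem_Icc] at *; omega
  have hzero : ∀ d ∈ Finset.Icc 1 n, d ∉ Finset.Icc 1 (n - k + 1) →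
      ((n - d : ℕ) : ℝ) * ((Nat.choose (n - d - 1) (k - 2) : ℝ) * G d) = 0 := by
    intro d hd hdn
    simp only [Finset.mem_Icc] at hd hdn
    by_cases hge : n ≤ d
    · rw [Nat.sub_eq_zero_of_le hge]; simp
    · rw [Nat.choose_eq_zero_of_lt (by omega)]; simp
  rw [← Finset.sum_subset hss hzero]
  rw [Finset.mul_sum, Finset.mul_sum]
  refine Finset.sum_congr rfl fun d hd => ?_
  simp only [Finset.mem_Icc] at hd
  have harith := arith_coeff n k d hk2 hkn hd.1 hd.2
  have hGd : G d = ∫ t in (0:ℝ)..T, (1 - F t ^ d) := rfl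
  linear_combination (G d) * harith
end

section
/- Let p∈(0,1] and let F be a continuous cumulative distribution function on [0,∞) with F(0)=0, F(t)<1 for all t, and ∫₀^∞(1-F(t))dt < ∞. For each T>0, set a_T := 1-F(T), let N_T be a (shifted) geometric random variable with success probability a_T, let (A_i^{(T)}) be i.i.d. with CDF F_T(t):=F(t)/F(T) on [0,T], and (R_i) i.i.d. Bernoulli(p), all independent; define S_T(1) := T + Σ_{i=1}^{N_T-1}A_i^{(T)} and S_T(p) := T·1{R_i=1 for some i∈{0,...,N_T-1}} + Σ over consecutive indices j<j' in {0,...,N_T-1} with R_j=R_{j'}=1 and R_i=0 for j<i<j' of max{A^{(T)}_{j+1},...,A^{(T)}_{j'}}. Then lim_{T→∞} E(S_T(p))/E(S_T(1)) = p·∫₀^∞ (1-F(t))/(1-(1-p)F(t)) dt / ∫₀^∞ (1-F(t)) dt. -/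
open MeasureTheory ProbabilityTheory Filter Set
open scoped ENNReal NNReal

set_option linter.unusedSectionVars false

noncomputable def survPDfull (T : ℝ) (A : ℕ → ℝ) (R : ℕ → Bool) (n : ℕ) : ℝ :=
  (if ∃ i ∈ Finset.range n, R i = true then T else 0) + survPD A R n

section Util
variable {Ω : Type*} [MeasurableSpace Ω] {μ : Measure Ω}

lemma measurable_pick {β : Type*} [MeasurableSpace β] {f : ℕ → Ω → β}
    (hf : ∀ n, Measurable (f n)) {Nf : Ω → ℕ} (hN : Measurable Nf) :
    Measurable fun ω => f (Nf ω) ω := by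
  intro s hs
  have : (fun ω => f (Nf ω) ω) ⁻¹' s = ⋃ n, (Nf ⁻¹' {n} ∩ (f n) ⁻¹' s) := by
    ext ω; simp [Set.mem_iUnion, eq_comm]
  rw [this]
  exact MeasurableSet.iUnion fun n => (hN (measurableSet_singleton n)).inter (hf n hs)

lemma measurable_blockMax_s11 {A : ℕ → Ω → ℝ} (hA : ∀ i, Measurable (A i)) (j j' : ℕ) :
    Measurable fun ω => blockMax (fun i => A i ω) j j' := by
  rcases lt_or_ge j j' with h | h
  · have hne : (Finset.Ioc j j').Nonempty := by simpa [Finset.nonempty_Ioc] using h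
    have h2 := Finset.measurable_sup' (α := ℝ) (f := A) hne (fun i _ => hA i)
    have h3 : (fun ω => blockMax (fun i => A i ω) j j')
        = (Finset.Ioc j j').sup' hne A := by
      funext ω
      rw [Finset.sup'_apply]
      simp only [blockMax, dif_pos h]
    rw [h3]; exact h2
  · have h3 : (fun ω => blockMax (fun i => A i ω) j j') = fun _ => (0:ℝ) := by
      funext ω; simp only [blockMax, dif_neg (not_lt_of_ge h)]
    rw [h3]; exact measurable_const

lemma measurable_cond (R : ℕ → Ω → Bool) (hR : ∀ i, Measurable (R i)) (j j' : ℕ) :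
    MeasurableSet {ω | R j ω = true ∧ R j' ω = true ∧
      (∀ i ∈ Finset.Ioo j j', R i ω = false)} := by
  have h1 : ∀ (k : ℕ) (b : Bool), MeasurableSet {ω | R k ω = b} :=
    fun k b => (hR k) (measurableSet_singleton b)
  have h2 : MeasurableSet {ω | ∀ i ∈ Finset.Ioo j j', R i ω = false} := by
    rw [show {ω | ∀ i ∈ Finset.Ioo j j', R i ω = false}
        = ⋂ i ∈ Finset.Ioo j j', {ω | R i ω = false} from by ext ω; simp]
    exact MeasurableSet.biInter (Finset.Ioo j j').countable_toSet fun i _ => h1 i false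
  exact (h1 j true).inter ((h1 j' true).inter h2)

lemma measurable_survPD {A : ℕ → Ω → ℝ} (hA : ∀ i, Measurable (A i))
    {R : ℕ → Ω → Bool} (hR : ∀ i, Measurable (R i)) (n : ℕ) :
    Measurable fun ω => survPD (fun i => A i ω) (fun i => R i ω) n := by
  unfold survPD
  refine Finset.measurable_sum _ fun j _ => Finset.measurable_sum _ fun j' _ => ?_
  rcases lt_or_ge j j' with h | h
  · have : (fun ω => if j < j' ∧ R j ω = true ∧ R j' ω = true ∧
        (∀ i ∈ Finset.Ioo j j', R i ω = false)
        then blockMax (fun i => A i ω) j j' else 0)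
      = fun ω => if R j ω = true ∧ R j' ω = true ∧
        (∀ i ∈ Finset.Ioo j j', R i ω = false)
        then blockMax (fun i => A i ω) j j' else 0 := by
      funext ω
      by_cases hc : R j ω = true ∧ R j' ω = true ∧ (∀ i ∈ Finset.Ioo j j', R i ω = false)
      · rw [if_pos (⟨h, hc⟩ : _ ∧ _), if_pos hc]
      · rw [if_neg (fun hh => hc hh.2), if_neg hc]
    rw [this]
    exact Measurable.ite (measurable_cond R hR j j') (measurable_blockMax_s11 hA j j')
      measurable_const
  · have : (fun ω => if j < j' ∧ R j ω = true ∧ R j' ω = true ∧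
        (∀ i ∈ Finset.Ioo j j', R i ω = false)
        then blockMax (fun i => A i ω) j j' else 0) = fun _ => (0:ℝ) := by
      funext ω; simp [not_lt_of_ge h]
    rw [this]; exact measurable_const

lemma measurable_survPDfull (T : ℝ) {A : ℕ → Ω → ℝ} (hA : ∀ i, Measurable (A i))
    {R : ℕ → Ω → Bool} (hR : ∀ i, Measurable (R i)) (n : ℕ) :
    Measurable fun ω => survPDfull T (fun i => A i ω) (fun i => R i ω) n := by
  unfold survPDfull
  refine Measurable.add ?_ (measurable_survPD hA hR n)
  refine Measurable.ite ?_ measurable_const measurable_const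
  have : {ω | ∃ i ∈ Finset.range n, R i ω = true}
      = ⋃ i ∈ Finset.range n, {ω | R i ω = true} := by ext ω; simp
  rw [this]
  exact MeasurableSet.biUnion (Finset.range n).countable_toSet
    fun i _ => (hR i) (measurableSet_singleton true)

end Util

section Dist
variable {Ω : Type*} [MeasurableSpace Ω] {μ : Measure Ω} [IsProbabilityMeasure μ]

lemma meas_eq_ofReal {s : Set Ω} {x : ℝ} (h : (μ s).toReal = x) :
    μ s = ENNReal.ofReal x := by
  rw [← h, ENNReal.ofReal_toReal (measure_ne_top μ s)]

lemma meas_N_gt {NT : Ω → ℕ} (hN : Measurable NT) {c : ℝ} (hc0 : 0 ≤ c) (hc1 : c < 1)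
    (hgeom : ∀ n : ℕ, 1 ≤ n → μ {ω | NT ω = n} = ENNReal.ofReal (c ^ (n-1) * (1-c)))
    (m : ℕ) : μ {ω | m < NT ω} = ENNReal.ofReal (c ^ m) := by
  have hdec : {ω | m < NT ω} = ⋃ k : ℕ, {ω | NT ω = m + 1 + k} := by
    ext ω
    simp only [mem_setOf_eq, mem_iUnion]
    constructor
    · intro h; exact ⟨NT ω - (m+1), by omega⟩
    · rintro ⟨k, hk⟩; omega
  have hmeas : ∀ n : ℕ, MeasurableSet {ω | NT ω = n} := fun n =>
    hN (measurableSet_singleton n)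
  have hdisj : Pairwise (Function.onFun Disjoint fun k : ℕ => {ω | NT ω = m + 1 + k}) := by
    intro i k hik
    refine Set.disjoint_left.mpr fun ω h1 h2 => hik ?_
    simp only [mem_setOf_eq] at h1 h2
    omega
  rw [hdec, measure_iUnion hdisj fun k => hmeas _]
  have hval : ∀ k : ℕ, μ {ω | NT ω = m + 1 + k} = ENNReal.ofReal (c ^ (m + k) * (1 - c)) := by
    intro k
    rw [hgeom (m+1+k) (by omega), show m+1+k-1 = m+k from by omega]
  have heq : ∀ k : ℕ, c ^ (m + k) * (1 - c) = (c ^ m * (1 - c)) * c ^ k := fun k => by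
    rw [pow_add]; ring
  have hsummable : Summable fun k : ℕ => c ^ (m + k) * (1 - c) := by
    simp_rw [heq]
    exact (summable_geometric_of_lt_one hc0 hc1).mul_left _
  have hnn : ∀ k : ℕ, 0 ≤ c ^ (m + k) * (1 - c) := fun k =>
    mul_nonneg (pow_nonneg hc0 _) (by linarith)
  calc ∑' k, μ {ω | NT ω = m + 1 + k}
      = ∑' k : ℕ, ENNReal.ofReal (c ^ (m + k) * (1 - c)) := tsum_congr hval
    _ = ENNReal.ofReal (∑' k : ℕ, c ^ (m + k) * (1 - c)) :=
        (ENNReal.ofReal_tsum_of_nonneg hnn hsummable).symm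
    _ = ENNReal.ofReal (c ^ m) := by
        congr 1
        rw [tsum_congr heq, tsum_mul_left, tsum_geometric_of_lt_one hc0 hc1]
        have h1c : (1:ℝ) - c ≠ 0 := by linarith
        field_simp

lemma meas_R_false {R : ℕ → Ω → Bool} (hR : ∀ i, Measurable (R i)) {p : ℝ}
    (hp0 : 0 ≤ p) (hRber : ∀ i, μ {ω | R i ω = true} = ENNReal.ofReal p) (i : ℕ) :
    μ {ω | R i ω = false} = ENNReal.ofReal (1 - p) := by
  have hc : {ω | R i ω = false} = {ω | R i ω = true}ᶜ := by
    ext ω; simp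
  have hms : MeasurableSet {ω | R i ω = true} := hR i (measurableSet_singleton true)
  rw [hc, measure_compl hms (measure_ne_top _ _), hRber i, measure_univ]
  rw [← ENNReal.ofReal_one, ← ENNReal.ofReal_sub _ hp0]

lemma pattern_eq_biInter {R : ℕ → Ω → Bool} {j j' : ℕ} (h : j < j') :
    {ω | R j ω = true ∧ R j' ω = true ∧ ∀ i ∈ Finset.Ioo j j', R i ω = false}
      = ⋂ i ∈ Finset.Icc j j',
          (if i = j ∨ i = j' then {ω | R i ω = true} else {ω | R i ω = false}) := by
  ext ω
  simp only [mem_setOf_eq, mem_iInter, Finset.mem_Icc, Finset.mem_Ioo]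
  constructor
  · rintro ⟨h1, h2, h3⟩ i ⟨hi1, hi2⟩
    by_cases hij : i = j ∨ i = j'
    · rw [if_pos hij]
      rcases hij with rfl | rfl
      · exact h1
      · exact h2
    · rw [if_neg hij]
      push_neg at hij
      exact h3 i ⟨by omega, by omega⟩
  · intro hh
    refine ⟨?_, ?_, fun i ⟨hi1, hi2⟩ => ?_⟩
    · have := hh j ⟨le_refl _, le_of_lt h⟩
      rwa [if_pos (Or.inl rfl)] at this
    · have := hh j' ⟨le_of_lt h, le_refl _⟩
      rwa [if_pos (Or.inr rfl)] at this
    · have := hh i ⟨by omega, by omega⟩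
      rwa [if_neg (by omega)] at this

lemma meas_pattern {R : ℕ → Ω → Bool} (hR : ∀ i, Measurable (R i))
    (hRiid : iIndepFun R μ) {p : ℝ} (hp0 : 0 ≤ p) (hp1 : p ≤ 1)
    (hRber : ∀ i, μ {ω | R i ω = true} = ENNReal.ofReal p)
    {j j' : ℕ} (h : j < j') :
    μ {ω | R j ω = true ∧ R j' ω = true ∧ ∀ i ∈ Finset.Ioo j j', R i ω = false}
      = ENNReal.ofReal (p ^ 2 * (1 - p) ^ (j' - j - 1)) := by
  rw [pattern_eq_biInter h]
  rw [hRiid.meas_biInter (S := Finset.Icc j j') ?_]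
  · have hjmem : j ∉ Finset.Ioc j j' := by simp
    have hj'mem : j' ∉ Finset.Ioo j j' := by simp
    rw [← Finset.Ioc_insert_left (le_of_lt h), Finset.prod_insert hjmem,
      ← Finset.Ioo_insert_right h, Finset.prod_insert hj'mem]
    rw [if_pos (Or.inl rfl), if_pos (Or.inr rfl), hRber j, hRber j']
    have hmid : ∀ i ∈ Finset.Ioo j j',
        (if i = j ∨ i = j' then {ω | R i ω = true} else {ω | R i ω = false}) =
          {ω | R i ω = false} := by
      intro i hi
      simp only [Finset.mem_Ioo] at hi
      rw [if_neg (by omega)]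
    rw [Finset.prod_congr rfl fun i hi => by rw [hmid i hi, meas_R_false hR hp0 hRber i]]
    rw [Finset.prod_const, Nat.card_Ioo]
    rw [← ENNReal.ofReal_pow (by linarith), ← ENNReal.ofReal_mul hp0,
      ← ENNReal.ofReal_mul hp0]
    congr 1
    ring
  · intro i _
    by_cases hij : i = j ∨ i = j'
    · rw [if_pos hij]
      exact ⟨{true}, trivial, by ext ω; simp⟩
    · rw [if_neg hij]
      exact ⟨{false}, trivial, by ext ω; simp⟩

end Dist

section Adist
variable {Ω : Type*} [MeasurableSpace Ω] {μ : Measure Ω} [IsProbabilityMeasure μ]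
  {AT : ℕ → Ω → ℝ} {F : ℝ → ℝ} {T : ℝ}

lemma A_ae_bounds (hT : 0 < T) (hFT : 0 < F T) (hF0 : F 0 = 0)
    (hA : ∀ i, Measurable (AT i))
    (hAcdf : ∀ i, ∀ t ∈ Set.Icc 0 T, (μ {ω | AT i ω ≤ t}).toReal = F t / F T) :
    ∀ᵐ ω ∂μ, ∀ i, 0 < AT i ω ∧ AT i ω ≤ T := by
  rw [ae_all_iff]
  intro i
  have h0 : μ {ω | AT i ω ≤ 0} = 0 := by
    rw [meas_eq_ofReal (hAcdf i 0 ⟨le_refl 0, le_of_lt hT⟩), hF0]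
    simp
  have hT1 : μ {ω | AT i ω ≤ T} = 1 := by
    rw [meas_eq_ofReal (hAcdf i T ⟨le_of_lt hT, le_refl T⟩), div_self (ne_of_gt hFT)]
    simp
  have h2 : μ {ω | AT i ω ≤ T}ᶜ = 0 := by
    rw [prob_compl_eq_zero_iff (show MeasurableSet {ω | AT i ω ≤ T} from hA i measurableSet_Iic)]
    exact hT1
  have hae1 : ∀ᵐ ω ∂μ, ¬ AT i ω ≤ 0 := by
    rw [ae_iff]
    simpa using h0
  have hae2 : ∀ᵐ ω ∂μ, AT i ω ≤ T := by
    rw [ae_iff]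
    simpa [Set.compl_setOf] using h2
  filter_upwards [hae1, hae2] with ω hω1 hω2
  exact ⟨not_le.mp hω1, hω2⟩

lemma meas_blockMax_gt (hA : ∀ i, Measurable (AT i))
    (hAind : iIndepFun AT μ)
    (hAcdf : ∀ i, ∀ t ∈ Set.Icc 0 T, (μ {ω | AT i ω ≤ t}).toReal = F t / F T)
    (hFmono : Monotone F) (hF0 : F 0 = 0) (hFT : 0 < F T)
    {j j' : ℕ} (h : j < j') {t : ℝ} (ht : t ∈ Set.Icc 0 T) :
    μ {ω | t < blockMax (fun i => AT i ω) j j'}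
      = ENNReal.ofReal (1 - (F t / F T) ^ (j' - j)) := by
  have hne : (Finset.Ioc j j').Nonempty := by simpa [Finset.nonempty_Ioc] using h
  have hset : {ω | t < blockMax (fun i => AT i ω) j j'}
      = (⋂ i ∈ Finset.Ioc j j', {ω | AT i ω ≤ t})ᶜ := by
    ext ω
    simp only [mem_setOf_eq, mem_compl_iff, mem_iInter, not_forall, not_le, blockMax,
      dif_pos h]
    rw [← not_le, Finset.sup'_le_iff]
    push_neg
    simp
  have hmeasI : MeasurableSet (⋂ i ∈ Finset.Ioc j j', {ω | AT i ω ≤ t}) :=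
    MeasurableSet.biInter (Finset.Ioc j j').countable_toSet
      fun i _ => (hA i) measurableSet_Iic
  have hprod : μ (⋂ i ∈ Finset.Ioc j j', {ω | AT i ω ≤ t})
      = ENNReal.ofReal ((F t / F T) ^ (j' - j)) := by
    rw [hAind.meas_biInter (S := Finset.Ioc j j') (s := fun i => {ω | AT i ω ≤ t})
      (fun i _ => ⟨Set.Iic t, measurableSet_Iic, rfl⟩)]
    rw [Finset.prod_congr rfl fun i _ => meas_eq_ofReal (hAcdf i t ht)]
    rw [Finset.prod_const, Nat.card_Ioc]
    rw [← ENNReal.ofReal_pow (div_nonneg (by rw [← hF0]; exact hFmono ht.1) (le_of_lt hFT))]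
  rw [hset, measure_compl hmeasI (measure_ne_top _ _), hprod, measure_univ,
    ← ENNReal.ofReal_one,
    ← ENNReal.ofReal_sub _ (pow_nonneg (div_nonneg (by rw [← hF0]; exact hFmono ht.1)
      (le_of_lt hFT)) _)]

lemma meas_blockMax_gt_large (hbd : ∀ᵐ ω ∂μ, ∀ i, 0 < AT i ω ∧ AT i ω ≤ T)
    {j j' : ℕ} (h : j < j') {t : ℝ} (ht : T ≤ t) :
    μ {ω | t < blockMax (fun i => AT i ω) j j'} = 0 := by
  rw [measure_eq_zero_iff_ae_notMem]
  filter_upwards [hbd] with ω hω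
  simp only [mem_setOf_eq, not_lt, blockMax, dif_pos h]
  refine le_trans (Finset.sup'_le _ _ fun i _ => (hω i).2) ht

lemma lintegral_blockMax (hT : 0 < T) (hA : ∀ i, Measurable (AT i))
    (hAind : iIndepFun AT μ)
    (hAcdf : ∀ i, ∀ t ∈ Set.Icc 0 T, (μ {ω | AT i ω ≤ t}).toReal = F t / F T)
    (hFmono : Monotone F) (hF0 : F 0 = 0) (hFT : 0 < F T) (hFcont : Continuous F)
    (hbd : ∀ᵐ ω ∂μ, ∀ i, 0 < AT i ω ∧ AT i ω ≤ T)
    {j j' : ℕ} (h : j < j') :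
    ∫⁻ ω, ENNReal.ofReal (blockMax (fun i => AT i ω) j j') ∂μ
      = ENNReal.ofReal (∫ t in Set.Ioc 0 T, (1 - (F t / F T) ^ (j' - j))) := by
  have hnn : 0 ≤ᵐ[μ] fun ω => blockMax (fun i => AT i ω) j j' := by
    filter_upwards [hbd] with ω hω
    have hj' : j' ∈ Finset.Ioc j j' := by simp [h]
    simp only [Pi.zero_apply, blockMax, dif_pos h]
    exact le_trans (le_of_lt (hω j').1) (Finset.le_sup' (f := fun i => AT i ω) hj')
  rw [lintegral_eq_lintegral_meas_lt μ hnn (measurable_blockMax_s11 hA j j').aemeasurable]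
  have hsplit : Set.Ioi (0:ℝ) = Set.Ioc 0 T ∪ Set.Ioi T :=
    (Set.Ioc_union_Ioi_eq_Ioi (le_of_lt hT)).symm
  rw [hsplit, lintegral_union measurableSet_Ioi (Set.Ioc_disjoint_Ioi (le_refl T))]
  have hz : ∫⁻ t in Set.Ioi T, μ {a | t < blockMax (fun i => AT i a) j j'} = 0 := by
    rw [setLIntegral_congr_fun measurableSet_Ioi
      (fun t ht =>
        meas_blockMax_gt_large hbd h (le_of_lt ht))]
    simp
  rw [hz, add_zero]
  rw [setLIntegral_congr_fun measurableSet_Ioc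
    (fun t ht =>
      meas_blockMax_gt hA hAind hAcdf hFmono hF0 hFT h ⟨le_of_lt ht.1, ht.2⟩)]
  rw [← ofReal_integral_eq_lintegral_ofReal]
  · exact (continuous_const.sub ((hFcont.div_const _).pow _)).integrableOn_Ioc
  · refine (ae_restrict_iff' measurableSet_Ioc).mpr (Filter.Eventually.of_forall fun t ht => ?_)
    have h0 : 0 ≤ F t / F T := div_nonneg (by rw [← hF0]; exact hFmono (le_of_lt ht.1))
      (le_of_lt hFT)
    have h1 : F t / F T ≤ 1 := div_le_one_of_le₀ (hFmono ht.2) (le_of_lt hFT)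
    simp only [Pi.zero_apply]
    nlinarith [pow_le_one₀ h0 h1 (n := j' - j)]

end Adist

section Joint
variable {Ω : Type*} [MeasurableSpace Ω] {μ : Measure Ω} [IsProbabilityMeasure μ]
  {NT : Ω → ℕ} {AT : ℕ → Ω → ℝ} {R : ℕ → Ω → Bool}

lemma lintegral_indicator_mul (hN : Measurable NT) (hA : ∀ i, Measurable (AT i))
    (hR : ∀ i, Measurable (R i))
    (hjoint : ∀ (s : Set ℕ) (t : Set (ℕ → ℝ)) (u : Set (ℕ → Bool)),
      MeasurableSet s → MeasurableSet t → MeasurableSet u →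
      μ (NT ⁻¹' s ∩ (fun ω i => AT i ω) ⁻¹' t ∩ (fun ω i => R i ω) ⁻¹' u)
        = μ (NT ⁻¹' s) * μ ((fun ω i => AT i ω) ⁻¹' t) * μ ((fun ω i => R i ω) ⁻¹' u))
    {s : Set ℕ} (hs : MeasurableSet s) {u : Set (ℕ → Bool)} (hu : MeasurableSet u)
    {g : (ℕ → ℝ) → ℝ} (hg : Measurable g)
    (hg0 : 0 ≤ᵐ[μ] fun ω => g (fun i => AT i ω)) :
    ∫⁻ ω in NT ⁻¹' s ∩ (fun ω i => R i ω) ⁻¹' u, ENNReal.ofReal (g fun i => AT i ω) ∂μ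
      = μ (NT ⁻¹' s) * μ ((fun ω i => R i ω) ⁻¹' u)
        * ∫⁻ ω, ENNReal.ofReal (g fun i => AT i ω) ∂μ := by
  have hAvec : Measurable (fun ω i => AT i ω) := measurable_pi_lambda _ hA
  have hRvec : Measurable (fun ω i => R i ω) := measurable_pi_lambda _ hR
  have hgA : Measurable fun ω => g (fun i => AT i ω) := hg.comp hAvec
  have hconst_ne : μ (NT ⁻¹' s) * μ ((fun ω i => R i ω) ⁻¹' u) ≠ ⊤ :=
    ENNReal.mul_ne_top (measure_ne_top _ _) (measure_ne_top _ _)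
  calc ∫⁻ ω in NT ⁻¹' s ∩ (fun ω i => R i ω) ⁻¹' u, ENNReal.ofReal (g fun i => AT i ω) ∂μ
      = ∫⁻ t in Set.Ioi 0,
          (μ.restrict (NT ⁻¹' s ∩ (fun ω i => R i ω) ⁻¹' u)) {a | t < g fun i => AT i a} := by
        exact lintegral_eq_lintegral_meas_lt _ (ae_restrict_of_ae hg0) hgA.aemeasurable
    _ = ∫⁻ t in Set.Ioi 0,
          μ (NT ⁻¹' s) * μ ((fun ω i => R i ω) ⁻¹' u)
            * μ {a | t < g fun i => AT i a} := by
        refine setLIntegral_congr_fun measurableSet_Ioi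
          (fun t _ => ?_)
        rw [Measure.restrict_apply
          (show MeasurableSet {a | t < g fun i => AT i a} from hgA measurableSet_Ioi)]
        have hre : {a | t < g fun i => AT i a} ∩ (NT ⁻¹' s ∩ (fun ω i => R i ω) ⁻¹' u)
            = NT ⁻¹' s ∩ (fun ω i => AT i ω) ⁻¹' {x | t < g x} ∩ (fun ω i => R i ω) ⁻¹' u := by
          ext ω; simp only [mem_inter_iff, mem_setOf_eq, mem_preimage]; tauto
        rw [hre, hjoint s {x | t < g x} u hs (hg measurableSet_Ioi) hu]
        exact mul_right_comm _ _ _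
    _ = μ (NT ⁻¹' s) * μ ((fun ω i => R i ω) ⁻¹' u)
          * ∫⁻ t in Set.Ioi 0, μ {a | t < g fun i => AT i a} :=
        lintegral_const_mul' _ _ hconst_ne
    _ = μ (NT ⁻¹' s) * μ ((fun ω i => R i ω) ⁻¹' u)
          * ∫⁻ ω, ENNReal.ofReal (g fun i => AT i ω) ∂μ := by
        rw [← lintegral_eq_lintegral_meas_lt μ hg0 hgA.aemeasurable]

lemma lintegral_exists_term (hN : Measurable NT) (hR : ∀ i, Measurable (R i))
    (hRiid : iIndepFun R μ)
    {p : ℝ} (hp0 : 0 < p) (hp1 : p ≤ 1)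
    (hRber : ∀ i, μ {ω | R i ω = true} = ENNReal.ofReal p)
    {c : ℝ} (hc0 : 0 ≤ c) (hc1 : c < 1)
    (hgeom : ∀ n : ℕ, 1 ≤ n → μ {ω | NT ω = n} = ENNReal.ofReal (c ^ (n-1) * (1-c)))
    (hjoint : ∀ (s : Set ℕ) (t : Set (ℕ → ℝ)) (u : Set (ℕ → Bool)),
      MeasurableSet s → MeasurableSet t → MeasurableSet u →
      μ (NT ⁻¹' s ∩ (fun ω i => AT i ω) ⁻¹' t ∩ (fun ω i => R i ω) ⁻¹' u)
        = μ (NT ⁻¹' s) * μ ((fun ω i => AT i ω) ⁻¹' t) * μ ((fun ω i => R i ω) ⁻¹' u))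
    {T : ℝ} (hT : 0 ≤ T) :
    ∫⁻ ω, ENNReal.ofReal (if ∃ i ∈ Finset.range (NT ω), R i ω = true then T else 0) ∂μ
      = ENNReal.ofReal (T * (p / (1 - (1-p)*c))) := by
  have hRvec : Measurable (fun ω i => R i ω) := measurable_pi_lambda _ hR
  set U : ℕ → Set (ℕ → Bool) := fun n => {g | ∃ i ∈ Finset.range n, g i = true} with hU
  have hUmeas : ∀ n, MeasurableSet (U n) := by
    intro n
    have : U n = ⋃ i ∈ Finset.range n, (fun g : ℕ → Bool => g i) ⁻¹' {true} := by
      ext g; simp [hU]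
    rw [this]
    exact MeasurableSet.biUnion (Finset.range n).countable_toSet
      fun i _ => (measurable_pi_apply i) (measurableSet_singleton true)
  set E : ℕ → Set Ω := fun n => NT ⁻¹' {n} ∩ (fun ω i => R i ω) ⁻¹' (U n) with hE
  have hEmeas : ∀ n, MeasurableSet (E n) := fun n =>
    (hN (measurableSet_singleton n)).inter (hRvec (hUmeas n))
  have hEU : {ω | ∃ i ∈ Finset.range (NT ω), R i ω = true} = ⋃ n, E n := by
    ext ω
    simp only [mem_setOf_eq, mem_iUnion, hE, mem_inter_iff, mem_preimage,
      mem_singleton_iff, hU]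
    constructor
    · intro hh; exact ⟨NT ω, rfl, hh⟩
    · rintro ⟨n, rfl, hh⟩; exact hh
  have hind : (fun ω => ENNReal.ofReal (if ∃ i ∈ Finset.range (NT ω), R i ω = true then T else 0))
      = Set.indicator {ω | ∃ i ∈ Finset.range (NT ω), R i ω = true} (fun _ => ENNReal.ofReal T) := by
    funext ω
    rw [Set.indicator_apply]
    by_cases hc : ω ∈ {ω | ∃ i ∈ Finset.range (NT ω), R i ω = true}
    · rw [if_pos hc, if_pos (show ∃ i ∈ Finset.range (NT ω), R i ω = true from hc)]
    · rw [if_neg hc, if_neg (show ¬ ∃ i ∈ Finset.range (NT ω), R i ω = true from hc),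
        ENNReal.ofReal_zero]
  have hEsetmeas : MeasurableSet {ω | ∃ i ∈ Finset.range (NT ω), R i ω = true} := by
    rw [hEU]; exact MeasurableSet.iUnion hEmeas
  rw [hind, lintegral_indicator_const hEsetmeas]
  have hdisj : Pairwise (Function.onFun Disjoint E) := by
    intro i k hik
    refine Set.disjoint_left.mpr fun ω h1 h2 => hik ?_
    have e1 := h1.1; have e2 := h2.1
    simp only [mem_preimage, mem_singleton_iff] at e1 e2
    rw [← e1, ← e2]
  have hmuE : ∀ n : ℕ, μ (E n)
      = ENNReal.ofReal (if n = 0 then 0 else c ^ (n-1) * (1-c) * (1 - (1-p)^n)) := by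
    intro n
    rcases Nat.eq_zero_or_pos n with rfl | hn
    · have : E 0 = ∅ := by
        ext ω; simp [hE, hU]
      rw [this]; simp
    · have hsplit : E n = NT ⁻¹' {n} ∩ (fun ω i => AT i ω) ⁻¹' Set.univ
          ∩ (fun ω i => R i ω) ⁻¹' (U n) := by
        rw [hE]; simp [Set.inter_assoc]
      rw [hsplit, hjoint {n} Set.univ (U n) (measurableSet_singleton n)
        MeasurableSet.univ (hUmeas n)]
      rw [Set.preimage_univ, measure_univ, mul_one]
      have hNn : μ (NT ⁻¹' {n}) = ENNReal.ofReal (c ^ (n-1) * (1-c)) := hgeom n hn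
      have hcompl : ((fun ω i => R i ω) ⁻¹' (U n))ᶜ = ⋂ i ∈ Finset.range n, {ω | R i ω = false} := by
        ext ω; simp [hU]
      have hRUcompl : μ (((fun ω i => R i ω) ⁻¹' (U n))ᶜ) = ENNReal.ofReal ((1-p)^n) := by
        rw [hcompl, hRiid.meas_biInter (S := Finset.range n) (s := fun i => {ω | R i ω = false})
          (fun i _ => ⟨{false}, trivial, by ext ω; simp⟩)]
        rw [Finset.prod_congr rfl fun i _ => meas_R_false hR (le_of_lt hp0) hRber i,
          Finset.prod_const, Finset.card_range, ← ENNReal.ofReal_pow (by linarith)]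
      have hRU : μ ((fun ω i => R i ω) ⁻¹' (U n)) = ENNReal.ofReal (1 - (1-p)^n) := by
        have := measure_compl (hRvec (hUmeas n)) (measure_ne_top μ _)
        rw [hRUcompl, measure_univ] at this
        rw [← compl_compl ((fun ω i => R i ω) ⁻¹' (U n)), measure_compl (hRvec (hUmeas n)).compl
          (measure_ne_top μ _), hRUcompl, measure_univ, ← ENNReal.ofReal_one,
          ← ENNReal.ofReal_sub _ (pow_nonneg (by linarith) n)]
      rw [hNn, hRU, if_neg (by omega), ← ENNReal.ofReal_mul
        (mul_nonneg (pow_nonneg hc0 _) (by linarith))]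
  have hcp : 0 ≤ c * (1 - p) := mul_nonneg hc0 (by linarith)
  have hcp1 : c * (1 - p) < 1 := by nlinarith
  have hsum1 : Summable fun k : ℕ => (1-c) * c ^ k :=
    (summable_geometric_of_lt_one hc0 hc1).mul_left _
  have hsum2 : Summable fun k : ℕ => ((1-c) * (1-p)) * (c * (1-p)) ^ k :=
    (summable_geometric_of_lt_one hcp hcp1).mul_left _
  have hr_eq : ∀ k : ℕ, (if k + 1 = 0 then (0:ℝ) else c ^ (k+1-1) * (1-c) * (1 - (1-p)^(k+1)))
      = (1-c) * c ^ k - ((1-c) * (1-p)) * (c * (1-p)) ^ k := by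
    intro k
    rw [if_neg (by omega)]
    simp only [Nat.add_sub_cancel, mul_pow, pow_succ]
    ring
  have hrsummable : Summable fun n : ℕ =>
      (if n = 0 then (0:ℝ) else c ^ (n-1) * (1-c) * (1 - (1-p)^n)) := by
    rw [← summable_nat_add_iff 1]
    simp only [hr_eq]
    exact hsum1.sub hsum2
  have hrnn : ∀ n : ℕ, 0 ≤ (if n = 0 then (0:ℝ) else c ^ (n-1) * (1-c) * (1 - (1-p)^n)) := by
    intro n
    rcases Nat.eq_zero_or_pos n with rfl | hn
    · simp
    · rw [if_neg (by omega)]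
      have h1p : (0:ℝ) ≤ 1 - p := by linarith
      have h2 : (1-p)^n ≤ 1 := pow_le_one₀ h1p (by linarith)
      have h3 := pow_nonneg hc0 (n-1)
      exact mul_nonneg (mul_nonneg h3 (by linarith)) (by linarith)
  have hD : (0:ℝ) < 1 - (1-p)*c := by nlinarith
  have htsum : (∑' n : ℕ, (if n = 0 then (0:ℝ) else c ^ (n-1) * (1-c) * (1 - (1-p)^n)))
      = p / (1 - (1-p)*c) := by
    rw [Summable.tsum_eq_zero_add hrsummable]
    simp only [hr_eq, if_pos rfl, ↓reduceIte]
    rw [Summable.tsum_sub hsum1 hsum2, tsum_mul_left, tsum_mul_left,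
      tsum_geometric_of_lt_one hc0 hc1, tsum_geometric_of_lt_one hcp hcp1]
    have h1c : (1:ℝ) - c ≠ 0 := by linarith
    have h2 : (1:ℝ) - c * (1-p) ≠ 0 := by nlinarith
    field_simp
    ring
  rw [hEU, measure_iUnion hdisj hEmeas]
  calc ENNReal.ofReal T * ∑' n, μ (E n)
      = ENNReal.ofReal T * ENNReal.ofReal (∑' n : ℕ,
          (if n = 0 then (0:ℝ) else c ^ (n-1) * (1-c) * (1 - (1-p)^n))) := by
        rw [tsum_congr hmuE, ← ENNReal.ofReal_tsum_of_nonneg hrnn hrsummable]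
    _ = ENNReal.ofReal (T * (p / (1 - (1-p)*c))) := by
        rw [htsum, ← ENNReal.ofReal_mul hT]

end Joint

section Series

lemma series_eq_integral {F : ℝ → ℝ} {T p : ℝ} (hT : 0 < T) (hp0 : 0 < p) (hp1 : p ≤ 1)
    (hFmono : Monotone F) (hF0 : F 0 = 0) (hFT : 0 < F T) (hFT1 : F T < 1)
    (hFcont : Continuous F) :
    ∑' l : ℕ, ((F T)^(1+l) * (p^2*(1-p)^l) * ∫ t in Set.Ioc 0 T, (1 - (F t / F T)^(l+1)))
      = ∫ t in Set.Ioc 0 T,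
          p^2 * (F T - F t) / ((1-(1-p)*F T) * (1 - (1-p)*F t)) := by
  set c := F T with hc
  have hc0 : 0 ≤ c := le_of_lt hFT
  have hcne : c ≠ 0 := ne_of_gt hFT
  have hFnn : ∀ t ∈ Set.Ioc (0:ℝ) T, 0 ≤ F t := fun t ht => by
    rw [← hF0]; exact hFmono (le_of_lt ht.1)
  have hFle : ∀ t ∈ Set.Ioc (0:ℝ) T, F t ≤ c := fun t ht => hFmono ht.2
  have hcp0 : 0 ≤ c * (1-p) := mul_nonneg hc0 (by linarith)
  have hcp1 : c * (1-p) < 1 := by nlinarith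
  set f : ℕ → ℝ → ℝ := fun l t => c^(1+l) * (p^2*(1-p)^l) * (1 - (F t / c)^(l+1)) with hf
  have hfmeas : ∀ l, AEStronglyMeasurable (f l)
      ((volume : Measure ℝ).restrict (Set.Ioc 0 T)) := by
    intro l
    exact (continuous_const.mul
      (continuous_const.sub ((hFcont.div_const _).pow _))).aestronglyMeasurable
  have hfbound : ∀ l, ∀ t ∈ Set.Ioc (0:ℝ) T, |f l t| ≤ (c*p^2) * (c*(1-p))^l := by
    intro l t ht
    have h0 : 0 ≤ F t / c := div_nonneg (hFnn t ht) hc0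
    have h1 : F t / c ≤ 1 := div_le_one_of_le₀ (hFle t ht) hc0
    have h2 : (F t / c)^(l+1) ≤ 1 := pow_le_one₀ h0 h1
    have h3 : 0 ≤ (F t / c)^(l+1) := pow_nonneg h0 _
    have e1 : (0:ℝ) ≤ c^(1+l) := pow_nonneg hc0 _
    have e2 : (0:ℝ) ≤ p^2*(1-p)^l := mul_nonneg (sq_nonneg p) (pow_nonneg (by linarith) _)
    have e3 : (0:ℝ) ≤ 1 - (F t / c)^(l+1) := by linarith
    rw [abs_of_nonneg (mul_nonneg (mul_nonneg e1 e2) e3)]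
    calc c^(1+l) * (p^2*(1-p)^l) * (1 - (F t / c)^(l+1))
        ≤ c^(1+l) * (p^2*(1-p)^l) * 1 := by
          refine mul_le_mul_of_nonneg_left (by linarith) (mul_nonneg e1 e2)
      _ = (c*p^2) * (c*(1-p))^l := by rw [mul_pow, pow_add]; ring
  have hfkey : ∀ l : ℕ, ∀ t ∈ Set.Ioc (0:ℝ) T,
      f l t = (c*p^2)*(c*(1-p))^l - (p^2*(F t))*((1-p)*(F t))^l := by
    intro l t ht
    rw [hf]
    simp only
    rw [div_pow, mul_pow, mul_pow]
    field_simp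
    ring
  have hsum1 : Summable fun l : ℕ => (c*p^2) * (c*(1-p))^l :=
    (summable_geometric_of_lt_one hcp0 hcp1).mul_left _
  have hsum2t : ∀ t ∈ Set.Ioc (0:ℝ) T, Summable fun l : ℕ => (p^2*(F t))*((1-p)*(F t))^l := by
    intro t ht
    refine Summable.mul_left _ (summable_geometric_of_lt_one
      (mul_nonneg (by linarith) (hFnn t ht)) ?_)
    have := hFle t ht
    nlinarith
  -- rewrite each β_l as an integral
  have hbeta : ∀ l : ℕ, (c^(1+l) * (p^2*(1-p)^l) * ∫ t in Set.Ioc 0 T, (1 - (F t / c)^(l+1)))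
      = ∫ t in Set.Ioc 0 T, f l t := fun l => (integral_const_mul _ _).symm
  rw [tsum_congr hbeta]
  have hlint : ∀ l, ∫⁻ t in Set.Ioc (0:ℝ) T, ‖f l t‖ₑ ∂volume
      ≤ ENNReal.ofReal ((c*p^2) * (c*(1-p))^l) * ENNReal.ofReal T := by
    intro l
    have : ∫⁻ t in Set.Ioc (0:ℝ) T, ‖f l t‖ₑ ∂volume
        ≤ ∫⁻ _ in Set.Ioc (0:ℝ) T, ENNReal.ofReal ((c*p^2) * (c*(1-p))^l) ∂volume := by
      refine setLIntegral_mono' measurableSet_Ioc fun t ht => ?_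
      rw [← ofReal_norm]
      exact ENNReal.ofReal_le_ofReal (le_trans (le_abs_self _)
        (by simpa [abs_abs] using hfbound l t ht))
    refine le_trans this ?_
    rw [setLIntegral_const, Real.volume_Ioc]
    simp [ENNReal.ofReal_sub, hT.le]
  have hlsum : (∑' l : ℕ, ∫⁻ t in Set.Ioc (0:ℝ) T, ‖f l t‖ₑ ∂volume) ≠ ⊤ := by
    refine ne_top_of_le_ne_top ?_ (ENNReal.tsum_le_tsum hlint)
    rw [ENNReal.tsum_mul_right]
    refine ENNReal.mul_ne_top ?_ ENNReal.ofReal_ne_top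
    rw [← ENNReal.ofReal_tsum_of_nonneg (fun l => by positivity) hsum1]
    exact ENNReal.ofReal_ne_top
  rw [← MeasureTheory.integral_tsum hfmeas hlsum]
  refine setIntegral_congr_fun measurableSet_Ioc fun t ht => ?_
  have hFt0 := hFnn t ht
  have hFtc := hFle t ht
  have hr2_0 : 0 ≤ (1-p) * F t := mul_nonneg (by linarith) hFt0
  have hr2_1 : (1-p) * F t < 1 := by nlinarith
  have hsum2 := hsum2t t ht
  calc ∑' l : ℕ, f l t
      = ∑' l : ℕ, ((c*p^2)*(c*(1-p))^l - (p^2*(F t))*((1-p)*(F t))^l) :=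
        tsum_congr fun l => hfkey l t ht
    _ = (c*p^2) * (1 - c*(1-p))⁻¹ - (p^2*(F t)) * (1 - (1-p)*(F t))⁻¹ := by
        rw [Summable.tsum_sub hsum1 hsum2, tsum_mul_left, tsum_mul_left,
          tsum_geometric_of_lt_one hcp0 hcp1, tsum_geometric_of_lt_one hr2_0 hr2_1]
    _ = p^2 * (c - F t) / ((1-(1-p)*c) * (1 - (1-p)*(F t))) := by
        have hne1 : (1:ℝ) - c*(1-p) ≠ 0 := by nlinarith
        have hne2 : (1:ℝ) - (1-p)*(F t) ≠ 0 := by nlinarith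
        have hne1' : (1:ℝ) - (1-p)*c ≠ 0 := by rw [mul_comm] at hne1; exact hne1
        field_simp
        ring

end Series

section PD
variable {Ω : Type*} [MeasurableSpace Ω] {μ : Measure Ω} [IsProbabilityMeasure μ]
  {NT : Ω → ℕ} {AT : ℕ → Ω → ℝ} {R : ℕ → Ω → Bool} {F : ℝ → ℝ} {T p : ℝ}

lemma lintegral_survPD
    (hT : 0 < T) (hN : Measurable NT) (hA : ∀ i, Measurable (AT i))
    (hR : ∀ i, Measurable (R i))
    (hRiid : iIndepFun R μ)
    (hp0 : 0 < p) (hp1 : p ≤ 1)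
    (hRber : ∀ i, μ {ω | R i ω = true} = ENNReal.ofReal p)
    (hFmono : Monotone F) (hF0 : F 0 = 0) (hFT : 0 < F T) (hFT1 : F T < 1)
    (hFcont : Continuous F)
    (hAind : iIndepFun AT μ)
    (hAcdf : ∀ i, ∀ t ∈ Set.Icc 0 T, (μ {ω | AT i ω ≤ t}).toReal = F t / F T)
    (hgeom : ∀ n : ℕ, 1 ≤ n → μ {ω | NT ω = n} = ENNReal.ofReal ((F T) ^ (n-1) * (1-F T)))
    (hjoint : ∀ (s : Set ℕ) (t : Set (ℕ → ℝ)) (u : Set (ℕ → Bool)),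
      MeasurableSet s → MeasurableSet t → MeasurableSet u →
      μ (NT ⁻¹' s ∩ (fun ω i => AT i ω) ⁻¹' t ∩ (fun ω i => R i ω) ⁻¹' u)
        = μ (NT ⁻¹' s) * μ ((fun ω i => AT i ω) ⁻¹' t) * μ ((fun ω i => R i ω) ⁻¹' u)) :
    ∫⁻ ω, ENNReal.ofReal (survPD (fun i => AT i ω) (fun i => R i ω) (NT ω)) ∂μ
      = ENNReal.ofReal ((1 - F T)⁻¹ *
          ∫ t in Set.Ioc 0 T,
            p^2 * (F T - F t) / ((1-(1-p)*F T) * (1 - (1-p)*F t))) := by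
  have hbd := A_ae_bounds hT hFT hF0 hA hAcdf
  set c := F T with hcdef
  have hc0 : 0 ≤ c := le_of_lt hFT
  have hc1 : c < 1 := hFT1
  -- the events
  set C : ℕ × ℕ → Set Ω := fun q =>
    {ω | q.2 < NT ω} ∩ {ω | R q.1 ω = true ∧ R q.2 ω = true ∧
      ∀ i ∈ Finset.Ioo q.1 q.2, R i ω = false} with hC
  have hCmeas : ∀ q, MeasurableSet (C q) := by
    rintro ⟨j, j'⟩
    refine MeasurableSet.inter ?_ (measurable_cond R hR j j')
    exact hN (show MeasurableSet {n : ℕ | j' < n} from trivial)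
  set g : ℕ × ℕ → Ω → ℝ≥0∞ := fun q =>
    if q.1 < q.2 then
      (C q).indicator (fun ω => ENNReal.ofReal (blockMax (fun i => AT i ω) q.1 q.2))
    else 0 with hg
  have hgmeas : ∀ q, Measurable (g q) := by
    rintro ⟨j, j'⟩
    rw [hg]
    dsimp only
    split
    · exact Measurable.indicator ((measurable_blockMax_s11 hA j j').ennreal_ofReal) (hCmeas _)
    · exact measurable_const
  -- pointwise identity
  have hpt : ∀ ω, (∀ i, 0 < AT i ω ∧ AT i ω ≤ T) →
      ENNReal.ofReal (survPD (fun i => AT i ω) (fun i => R i ω) (NT ω))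
        = ∑' q : ℕ × ℕ, g q ω := by
    intro ω hω
    set n := NT ω with hn
    have hzero : ∀ q : ℕ × ℕ, q ∉ Finset.range n ×ˢ Finset.range n → g q ω = 0 := by
      rintro ⟨j, j'⟩ hq
      rw [hg]
      simp only
      by_cases hjj : j < j'
      · rw [if_pos hjj]
        refine Set.indicator_of_notMem ?_ _
        intro hmem
        have h2 : j' < n := hmem.1
        exact hq (by simp [Finset.mem_product]; omega)
      · rw [if_neg hjj]; rfl
    rw [tsum_eq_sum hzero, Finset.sum_product]
    unfold survPD
    rw [ENNReal.ofReal_sum_of_nonneg]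
    · refine Finset.sum_congr rfl fun j hj => ?_
      rw [ENNReal.ofReal_sum_of_nonneg]
      · refine Finset.sum_congr rfl fun j' hj' => ?_
        simp only [Finset.mem_range] at hj hj'
        by_cases hcond : j < j' ∧ R j ω = true ∧ R j' ω = true ∧
            (∀ i ∈ Finset.Ioo j j', R i ω = false)
        · rw [if_pos hcond, hg]
          simp only
          rw [if_pos hcond.1, Set.indicator_of_mem]
          exact ⟨hj', hcond.2⟩
        · rw [if_neg hcond, hg]
          simp only
          by_cases hjj : j < j'
          · rw [if_pos hjj]
            rw [Set.indicator_of_notMem]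
            · exact ENNReal.ofReal_zero
            · intro hmem
              exact hcond ⟨hjj, hmem.2⟩
          · rw [if_neg hjj]
            exact ENNReal.ofReal_zero
      · intro j' _
        by_cases hcond : j < j' ∧ R j ω = true ∧ R j' ω = true ∧
            (∀ i ∈ Finset.Ioo j j', R i ω = false)
        · rw [if_pos hcond]
          have hj'mem : j' ∈ Finset.Ioc j j' := by simp [hcond.1]
          have : 0 < blockMax (fun i => AT i ω) j j' := by
            rw [blockMax, dif_pos hcond.1]
            exact lt_of_lt_of_le (hω j').1 (Finset.le_sup' (f := fun i => AT i ω) hj'mem)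
          linarith
        · rw [if_neg hcond]
    · intro j _
      refine Finset.sum_nonneg fun j' _ => ?_
      by_cases hcond : j < j' ∧ R j ω = true ∧ R j' ω = true ∧
          (∀ i ∈ Finset.Ioo j j', R i ω = false)
      · rw [if_pos hcond]
        have hj'mem : j' ∈ Finset.Ioc j j' := by simp [hcond.1]
        have : 0 < blockMax (fun i => AT i ω) j j' := by
          rw [blockMax, dif_pos hcond.1]
          exact lt_of_lt_of_le (hω j').1 (Finset.le_sup' (f := fun i => AT i ω) hj'mem)
        linarith
      · rw [if_neg hcond]
  -- value of each term
  set mI : ℕ → ℝ := fun k => ∫ t in Set.Ioc 0 T, (1 - (F t / c)^k) with hmI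
  have hval : ∀ j j' : ℕ, j < j' →
      ∫⁻ ω, g (j, j') ω ∂μ
        = ENNReal.ofReal (c^j' * (p^2*(1-p)^(j'-j-1)) * mI (j'-j)) := by
    intro j j' hjj
    have hCeq : C (j, j') = NT ⁻¹' {n : ℕ | j' < n} ∩ (fun ω i => R i ω) ⁻¹'
        {gg : ℕ → Bool | gg j = true ∧ gg j' = true ∧
          ∀ i ∈ Finset.Ioo j j', gg i = false} := rfl
    have hgeq : g (j, j') = (C (j, j')).indicator
        (fun ω => ENNReal.ofReal (blockMax (fun i => AT i ω) j j')) := by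
      rw [hg]; simp only [if_pos hjj]
    rw [hgeq, lintegral_indicator (hCmeas (j, j')), hCeq]
    have hg0 : 0 ≤ᵐ[μ] fun ω => blockMax (fun i => AT i ω) j j' := by
      filter_upwards [hbd] with ω hω
      have hj'mem : j' ∈ Finset.Ioc j j' := by simp [hjj]
      have : 0 < blockMax (fun i => AT i ω) j j' := by
        rw [blockMax, dif_pos hjj]
        exact lt_of_lt_of_le (hω j').1 (Finset.le_sup' (f := fun i => AT i ω) hj'mem)
      exact le_of_lt this
    rw [lintegral_indicator_mul hN hA hR hjoint
      (show MeasurableSet {n : ℕ | j' < n} from trivial)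
      (measurable_cond (fun i gg => gg i) (fun i => measurable_pi_apply i) j j')
      (measurable_blockMax_s11 (fun i => measurable_pi_apply i) j j') hg0]
    have e1 : μ (NT ⁻¹' {n : ℕ | j' < n}) = ENNReal.ofReal (c ^ j') :=
      meas_N_gt hN hc0 hc1 hgeom j'
    have e2 : μ ((fun ω i => R i ω) ⁻¹'
          {gg : ℕ → Bool | gg j = true ∧ gg j' = true ∧
            ∀ i ∈ Finset.Ioo j j', gg i = false})
          = ENNReal.ofReal (p^2 * (1-p)^(j'-j-1)) :=
      meas_pattern hR hRiid (le_of_lt hp0) hp1 hRber hjj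
    have e3 : ∫⁻ ω, ENNReal.ofReal (blockMax (fun i => AT i ω) j j') ∂μ
        = ENNReal.ofReal (mI (j'-j)) :=
      lintegral_blockMax hT hA hAind hAcdf hFmono hF0 hFT hFcont hbd hjj
    rw [e1, e2, e3]
    have n1 : (0:ℝ) ≤ c ^ j' := pow_nonneg hc0 _
    have n2 : (0:ℝ) ≤ p^2 * (1-p)^(j'-j-1) :=
      mul_nonneg (sq_nonneg _) (pow_nonneg (by linarith) _)
    rw [ENNReal.ofReal_mul (mul_nonneg n1 n2), ENNReal.ofReal_mul n1]
  have hgzero : ∀ j j' : ℕ, ¬ j < j' → ∫⁻ ω, g (j, j') ω ∂μ = 0 := by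
    intro j j' hjj
    have : g (j, j') = 0 := by rw [hg]; simp only [if_neg hjj]
    rw [this]
    exact lintegral_zero
  -- auxiliary bounds on mI
  have hmInn : ∀ k : ℕ, 0 ≤ mI k := by
    intro k
    refine setIntegral_nonneg measurableSet_Ioc fun t ht => ?_
    have h0 : 0 ≤ F t / c := div_nonneg (by rw [← hF0]; exact hFmono (le_of_lt ht.1)) hc0
    have h1 : F t / c ≤ 1 := div_le_one_of_le₀ (hFmono ht.2) hc0
    nlinarith [pow_le_one₀ h0 h1 (n := k)]
  have hmIle : ∀ k : ℕ, mI k ≤ T := by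
    intro k
    have hint : IntegrableOn (fun t => 1 - (F t / c)^k) (Set.Ioc 0 T) volume :=
      (continuous_const.sub ((hFcont.div_const _).pow _)).integrableOn_Ioc
    calc mI k ≤ ∫ _ in Set.Ioc (0:ℝ) T, (1:ℝ) := by
          refine setIntegral_mono_on hint (integrableOn_const
            (ne_of_lt (by rw [Real.volume_Ioc]; exact ENNReal.ofReal_lt_top)))
            measurableSet_Ioc fun t ht => ?_
          have h0 : 0 ≤ F t / c := div_nonneg (by rw [← hF0]; exact hFmono (le_of_lt ht.1)) hc0
          nlinarith [pow_nonneg h0 k]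
      _ = T := by
          rw [setIntegral_const, measureReal_def, Real.volume_Ioc, smul_eq_mul, mul_one,
            ENNReal.toReal_ofReal (by linarith), sub_zero]
  set β : ℕ → ℝ := fun l => c^(1+l) * (p^2*(1-p)^l) * mI (l+1) with hβ
  have hβnn : ∀ l, 0 ≤ β l := fun l =>
    mul_nonneg (mul_nonneg (pow_nonneg hc0 _)
      (mul_nonneg (sq_nonneg _) (pow_nonneg (by linarith) _))) (hmInn _)
  have hcp0 : 0 ≤ c * (1-p) := mul_nonneg hc0 (by linarith)
  have hcp1 : c * (1-p) < 1 := by nlinarith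
  have hβle : ∀ l, β l ≤ (c*p^2*T) * (c*(1-p))^l := by
    intro l
    rw [hβ]
    simp only
    have : c^(1+l) * (p^2*(1-p)^l) * mI (l+1) ≤ c^(1+l) * (p^2*(1-p)^l) * T :=
      mul_le_mul_of_nonneg_left (hmIle _)
        (mul_nonneg (pow_nonneg hc0 _) (mul_nonneg (sq_nonneg _) (pow_nonneg (by linarith) _)))
    refine le_trans this (le_of_eq ?_)
    rw [mul_pow, pow_add]
    ring
  have hβsummable : Summable β := Summable.of_nonneg_of_le hβnn hβle
    ((summable_geometric_of_lt_one hcp0 hcp1).mul_left _)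
  calc ∫⁻ ω, ENNReal.ofReal (survPD (fun i => AT i ω) (fun i => R i ω) (NT ω)) ∂μ
      = ∫⁻ ω, ∑' q : ℕ × ℕ, g q ω ∂μ := by
        refine lintegral_congr_ae ?_
        filter_upwards [hbd] with ω hω
        exact hpt ω hω
    _ = ∑' q : ℕ × ℕ, ∫⁻ ω, g q ω ∂μ := lintegral_tsum fun q => (hgmeas q).aemeasurable
    _ = ∑' j : ℕ, ∑' j' : ℕ, ∫⁻ ω, g (j, j') ω ∂μ := ENNReal.tsum_prod'
    _ = ∑' j : ℕ, ENNReal.ofReal (c^j * ∑' l : ℕ, β l) := by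
        refine tsum_congr fun j => ?_
        have hinj : Function.Injective (fun l : ℕ => j+1+l) := by
          intro a b hab
          have hab' : j+1+a = j+1+b := hab
          omega
        have hsupp : Function.support (fun j' => ∫⁻ ω, g (j, j') ω ∂μ)
            ⊆ Set.range (fun l : ℕ => j+1+l) := by
          intro j' hj'
          by_contra hr
          refine hj' (hgzero j j' fun hlt => hr ⟨j'-j-1, show j+1+(j'-j-1) = j' from by omega⟩)
        rw [← Function.Injective.tsum_eq hinj hsupp]
        have hterm : ∀ l : ℕ, ∫⁻ ω, g (j, j+1+l) ω ∂μ = ENNReal.ofReal (c^j * β l) := by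
          intro l
          rw [hval j (j+1+l) (by omega)]
          congr 1
          rw [hβ]
          simp only
          rw [show j+1+l-j-1 = l from by omega, show j+1+l-j = l+1 from by omega,
            show j+1+l = j+(1+l) from by omega, pow_add]
          ring
        rw [tsum_congr hterm, ← ENNReal.ofReal_tsum_of_nonneg
          (fun l => mul_nonneg (pow_nonneg hc0 _) (hβnn l)) (hβsummable.mul_left _),
          tsum_mul_left]
    _ = ENNReal.ofReal ((1 - F T)⁻¹ *
          ∫ t in Set.Ioc 0 T, p^2 * (F T - F t) / ((1-(1-p)*F T) * (1 - (1-p)*F t))) := by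
        have hS : ∑' l : ℕ, β l
            = ∫ t in Set.Ioc 0 T, p^2 * (F T - F t) / ((1-(1-p)*F T) * (1 - (1-p)*F t)) :=
          series_eq_integral hT hp0 hp1 hFmono hF0 hFT hFT1 hFcont
        rw [← ENNReal.ofReal_tsum_of_nonneg
          (fun j => mul_nonneg (pow_nonneg hc0 _) (tsum_nonneg hβnn : 0 ≤ ∑' l : ℕ, β l))
          ((summable_geometric_of_lt_one hc0 hc1).mul_right _), tsum_mul_right,
          tsum_geometric_of_lt_one hc0 hc1, hS]

end PD

lemma blockMax_pos {A : ℕ → ℝ} (hA : ∀ i, 0 < A i) {j j' : ℕ} (h : j < j') :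
    0 < blockMax A j j' := by
  rw [blockMax, dif_pos h]
  exact lt_of_lt_of_le (hA j') (Finset.le_sup' _ (by simp [h]))

lemma survPD_nonneg {A : ℕ → ℝ} {R : ℕ → Bool} {n : ℕ} (hA : ∀ i, 0 < A i) :
    0 ≤ survPD A R n := by
  refine Finset.sum_nonneg fun j _ => Finset.sum_nonneg fun j' _ => ?_
  by_cases hcond : j < j' ∧ R j = true ∧ R j' = true ∧ ∀ i ∈ Finset.Ioo j j', R i = false
  · rw [if_pos hcond]
    exact le_of_lt (blockMax_pos hA hcond.1)
  · rw [if_neg hcond]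

section Full
variable {Ω : Type*} [MeasurableSpace Ω] {μ : Measure Ω} [IsProbabilityMeasure μ]
  {NT : Ω → ℕ} {AT : ℕ → Ω → ℝ} {R : ℕ → Ω → Bool} {F : ℝ → ℝ} {T p : ℝ}

lemma measurable_existsTerm (hR : ∀ i, Measurable (R i)) (hN : Measurable NT) (T : ℝ) :
    Measurable fun ω => (if ∃ i ∈ Finset.range (NT ω), R i ω = true then T else 0 : ℝ) := by
  have h := measurable_pick (f := fun n ω =>
    (if ∃ i ∈ Finset.range n, R i ω = true then T else 0 : ℝ)) ?_ hN
  · exact h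
  · intro n
    refine Measurable.ite ?_ measurable_const measurable_const
    have : {ω | ∃ i ∈ Finset.range n, R i ω = true}
        = ⋃ i ∈ Finset.range n, {ω | R i ω = true} := by ext ω; simp
    rw [this]
    exact MeasurableSet.biUnion (Finset.range n).countable_toSet
      fun i _ => (hR i) (measurableSet_singleton true)

lemma integral_survPDfull
    (hT : 0 < T) (hN : Measurable NT) (hA : ∀ i, Measurable (AT i))
    (hR : ∀ i, Measurable (R i))
    (hRiid : iIndepFun R μ)
    (hp0 : 0 < p) (hp1 : p ≤ 1)
    (hRber : ∀ i, μ {ω | R i ω = true} = ENNReal.ofReal p)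
    (hFmono : Monotone F) (hF0 : F 0 = 0) (hFT : 0 < F T) (hFT1 : F T < 1)
    (hFcont : Continuous F)
    (hAind : iIndepFun AT μ)
    (hAcdf : ∀ i, ∀ t ∈ Set.Icc 0 T, (μ {ω | AT i ω ≤ t}).toReal = F t / F T)
    (hgeom : ∀ n : ℕ, 1 ≤ n → μ {ω | NT ω = n} = ENNReal.ofReal ((F T) ^ (n-1) * (1-F T)))
    (hjoint : ∀ (s : Set ℕ) (t : Set (ℕ → ℝ)) (u : Set (ℕ → Bool)),
      MeasurableSet s → MeasurableSet t → MeasurableSet u →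
      μ (NT ⁻¹' s ∩ (fun ω i => AT i ω) ⁻¹' t ∩ (fun ω i => R i ω) ⁻¹' u)
        = μ (NT ⁻¹' s) * μ ((fun ω i => AT i ω) ⁻¹' t) * μ ((fun ω i => R i ω) ⁻¹' u)) :
    ∫ ω, survPDfull T (fun i => AT i ω) (fun i => R i ω) (NT ω) ∂μ
      = T * (p / (1-(1-p)*F T)) + (1 - F T)⁻¹ *
          ∫ t in Set.Ioc 0 T,
            p^2 * (F T - F t) / ((1-(1-p)*F T) * (1 - (1-p)*F t)) := by
  have hbd := A_ae_bounds hT hFT hF0 hA hAcdf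
  have hmeas : Measurable fun ω =>
      survPDfull T (fun i => AT i ω) (fun i => R i ω) (NT ω) :=
    measurable_pick (fun n => measurable_survPDfull T hA hR n) hN
  have hnn : 0 ≤ᵐ[μ] fun ω => survPDfull T (fun i => AT i ω) (fun i => R i ω) (NT ω) := by
    filter_upwards [hbd] with ω hω
    have h1 : 0 ≤ survPD (fun i => AT i ω) (fun i => R i ω) (NT ω) :=
      survPD_nonneg fun i => (hω i).1
    have h2 : (0:ℝ) ≤ if ∃ i ∈ Finset.range (NT ω), R i ω = true then T else 0 := by
      split <;> simp [hT.le]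
    simp only [Pi.zero_apply, survPDfull]
    linarith
  rw [integral_eq_lintegral_of_nonneg_ae hnn hmeas.aestronglyMeasurable]
  have hsplit : (fun ω => ENNReal.ofReal
      (survPDfull T (fun i => AT i ω) (fun i => R i ω) (NT ω)))
      =ᵐ[μ] fun ω =>
        ENNReal.ofReal (if ∃ i ∈ Finset.range (NT ω), R i ω = true then T else 0)
        + ENNReal.ofReal (survPD (fun i => AT i ω) (fun i => R i ω) (NT ω)) := by
    filter_upwards [hbd] with ω hω
    rw [survPDfull, ENNReal.ofReal_add]
    · split <;> simp [hT.le]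
    · exact survPD_nonneg fun i => (hω i).1
  rw [lintegral_congr_ae hsplit,
    lintegral_add_left ((measurable_existsTerm hR hN T).ennreal_ofReal),
    lintegral_exists_term hN hR hRiid hp0 hp1 hRber (le_of_lt hFT) hFT1 hgeom hjoint hT.le,
    lintegral_survPD hT hN hA hR hRiid hp0 hp1 hRber hFmono hF0 hFT hFT1 hFcont hAind
      hAcdf hgeom hjoint]
  have hQnn : 0 ≤ (1 - F T)⁻¹ *
      ∫ t in Set.Ioc 0 T, p^2 * (F T - F t) / ((1-(1-p)*F T) * (1 - (1-p)*F t)) := by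
    refine mul_nonneg (inv_nonneg.mpr (by linarith)) ?_
    refine setIntegral_nonneg measurableSet_Ioc fun t ht => ?_
    have hFt0 : 0 ≤ F t := by rw [← hF0]; exact hFmono (le_of_lt ht.1)
    have hFtc : F t ≤ F T := hFmono ht.2
    have hd1 : 0 < 1 - (1-p)*F T := by nlinarith
    have hd2 : 0 < 1 - (1-p)*F t := by nlinarith
    have hnum : 0 ≤ p^2 * (F T - F t) := mul_nonneg (sq_nonneg _) (by linarith)
    exact div_nonneg hnum (le_of_lt (mul_pos hd1 hd2))
  have hTnn : 0 ≤ T * (p / (1-(1-p)*F T)) := by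
    have hd1 : 0 < 1 - (1-p)*F T := by nlinarith
    positivity
  rw [← ENNReal.ofReal_add hTnn hQnn, ENNReal.toReal_ofReal (by linarith)]

end Full

section Denom
variable {Ω : Type*} [MeasurableSpace Ω] {μ : Measure Ω} [IsProbabilityMeasure μ]
  {NT : Ω → ℕ} {AT : ℕ → Ω → ℝ} {R : ℕ → Ω → Bool} {F : ℝ → ℝ} {T p : ℝ}

lemma integral_denom (hT : 0 < T) (hN : Measurable NT) (hA : ∀ i, Measurable (AT i))
    (hR : ∀ i, Measurable (R i))
    (hFmono : Monotone F) (hF0 : F 0 = 0) (hFT : 0 < F T) (hFT1 : F T < 1)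
    (hFcont : Continuous F)
    (hAind : iIndepFun AT μ)
    (hAcdf : ∀ i, ∀ t ∈ Set.Icc 0 T, (μ {ω | AT i ω ≤ t}).toReal = F t / F T)
    (hgeom : ∀ n : ℕ, 1 ≤ n → μ {ω | NT ω = n} = ENNReal.ofReal ((F T) ^ (n-1) * (1-F T)))
    (hjoint : ∀ (s : Set ℕ) (t : Set (ℕ → ℝ)) (u : Set (ℕ → Bool)),
      MeasurableSet s → MeasurableSet t → MeasurableSet u →
      μ (NT ⁻¹' s ∩ (fun ω i => AT i ω) ⁻¹' t ∩ (fun ω i => R i ω) ⁻¹' u)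
        = μ (NT ⁻¹' s) * μ ((fun ω i => AT i ω) ⁻¹' t) * μ ((fun ω i => R i ω) ⁻¹' u)) :
    ∫ ω, (T + ∑ i ∈ Finset.Ico 1 (NT ω), AT i ω) ∂μ
      = (∫ t in Set.Ioc 0 T, (1 - F t)) / (1 - F T) := by
  have hbd := A_ae_bounds hT hFT hF0 hA hAcdf
  set c := F T with hcdef
  have hc0 : 0 ≤ c := le_of_lt hFT
  have hc1 : c < 1 := hFT1
  set m1 : ℝ := ∫ t in Set.Ioc 0 T, (1 - (F t / c)^1) with hm1
  have hm1nn : 0 ≤ m1 := by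
    refine setIntegral_nonneg measurableSet_Ioc fun t ht => ?_
    have h0 : 0 ≤ F t / c := div_nonneg (by rw [← hF0]; exact hFmono (le_of_lt ht.1)) hc0
    have h1 : F t / c ≤ 1 := div_le_one_of_le₀ (hFmono ht.2) hc0
    simp only [pow_one]
    linarith
  have hmeas : Measurable fun ω => T + ∑ i ∈ Finset.Ico 1 (NT ω), AT i ω :=
    measurable_pick (fun n => measurable_const.add
      (Finset.measurable_sum _ fun i _ => hA i)) hN
  have hnn : 0 ≤ᵐ[μ] fun ω => T + ∑ i ∈ Finset.Ico 1 (NT ω), AT i ω := by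
    filter_upwards [hbd] with ω hω
    have : 0 ≤ ∑ i ∈ Finset.Ico 1 (NT ω), AT i ω :=
      Finset.sum_nonneg fun i _ => le_of_lt (hω i).1
    simp only [Pi.zero_apply]
    linarith
  rw [integral_eq_lintegral_of_nonneg_ae hnn hmeas.aestronglyMeasurable]
  set hfun : ℕ → Ω → ℝ≥0∞ := fun i =>
    if 1 ≤ i then ({ω | i < NT ω}).indicator (fun ω => ENNReal.ofReal (AT i ω)) else 0
    with hhfun
  have hsplit : (fun ω => ENNReal.ofReal (T + ∑ i ∈ Finset.Ico 1 (NT ω), AT i ω))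
      =ᵐ[μ] fun ω => ENNReal.ofReal T + ∑' i : ℕ, hfun i ω := by
    filter_upwards [hbd] with ω hω
    rw [ENNReal.ofReal_add hT.le
      (Finset.sum_nonneg fun i _ => le_of_lt (hω i).1)]
    congr 1
    have hzero : ∀ i : ℕ, i ∉ Finset.Ico 1 (NT ω) → hfun i ω = 0 := by
      intro i hi
      simp only [Finset.mem_Ico, not_and, not_lt] at hi
      rw [hhfun]
      dsimp only
      by_cases h1 : 1 ≤ i
      · rw [if_pos h1]
        exact Set.indicator_of_notMem (by simp only [mem_setOf_eq, not_lt]; exact hi h1) _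
      · rw [if_neg h1]; rfl
    rw [tsum_eq_sum hzero, ENNReal.ofReal_sum_of_nonneg
      (fun i _ => le_of_lt (hω i).1)]
    refine Finset.sum_congr rfl fun i hi => ?_
    simp only [Finset.mem_Ico] at hi
    rw [hhfun]
    dsimp only
    rw [if_pos hi.1, Set.indicator_of_mem (by exact hi.2)]
  rw [lintegral_congr_ae hsplit, lintegral_add_left measurable_const, lintegral_const,
    measure_univ, mul_one, lintegral_tsum]
  · have hterm : ∀ i : ℕ, ∫⁻ ω, hfun i ω ∂μ
        = ENNReal.ofReal (if 1 ≤ i then c^i * m1 else 0) := by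
      intro i
      by_cases h1 : 1 ≤ i
      · have hblock : ∀ ω, AT i ω = blockMax (fun k => AT k ω) (i-1) i := by
          intro ω
          rw [blockMax, dif_pos (by omega : i-1 < i)]
          refine le_antisymm
            (Finset.le_sup' (f := fun k => AT k ω)
              (by simp only [Finset.mem_Ioc]; omega))
            (Finset.sup'_le _ _ fun b hb => ?_)
          have hbi : b = i := by simp only [Finset.mem_Ioc] at hb; omega
          rw [hbi]
        have hEA : ∫⁻ ω, ENNReal.ofReal (AT i ω) ∂μ
            = ENNReal.ofReal (∫ t in Set.Ioc 0 T, (1 - (F t / c)^(i-(i-1)))) := by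
          have h' := lintegral_blockMax (μ := μ) hT hA hAind hAcdf hFmono hF0 hFT hFcont
            hbd (by omega : i-1 < i)
          rw [← h']
          refine lintegral_congr fun ω => ?_
          rw [hblock ω]
        have hgood : hfun i = ({ω | i < NT ω}).indicator
            (fun ω => ENNReal.ofReal (AT i ω)) := by
          rw [hhfun]; dsimp only; rw [if_pos h1]
        have hBi : MeasurableSet {ω | i < NT ω} :=
          hN (show MeasurableSet {n : ℕ | i < n} from trivial)
        rw [hgood, lintegral_indicator hBi]
        have hBeq : {ω | i < NT ω} = NT ⁻¹' {n : ℕ | i < n} ∩ (fun ω i => R i ω) ⁻¹' Set.univ := by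
          rw [Set.preimage_univ, Set.inter_univ]; rfl
        rw [hBeq, lintegral_indicator_mul hN hA hR hjoint
          (show MeasurableSet {n : ℕ | i < n} from trivial) MeasurableSet.univ
          (measurable_pi_apply i)
          (by filter_upwards [hbd] with ω hω; exact le_of_lt (hω i).1)]
        have e1 : μ (NT ⁻¹' {n : ℕ | i < n}) = ENNReal.ofReal (c ^ i) :=
          meas_N_gt hN hc0 hc1 hgeom i
        rw [Set.preimage_univ, measure_univ, mul_one, e1, hEA,
          show i - (i-1) = 1 from by omega, ← hm1]
        rw [if_pos h1, ← ENNReal.ofReal_mul (pow_nonneg hc0 _)]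
      · rw [if_neg h1]
        have : hfun i = 0 := by rw [hhfun]; dsimp only; rw [if_neg h1]
        rw [this]
        simp
    rw [tsum_congr hterm]
    have hvnn : ∀ i : ℕ, 0 ≤ (if 1 ≤ i then c^i * m1 else 0) := by
      intro i
      split
      · exact mul_nonneg (pow_nonneg hc0 _) hm1nn
      · exact le_refl 0
    have hvsummable : Summable fun i : ℕ => (if 1 ≤ i then c^i * m1 else 0) := by
      refine Summable.of_nonneg_of_le hvnn (fun i => ?_)
        ((summable_geometric_of_lt_one hc0 hc1).mul_right m1)
      split
      · exact le_refl _
      · exact mul_nonneg (pow_nonneg hc0 _) hm1nn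
    rw [← ENNReal.ofReal_tsum_of_nonneg hvnn hvsummable,
      ← ENNReal.ofReal_add hT.le (tsum_nonneg hvnn),
      ENNReal.toReal_ofReal (by linarith [(tsum_nonneg hvnn : 0 ≤ ∑' i : ℕ, (if 1 ≤ i then c^i * m1 else 0))])]
    have htsumv : (∑' i : ℕ, (if 1 ≤ i then c^i * m1 else 0)) = c * m1 * (1-c)⁻¹ := by
      rw [Summable.tsum_eq_zero_add hvsummable]
      rw [if_neg (by omega)]
      have : ∀ k : ℕ, (if 1 ≤ k + 1 then c^(k+1) * m1 else 0) = (c * m1) * c^k := by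
        intro k
        rw [if_pos (by omega), pow_succ]
        ring
      rw [tsum_congr this, tsum_mul_left, tsum_geometric_of_lt_one hc0 hc1]
      ring
    have hc1ne : (1:ℝ) - c ≠ 0 := by linarith
    have hcm1 : c * m1 = ∫ t in Set.Ioc 0 T, (c - F t) := by
      rw [hm1, ← integral_const_mul]
      refine setIntegral_congr_fun measurableSet_Ioc fun t ht => ?_
      rw [pow_one, mul_sub, mul_one, mul_div_cancel₀ _ (ne_of_gt hFT)]
    have hintc : IntegrableOn (fun t => c - F t) (Set.Ioc 0 T) volume :=
      (continuous_const.sub hFcont).integrableOn_Ioc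
    have hIeq : (∫ t in Set.Ioc 0 T, (1 - F t))
        = (∫ t in Set.Ioc 0 T, (c - F t)) + (1-c) * T := by
      have hcongr : ∀ t ∈ Set.Ioc (0:ℝ) T, (1 - F t) = (c - F t) + (1-c) := by
        intro t _; ring
      rw [setIntegral_congr_fun measurableSet_Ioc hcongr,
        integral_add hintc (integrableOn_const
          (ne_of_lt (by rw [Real.volume_Ioc]; exact ENNReal.ofReal_lt_top))),
        setIntegral_const, measureReal_def, Real.volume_Ioc, smul_eq_mul,
        ENNReal.toReal_ofReal (by linarith), sub_zero]
      ring
    rw [htsumv, hIeq]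
    field_simp
    rw [hcm1]
    ring
  · intro i
    rw [hhfun]
    dsimp only
    split
    · exact (Measurable.indicator (hA i).ennreal_ofReal
        (hN (show MeasurableSet {n : ℕ | i < n} from trivial))).aemeasurable
    · exact measurable_const.aemeasurable

end Denom

lemma F_tendsto_one {F : ℝ → ℝ} (hFmono : Monotone F) (hF0 : F 0 = 0)
    (hFlt : ∀ t : ℝ, 0 ≤ t → F t < 1)
    (hFint : IntegrableOn (fun t => 1 - F t) (Set.Ioi 0)) :
    Tendsto F atTop (nhds 1) := by
  have hub : ∀ t, F t ≤ 1 := by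
    intro t
    rcases le_or_gt 0 t with h | h
    · exact (hFlt t h).le
    · refine le_trans (hFmono h.le) ?_
      rw [hF0]; norm_num
  have hbdd : BddAbove (Set.range F) := ⟨1, by rintro x ⟨t, rfl⟩; exact hub t⟩
  have hlim := tendsto_atTop_ciSup hFmono hbdd
  have hL1 : (⨆ t, F t) ≤ 1 := ciSup_le hub
  have hLF : ∀ t, F t ≤ ⨆ t, F t := fun t => le_ciSup hbdd t
  suffices hL : (⨆ t, F t) = 1 by rwa [hL] at hlim
  by_contra hne
  have hL : (⨆ t, F t) < 1 := lt_of_le_of_ne hL1 hne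
  have hconst : IntegrableOn (fun _ : ℝ => 1 - (⨆ t, F t)) (Set.Ioi 0) volume := by
    refine Integrable.mono' hFint aestronglyMeasurable_const ?_
    refine Filter.Eventually.of_forall fun t => ?_
    rw [Real.norm_eq_abs, abs_of_nonneg (by linarith)]
    have := hLF t
    linarith
  rw [integrableOn_const_iff] at hconst
  rcases hconst with h | h
  · rw [enorm_eq_zero] at h; linarith
  · rw [Real.volume_Ioi] at h
    exact absurd h (by simp)

/-- for a time-homogeneous supercritical coalescent point process,
`lim_{T→∞} E(S_T(p))/E(S_T(1)) = p ∫₀^∞ (1-F)/(1-(1-p)F) dt / ∫₀^∞ (1-F) dt`. -/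
theorem expectation_ratio_PD_large_time
    {Ω : Type*} [MeasurableSpace Ω] (μ : Measure Ω) [IsProbabilityMeasure μ]
    (p : ℝ) (hp : p ∈ Set.Ioc (0 : ℝ) 1)
    (F : ℝ → ℝ) (hFcont : Continuous F) (hFmono : Monotone F)
    (hF0 : F 0 = 0) (hFlt : ∀ t : ℝ, 0 ≤ t → F t < 1)
    (hFint : IntegrableOn (fun t => 1 - F t) (Set.Ioi 0))
    (N : ℝ → Ω → ℕ) (hNmeas : ∀ T, Measurable (N T))
    (A : ℝ → ℕ → Ω → ℝ) (hAmeas : ∀ T i, Measurable (A T i))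
    (R : ℕ → Ω → Bool) (hRmeas : ∀ i, Measurable (R i))
    (hRiid : iIndepFun R μ)
    (hRber : ∀ i, (μ {ω | R i ω = true}).toReal = p)
    (hyp : ∀ T : ℝ, 0 < T → 0 < F T →
      ((∀ n : ℕ, 1 ≤ n →
          (μ {ω | N T ω = n}).toReal = (F T) ^ (n - 1) * (1 - F T)) ∧
       iIndepFun (A T) μ ∧
       (∀ i, ∀ t ∈ Set.Icc 0 T, (μ {ω | A T i ω ≤ t}).toReal = F t / F T) ∧
       (∀ (s : Set ℕ) (t : Set (ℕ → ℝ)) (u : Set (ℕ → Bool)),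
         MeasurableSet s → MeasurableSet t → MeasurableSet u →
         μ (N T ⁻¹' s ∩ (fun ω i => A T i ω) ⁻¹' t ∩ (fun ω i => R i ω) ⁻¹' u)
           = μ (N T ⁻¹' s) * μ ((fun ω i => A T i ω) ⁻¹' t)
             * μ ((fun ω i => R i ω) ⁻¹' u)))) :
    Tendsto (fun T : ℝ =>
        (∫ ω, survPDfull T (fun i => A T i ω) (fun i => R i ω) (N T ω) ∂μ)
          / ∫ ω, (T + ∑ i ∈ Finset.Ico 1 (N T ω), A T i ω) ∂μ)
      atTop
      (nhds ((p * ∫ t in Set.Ioi (0:ℝ), (1 - F t) / (1 - (1 - p) * F t))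
        / ∫ t in Set.Ioi (0:ℝ), (1 - F t))) := by
  obtain ⟨hp0, hp1⟩ := hp
  have hRber' : ∀ i, μ {ω | R i ω = true} = ENNReal.ofReal p :=
    fun i => meas_eq_ofReal (hRber i)
  have hub : ∀ t, F t ≤ 1 := by
    intro t
    rcases le_or_gt 0 t with h | h
    · exact (hFlt t h).le
    · refine le_trans (hFmono h.le) ?_
      rw [hF0]; norm_num
  have hFnn : ∀ t : ℝ, 0 ≤ t → 0 ≤ F t := fun t ht => by
    rw [← hF0]; exact hFmono ht
  have hdenpos : ∀ t, 0 < 1 - (1-p)*F t := by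
    intro t
    rcases le_or_gt (F t) 0 with h | h
    · nlinarith
    · have ht0 : (0:ℝ) ≤ t := by
        by_contra hlt
        push_neg at hlt
        have := hFmono hlt.le
        rw [hF0] at this
        linarith
      have h1 : F t < 1 := hFlt t ht0
      nlinarith
  have hdengep : ∀ t, p ≤ 1 - (1-p)*F t := fun t => by nlinarith [hub t, hdenpos t]
  have hdcont : Continuous fun t => 1 - (1-p)*F t :=
    continuous_const.sub (continuous_const.mul hFcont)
  have hJcont : Continuous fun t => (1 - F t)/(1 - (1-p)*F t) :=
    (continuous_const.sub hFcont).div hdcont fun t => ne_of_gt (hdenpos t)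
  have hKcont : Continuous fun t => 1/(1 - (1-p)*F t) :=
    continuous_const.div hdcont fun t => ne_of_gt (hdenpos t)
  have hJint : IntegrableOn (fun t => (1 - F t)/(1 - (1-p)*F t)) (Set.Ioi 0) volume := by
    refine Integrable.mono' (hFint.const_mul (1/p)) hJcont.aestronglyMeasurable ?_
    refine (ae_restrict_iff' measurableSet_Ioi).mpr (Filter.Eventually.of_forall fun t ht => ?_)
    have h1 : 0 ≤ 1 - F t := by linarith [hub t]
    have h2 := hdengep t
    have h3 := hdenpos t
    rw [Real.norm_eq_abs, abs_of_nonneg (div_nonneg h1 h3.le)]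
    rw [div_le_iff₀ h3] at *
    calc (1 - F t) ≤ (1/p) * (1 - F t) * p := by field_simp; rfl
      _ ≤ 1/p * (1 - F t) * (1 - (1-p)*F t) := by
          refine mul_le_mul_of_nonneg_left h2 ?_
          positivity
  have hFlim : Tendsto F atTop (nhds 1) := F_tendsto_one hFmono hF0 hFlt hFint
  -- limits of truncated integrals
  have hIoc_eq : ∀ {G : ℝ → ℝ}, ∀ᶠ T in (atTop : Filter ℝ),
      ∫ t in Set.Ioc 0 T, G t = ∫ t in (0:ℝ)..T, G t := by
    intro G
    filter_upwards [eventually_ge_atTop (0:ℝ)] with T hT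
    rw [intervalIntegral.integral_of_le hT]
  have hIT : Tendsto (fun T => ∫ t in Set.Ioc 0 T, (1 - F t)) atTop
      (nhds (∫ t in Set.Ioi (0:ℝ), (1 - F t))) :=
    (intervalIntegral_tendsto_integral_Ioi 0 hFint tendsto_id).congr'
      (hIoc_eq.mono fun T h => h.symm)
  have hIT2 : Tendsto (fun T : ℝ => ∫ t in Set.Ioc 0 (T/2), (1 - F t)) atTop
      (nhds (∫ t in Set.Ioi (0:ℝ), (1 - F t))) := by
    have h2 : Tendsto (fun T : ℝ => T/2) atTop atTop :=
      tendsto_id.atTop_div_const (by norm_num)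
    refine (intervalIntegral_tendsto_integral_Ioi 0 hFint h2).congr' ?_
    filter_upwards [h2.eventually (eventually_ge_atTop (0:ℝ))] with T hT
    rw [intervalIntegral.integral_of_le hT]
  have hJT : Tendsto (fun T => ∫ t in Set.Ioc 0 T, (1 - F t)/(1 - (1-p)*F t)) atTop
      (nhds (∫ t in Set.Ioi (0:ℝ), (1 - F t)/(1 - (1-p)*F t))) :=
    (intervalIntegral_tendsto_integral_Ioi 0 hJint tendsto_id).congr'
      (hIoc_eq.mono fun T h => h.symm)
  -- aT * T → 0
  have haT : Tendsto (fun T => (1 - F T) * T) atTop (nhds 0) := by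
    have hbound : ∀ᶠ T in (atTop : Filter ℝ), (1 - F T) * T
        ≤ 2 * ((∫ t in Set.Ioc 0 T, (1 - F t)) - ∫ t in Set.Ioc 0 (T/2), (1 - F t)) := by
      filter_upwards [eventually_gt_atTop (0:ℝ)] with T hT
      have hii : ∀ a b : ℝ, IntervalIntegrable (fun t => 1 - F t) volume a b :=
        fun a b => (continuous_const.sub hFcont).intervalIntegrable a b
      have hadd : (∫ t in (0:ℝ)..(T/2), (1 - F t)) + ∫ t in (T/2)..T, (1 - F t)
          = ∫ t in (0:ℝ)..T, (1 - F t) :=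
        intervalIntegral.integral_add_adjacent_intervals (hii 0 (T/2)) (hii (T/2) T)
      have hlow : (T - T/2) * (1 - F T) ≤ ∫ t in (T/2)..T, (1 - F t) := by
        have := intervalIntegral.integral_mono_on (by linarith : T/2 ≤ T)
          (intervalIntegrable_const (c := 1 - F T)) (hii (T/2) T)
          (fun x hx => by have := hFmono hx.2; linarith)
        rwa [intervalIntegral.integral_const, smul_eq_mul] at this
      rw [intervalIntegral.integral_of_le (by linarith : (0:ℝ) ≤ T),
        intervalIntegral.integral_of_le (by linarith : (0:ℝ) ≤ T/2)] at hadd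
      nlinarith [hlow]
    have hnn : ∀ᶠ T in (atTop : Filter ℝ), 0 ≤ (1 - F T) * T := by
      filter_upwards [eventually_ge_atTop (0:ℝ)] with T hT
      exact mul_nonneg (by linarith [hub T]) hT
    have hlim2 : Tendsto (fun T => 2 * ((∫ t in Set.Ioc 0 T, (1 - F t))
        - ∫ t in Set.Ioc 0 (T/2), (1 - F t))) atTop (nhds 0) := by
      have := (hIT.sub hIT2).const_mul 2
      simpa using this
    exact squeeze_zero' hnn hbound hlim2
  -- aT * KT → 0
  have haK : Tendsto (fun T => (1 - F T) * ∫ t in Set.Ioc 0 T, 1/(1 - (1-p)*F t))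
      atTop (nhds 0) := by
    have hnn : ∀ᶠ T in (atTop : Filter ℝ), 0 ≤ (1 - F T) * ∫ t in Set.Ioc 0 T,
        1/(1 - (1-p)*F t) := by
      filter_upwards [eventually_ge_atTop (0:ℝ)] with T hT
      refine mul_nonneg (by linarith [hub T]) ?_
      exact setIntegral_nonneg measurableSet_Ioc fun t ht => by
        have := hdenpos t
        positivity
    have hbound : ∀ᶠ T in (atTop : Filter ℝ), (1 - F T) * (∫ t in Set.Ioc 0 T,
        1/(1 - (1-p)*F t)) ≤ (1/p) * ((1 - F T) * T) := by
      filter_upwards [eventually_gt_atTop (0:ℝ)] with T hT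
      have hK_le : (∫ t in Set.Ioc 0 T, 1/(1 - (1-p)*F t)) ≤ T * (1/p) := by
        calc (∫ t in Set.Ioc 0 T, 1/(1 - (1-p)*F t))
            ≤ ∫ _ in Set.Ioc (0:ℝ) T, (1/p) := by
              refine setIntegral_mono_on hKcont.integrableOn_Ioc
                (integrableOn_const (ne_of_lt (by
                  rw [Real.volume_Ioc]; exact ENNReal.ofReal_lt_top)))
                measurableSet_Ioc fun t ht => ?_
              rw [div_le_div_iff₀ (hdenpos t) hp0]
              have := hdengep t
              nlinarith
          _ = T * (1/p) := by
              rw [setIntegral_const, measureReal_def, Real.volume_Ioc, smul_eq_mul,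
                ENNReal.toReal_ofReal (by linarith), sub_zero]
      have ha0 : 0 ≤ 1 - F T := by linarith [hub T]
      calc (1 - F T) * (∫ t in Set.Ioc 0 T, 1/(1 - (1-p)*F t))
          ≤ (1 - F T) * (T * (1/p)) := mul_le_mul_of_nonneg_left hK_le ha0
        _ = (1/p) * ((1 - F T) * T) := by ring
    have hlim2 : Tendsto (fun T => (1/p) * ((1 - F T) * T)) atTop (nhds 0) := by
      have := haT.const_mul (1/p)
      simpa using this
    exact squeeze_zero' hnn hbound hlim2
  -- D_T → p
  have hDT : Tendsto (fun T => 1 - (1-p)*F T) atTop (nhds p) := by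
    have := ((hFlim.const_mul (1-p)).const_sub 1)
    have heq : (1:ℝ) - (1-p)*1 = p := by ring
    rwa [heq] at this
  -- positivity of limit denominator
  have hIconst : ∀ a b : ℝ, IntegrableOn (fun _ : ℝ => b) (Set.Ioc 0 a) volume :=
    fun a b => integrableOn_const (ne_of_lt (by rw [Real.volume_Ioc]; exact ENNReal.ofReal_lt_top))
  have hIpos : 0 < ∫ t in Set.Ioi (0:ℝ), (1 - F t) := by
    have h1 : (1 - F 1) ≤ ∫ t in Set.Ioc (0:ℝ) 1, (1 - F t) := by
      have hmono := setIntegral_mono_on (f := fun _ : ℝ => 1 - F 1)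
        (g := fun t => 1 - F t) (hIconst 1 (1 - F 1))
        ((continuous_const.sub hFcont).integrableOn_Ioc) measurableSet_Ioc
        (fun t (ht : t ∈ Set.Ioc (0:ℝ) 1) => by
          show (1 - F 1 : ℝ) ≤ 1 - F t
          have := hFmono ht.2; linarith)
      rw [setIntegral_const, measureReal_def, Real.volume_Ioc, smul_eq_mul, sub_zero,
        ENNReal.toReal_ofReal zero_le_one, one_mul] at hmono
      exact hmono
    have h2 : (∫ t in Set.Ioc (0:ℝ) 1, (1 - F t)) ≤ ∫ t in Set.Ioi (0:ℝ), (1 - F t) := by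
      refine setIntegral_mono_set hFint ?_ (HasSubset.Subset.eventuallyLE fun t ht => ht.1)
      refine (ae_restrict_iff' measurableSet_Ioi).mpr (Filter.Eventually.of_forall fun t ht => ?_)
      have := hub t
      simp only [Pi.zero_apply]
      linarith
    have := hFlt 1 zero_le_one
    linarith
  have hIne : (∫ t in Set.Ioi (0:ℝ), (1 - F t)) ≠ 0 := ne_of_gt hIpos
  -- numerator limit
  have h1 := (((haT.mul_const p).add ((hJT.sub haK).const_mul (p^2))).div hDT
    (ne_of_gt hp0)).div hIT hIne
  have hval : (0 * p + p^2 * ((∫ t in Set.Ioi (0:ℝ), (1 - F t)/(1 - (1-p)*F t)) - 0)) / p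
      / (∫ t in Set.Ioi (0:ℝ), (1 - F t))
      = (p * ∫ t in Set.Ioi (0:ℝ), (1 - F t) / (1 - (1 - p) * F t))
        / ∫ t in Set.Ioi (0:ℝ), (1 - F t) := by
    rw [zero_mul, zero_add, sub_zero]
    congr 1
    rw [sq, mul_assoc, mul_div_cancel_left₀ _ (ne_of_gt hp0)]
  rw [hval] at h1
  refine h1.congr' ?_
  -- eventual equality of the two expressions
  filter_upwards [hFlim.eventually (eventually_gt_nhds (by norm_num : (1:ℝ)/2 < 1)),
    eventually_ge_atTop (1:ℝ)] with T hFhalf hT1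
  have hT : (0:ℝ) < T := by linarith
  have hFT : 0 < F T := by linarith
  have hFT1 : F T < 1 := hFlt T hT.le
  obtain ⟨hgeomT, hAindT, hAcdfT, hjointT⟩ := hyp T hT hFT
  have hgeom' : ∀ n : ℕ, 1 ≤ n → μ {ω | N T ω = n}
      = ENNReal.ofReal ((F T) ^ (n-1) * (1 - F T)) :=
    fun n hn => meas_eq_ofReal (hgeomT n hn)
  have ha0 : 0 < 1 - F T := by linarith
  have hD0 : 0 < 1 - (1-p)*F T := hdenpos T
  have hITpos : 0 < ∫ t in Set.Ioc 0 T, (1 - F t) := by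
    have hmono := setIntegral_mono_on (f := fun _ : ℝ => 1 - F T)
      (g := fun t => 1 - F t) (hIconst T (1 - F T))
      ((continuous_const.sub hFcont).integrableOn_Ioc) measurableSet_Ioc
      (fun t (ht : t ∈ Set.Ioc (0:ℝ) T) => by
        show (1 - F T : ℝ) ≤ 1 - F t
        have := hFmono ht.2; linarith)
    rw [setIntegral_const, measureReal_def, Real.volume_Ioc, smul_eq_mul, sub_zero,
      ENNReal.toReal_ofReal hT.le] at hmono
    nlinarith
  have hQ : (∫ t in Set.Ioc 0 T,
        p^2 * (F T - F t) / ((1-(1-p)*F T) * (1 - (1-p)*F t)))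
      = (p^2/(1-(1-p)*F T)) * (∫ t in Set.Ioc 0 T, (1 - F t)/(1 - (1-p)*F t))
        - ((p^2/(1-(1-p)*F T)) * (1 - F T)) * ∫ t in Set.Ioc 0 T, 1/(1 - (1-p)*F t) := by
    rw [← integral_const_mul, ← integral_const_mul, ← integral_sub
      (by exact (continuous_const.mul hJcont).integrableOn_Ioc) (by exact (continuous_const.mul hKcont).integrableOn_Ioc)]
    refine setIntegral_congr_fun measurableSet_Ioc fun t ht => ?_
    have hd := hdenpos t
    field_simp
    ring
  rw [integral_denom (μ := μ) hT (hNmeas T) (hAmeas T) hRmeas hFmono hF0 hFT hFT1 hFcont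
    hAindT hAcdfT hgeom' hjointT,
    integral_survPDfull (μ := μ) hT (hNmeas T) (hAmeas T) hRmeas hRiid hp0 hp1 hRber'
    hFmono hF0 hFT hFT1 hFcont hAindT hAcdfT hgeom' hjointT, hQ]
  have e1 : (1 - F T) ≠ 0 := ne_of_gt ha0
  have e2 : (1 - (1-p)*F T) ≠ 0 := ne_of_gt hD0
  have e3 : (∫ t in Set.Ioc 0 T, (1 - F t)) ≠ 0 := ne_of_gt hITpos
  simp only [Pi.div_apply]
  field_simp
  ring
end
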